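/- arXiv:1803.06806 — 5 statements merged into one kernel-verified Lean document; each statement's English description precedes it below -/
import Mathlib

section
/- Let a ≥ 0 and l ≥ b ≥ 1 be integers, and let (d_1,…,d_l) be an (a,b)-sequence. Then there does not exist an integer m with 0 < m < l such that (∑_{i=1}^{m} (−1)^i d_i) · (∑_{i=1}^{m+1} (−1)^i d_i) > 0. -/
/-- The `i`-th entry (1-indexed) of a list of naturals, defaulting to `0`. -/
def entry (d : List ℕ) (i : ℕ) : ℕ := d.getD (i - 1) 0

/-- The alternating partial sum `∑_{i=1}^{m} (−1)^i d_i` of a list `d`. -/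
def altSum (d : List ℕ) (m : ℕ) : ℤ :=
  ∑ i ∈ Finset.Icc 1 m, (-1 : ℤ) ^ i * (entry d i : ℤ)

/-- `d = (d_1, …, d_l)` is an `(a,b)`-sequence: it is a list of positive integers with
`l ≥ b ≥ 1`, `d_i = a + i` for `1 ≤ i ≤ b`, `d_b ≥ d_{b+1} ≥ ⋯ ≥ d_l ≥ 1`, and
`∑_{i=1}^{l} (−1)^i d_i = 0`. -/
def IsABSeq (a b : ℕ) (d : List ℕ) : Prop :=
  1 ≤ b ∧ b ≤ d.length ∧
  (∀ i, 1 ≤ i → i ≤ d.length → 1 ≤ entry d i) ∧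
  (∀ i, 1 ≤ i → i ≤ b → entry d i = a + i) ∧
  (∀ i j, b ≤ i → i ≤ j → j ≤ d.length → entry d j ≤ entry d i) ∧
  altSum d d.length = 0

/-- An (ordinary) partition, recorded as a weakly decreasing list of positive parts. -/
def IsPartitionList (L : List ℕ) : Prop :=
  L.Pairwise (· ≥ ·) ∧ ∀ x ∈ L, 0 < x

/-- A strict partition: a strictly decreasing list of positive parts. -/
def IsStrictPartition (L : List ℕ) : Prop :=
  L.Pairwise (· > ·) ∧ ∀ x ∈ L, 0 < x

/-- The column sequence of the shifted Young diagram of a strict partition `L`: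
`colSeq L j = #{ i : 1 ≤ i ≤ m, i ≤ j ≤ λ_i + i − 1 }`. -/
def colSeq (L : List ℕ) (j : ℕ) : ℕ :=
  ((Finset.Icc 1 L.length).filter (fun i => i ≤ j ∧ j ≤ entry L i + i - 1)).card

/-- The BG-rank of a partition: the number of odd-indexed odd parts minus
the number of even-indexed odd parts (indices starting at 1). -/
def bgRank (L : List ℕ) : ℤ :=
  (((Finset.Icc 1 L.length).filter (fun i => Odd i ∧ Odd (entry L i))).card : ℤ) -
  (((Finset.Icc 1 L.length).filter (fun i => Even i ∧ Odd (entry L i))).card : ℤ)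

/-- `qj j n`: the number of strict partitions of `n` whose BG-rank equals `j`. -/
noncomputable def qj (j : ℤ) (n : ℕ) : ℕ :=
  Set.ncard {L : List ℕ | IsStrictPartition L ∧ L.sum = n ∧ bgRank L = j}


lemma altSum_succ (d : List ℕ) (m : ℕ) :
    altSum d (m + 1) = altSum d m + (-1) ^ (m + 1) * (entry d (m + 1) : ℤ) := by
  unfold altSum
  rw [Finset.sum_Icc_succ_top (by omega : 1 ≤ m + 1)]

lemma upLemma (a b : ℕ) (d : List ℕ) (h : IsABSeq a b d) :
    ∀ m ≤ b, (Even m → altSum d m * 2 = m) ∧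
      (Odd m → altSum d m * 2 = -(2 * a + m + 1)) := by
  intro m
  induction m with
  | zero =>
    intro _
    refine ⟨fun _ => by simp [altSum], fun ho => absurd ho (by simp)⟩
  | succ n ih =>
    intro hm
    have hd : entry d (n + 1) = a + (n + 1) := h.2.2.2.1 (n + 1) (by omega) (by omega)
    have hs := altSum_succ d n
    rw [hd] at hs
    have hih := ih (by omega)
    rcases Nat.even_or_odd n with he | ho
    · have h1 := hih.1 he
      have hp : (-1 : ℤ) ^ (n + 1) = -1 := Odd.neg_one_pow (Even.add_one he)
      rw [hp] at hs
      refine ⟨fun h2 => absurd he (by simpa using (Nat.even_add_one.mp h2)), fun _ => ?_⟩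
      push_cast at hs h1 ⊢
      linarith
    · have h1 := hih.2 ho
      have hp : (-1 : ℤ) ^ (n + 1) = 1 := Even.neg_one_pow (Odd.add_one ho)
      rw [hp] at hs
      refine ⟨fun _ => ?_, fun h2 => absurd ho (by simpa using (Nat.odd_add_one.mp h2))⟩
      push_cast at hs h1 ⊢
      linarith

lemma downLemma (a b : ℕ) (d : List ℕ) (h : IsABSeq a b d) :
    ∀ k, ∀ m, d.length - m = k → b ≤ m → m ≤ d.length →
      (Even m → 0 ≤ altSum d m) ∧ (Odd m → altSum d m ≤ 0) := by
  intro k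
  induction k using Nat.strong_induction_on with
  | _ k ih =>
    intro m hk hbm hml
    by_cases h1 : m = d.length
    · subst h1
      have h0 := h.2.2.2.2.2
      exact ⟨fun _ => by rw [h0], fun _ => by rw [h0]⟩
    · by_cases h2 : m + 1 = d.length
      · have hs := altSum_succ d m
        have h0 := h.2.2.2.2.2
        rw [← h2] at h0
        rw [h0] at hs
        rcases Nat.even_or_odd m with he | ho
        · have hp : (-1 : ℤ) ^ (m + 1) = -1 := Odd.neg_one_pow (Even.add_one he)
          rw [hp] at hs
          refine ⟨fun _ => ?_, fun h3 => absurd h3 (Nat.not_odd_iff_even.mpr he)⟩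
          have : (0 : ℤ) ≤ (entry d (m + 1) : ℤ) := Int.natCast_nonneg _
          linarith
        · have hp : (-1 : ℤ) ^ (m + 1) = 1 := Even.neg_one_pow (Odd.add_one ho)
          rw [hp] at hs
          refine ⟨fun h3 => absurd h3 (Nat.not_even_iff_odd.mpr ho), fun _ => ?_⟩
          have : (0 : ℤ) ≤ (entry d (m + 1) : ℤ) := Int.natCast_nonneg _
          linarith
      · have hm2 : m + 2 ≤ d.length := by omega
        have hIH := ih (k - 2) (by omega) (m + 2) (by omega) (by omega) (by omega)
        have hs1 := altSum_succ d m
        have hs2 := altSum_succ d (m + 1)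
        have hdec : entry d (m + 2) ≤ entry d (m + 1) :=
          h.2.2.2.2.1 (m + 1) (m + 2) (by omega) (by omega) (by omega)
        have hdec' : ((entry d (m + 2) : ℤ)) ≤ (entry d (m + 1) : ℤ) := by exact_mod_cast hdec
        rcases Nat.even_or_odd m with he | ho
        · have hE2 : Even (m + 2) := by
            rcases he with ⟨r, hr⟩; exact ⟨r + 1, by omega⟩
          have hv := hIH.1 hE2
          have hp1 : (-1 : ℤ) ^ (m + 1) = -1 := Odd.neg_one_pow (Even.add_one he)
          have hp2 : (-1 : ℤ) ^ (m + 1 + 1) = 1 := Even.neg_one_pow (Odd.add_one (Even.add_one he))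
          rw [hp1] at hs1; rw [hp2] at hs2
          have hmm : m + 1 + 1 = m + 2 := rfl
          rw [hmm] at hs2
          refine ⟨fun _ => ?_, fun h3 => absurd h3 (Nat.not_odd_iff_even.mpr he)⟩
          linarith
        · have hO2 : Odd (m + 2) := by
            rcases ho with ⟨r, hr⟩; exact ⟨r + 1, by omega⟩
          have hv := hIH.2 hO2
          have hp1 : (-1 : ℤ) ^ (m + 1) = 1 := Even.neg_one_pow (Odd.add_one ho)
          have hp2 : (-1 : ℤ) ^ (m + 1 + 1) = -1 := Odd.neg_one_pow (Even.add_one (Odd.add_one ho))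
          rw [hp1] at hs1; rw [hp2] at hs2
          have hmm : m + 1 + 1 = m + 2 := rfl
          rw [hmm] at hs2
          refine ⟨fun h3 => absurd h3 (Nat.not_even_iff_odd.mpr ho), fun _ => ?_⟩
          linarith

lemma signLemma (a b : ℕ) (d : List ℕ) (h : IsABSeq a b d) :
    ∀ m ≤ d.length, (Even m → 0 ≤ altSum d m) ∧ (Odd m → altSum d m ≤ 0) := by
  intro m hm
  by_cases hb : m ≤ b
  · have hup := upLemma a b d h m hb
    constructor
    · intro he
      have := hup.1 he
      nlinarith [this, Int.natCast_nonneg m]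
    · intro ho
      have := hup.2 ho
      nlinarith [this, Int.natCast_nonneg (2 * a + m)]
  · exact downLemma a b d h (d.length - m) m rfl (by omega) hm

/-- Lemma 2.2(1): For an `(a,b)`-sequence `(d_1,…,d_l)`, there is no `m` with `0 < m < l`
such that `(∑_{i=1}^{m} (−1)^i d_i) · (∑_{i=1}^{m+1} (−1)^i d_i) > 0`. -/
theorem no_same_sign_partial_sums (a b : ℕ) (d : List ℕ) (h : IsABSeq a b d) :
    ¬ ∃ m : ℕ, 0 < m ∧ m < d.length ∧ altSum d m * altSum d (m + 1) > 0 := by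
  rintro ⟨m, hm0, hml, hprod⟩
  have h1 := signLemma a b d h m (by omega)
  have h2 := signLemma a b d h (m + 1) (by omega)
  rcases Nat.even_or_odd m with he | ho
  · have s1 := h1.1 he
    have s2 := h2.2 (Even.add_one he)
    nlinarith
  · have s1 := h1.2 ho
    have s2 := h2.1 (Odd.add_one ho)
    nlinarith
end

section
/- Let a ≥ 0 and l ≥ b ≥ 1 be integers, and let (d_1,…,d_l) be an (a,b)-sequence. If for some integer n with b − 1 ≤ n ≤ l we have ∑_{i=1}^{n} (−1)^i d_i = 0, then n ≡ l (mod 2), and the remaining entries pair up as d_{n+1} = d_{n+2} ≥ d_{n+3} = d_{n+4} ≥ ⋯ ≥ d_{l−1} = d_l (i.e., d_{n+2j−1} = d_{n+2j} for all 1 ≤ j ≤ (l−n)/2, and d_{n+2j} ≥ d_{n+2j+1} for all 1 ≤ j < (l−n)/2). -/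
lemma pairSum_aux (e : ℕ → ℤ) (k : ℕ) :
    ∑ j ∈ Finset.Icc 1 (2 * k), (-1 : ℤ) ^ j * e j =
      ∑ t ∈ Finset.Icc 1 k, (e (2 * t) - e (2 * t - 1)) := by
  induction k with
  | zero => simp
  | succ k ih =>
    have h1 : 2 * (k + 1) = (2 * k + 1) + 1 := by ring
    rw [h1, Finset.sum_Icc_succ_top (by omega), Finset.sum_Icc_succ_top (by omega), ih,
      Finset.sum_Icc_succ_top (by omega : 1 ≤ k + 1)]
    have h2 : (-1 : ℤ) ^ (2 * k + 1) = -1 := Odd.neg_one_pow ⟨k, by ring⟩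
    have h3 : (-1 : ℤ) ^ (2 * k + 1 + 1) = 1 := Even.neg_one_pow ⟨k + 1, by ring⟩
    rw [h2, h3, show 2 * (k + 1) - 1 = 2 * k + 1 by omega,
      show 2 * (k + 1) = 2 * k + 1 + 1 by ring]; ring

/-- Lemma 2.2(2): If an initial alternating sum of an `(a,b)`-sequence vanishes at some
`n ≥ b − 1`, then `n ≡ l (mod 2)` and the remaining entries pair up as
`d_{n+1} = d_{n+2} ≥ d_{n+3} = d_{n+4} ≥ ⋯ ≥ d_{l−1} = d_l`. -/
theorem pairing_after_vanishing_altSum (a b : ℕ) (d : List ℕ) (h : IsABSeq a b d)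
    (n : ℕ) (hn1 : b - 1 ≤ n) (hn2 : n ≤ d.length) (hzero : altSum d n = 0) :
    n ≡ d.length [MOD 2] ∧
    (∀ j, 1 ≤ j → j ≤ (d.length - n) / 2 →
      entry d (n + 2 * j - 1) = entry d (n + 2 * j)) ∧
    (∀ j, 1 ≤ j → j < (d.length - n) / 2 →
      entry d (n + 2 * j + 1) ≤ entry d (n + 2 * j)) := by
  obtain ⟨hb1, hbl, hpos, hinit, hmono, htot⟩ := h
  set l := d.length with hl
  set m := l - n with hm
  have hlm : l = n + m := by omega
  have hsplit : altSum d n + ∑ i ∈ Finset.Ioc n l, (-1 : ℤ) ^ i * (entry d i : ℤ)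
      = altSum d l := by
    unfold altSum
    rw [show Finset.Icc 1 n = Finset.Ioc 0 n from by rw [← Finset.Icc_add_one_left_eq_Ioc]; rfl,
      show Finset.Icc 1 l = Finset.Ioc 0 l from by rw [← Finset.Icc_add_one_left_eq_Ioc]; rfl]
    exact Finset.sum_Ioc_consecutive _ (Nat.zero_le n) hn2
  have htail : ∑ i ∈ Finset.Ioc n l, (-1 : ℤ) ^ i * (entry d i : ℤ) = 0 := by
    rw [hzero, htot] at hsplit; linarith
  have hmap : Finset.Ioc n l = Finset.map (addLeftEmbedding n) (Finset.Ioc 0 m) := by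
    rw [Finset.map_add_left_Ioc, Nat.add_zero, ← hlm]
  have hB : ∑ j ∈ Finset.Icc 1 m, (-1 : ℤ) ^ j * (entry d (n + j) : ℤ) = 0 := by
    rw [hmap, Finset.sum_map] at htail
    have h2 : (-1 : ℤ) ^ n * ∑ j ∈ Finset.Ioc 0 m, (-1 : ℤ) ^ j * (entry d (n + j) : ℤ)
        = 0 := by
      rw [Finset.mul_sum, ← htail]
      refine Finset.sum_congr rfl fun j _ => ?_
      simp only [addLeftEmbedding_apply, pow_add, mul_assoc]
    have h3 := (mul_eq_zero.mp h2).resolve_left (pow_ne_zero _ (by norm_num))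
    rwa [show Finset.Icc 1 m = Finset.Ioc 0 m from by rw [← Finset.Icc_add_one_left_eq_Ioc]; rfl]
  have hepos : ∀ j, 1 ≤ j → j ≤ m → 1 ≤ (entry d (n + j) : ℤ) := fun j h1 h2 => by
    exact_mod_cast hpos (n + j) (by omega) (by omega)
  have hemono : ∀ i j, 1 ≤ i → i ≤ j → j ≤ m →
      (entry d (n + j) : ℤ) ≤ (entry d (n + i) : ℤ) := fun i j hi hij hj => by
    exact_mod_cast hmono (n + i) (n + j) (by omega) (by omega) (by omega)
  have hpairnonpos : ∀ k, 2 * k ≤ m →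
      ∑ t ∈ Finset.Icc 1 k, ((entry d (n + 2 * t) : ℤ) - (entry d (n + (2 * t - 1)) : ℤ))
        ≤ 0 := by
    intro k hkm
    refine Finset.sum_nonpos fun t ht => sub_nonpos.mpr ?_
    simp only [Finset.mem_Icc] at ht
    exact hemono (2 * t - 1) (2 * t) (by omega) (by omega) (by omega)
  have hmeven : Even m := by
    by_contra hodd
    obtain ⟨k, hk⟩ := Nat.not_even_iff_odd.mp hodd
    have hstep : ∑ j ∈ Finset.Icc 1 m, (-1 : ℤ) ^ j * (entry d (n + j) : ℤ)
        = (∑ j ∈ Finset.Icc 1 (2 * k), (-1 : ℤ) ^ j * (entry d (n + j) : ℤ))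
          + (-1 : ℤ) ^ m * (entry d (n + m) : ℤ) := by
      rw [hk, Finset.sum_Icc_succ_top (by omega)]
    have hm1 : (-1 : ℤ) ^ m = -1 := Odd.neg_one_pow ⟨k, by omega⟩
    rw [hstep, pairSum_aux (fun j => (entry d (n + j) : ℤ)) k, hm1] at hB
    have h1 := hpairnonpos k (by omega)
    have h2 := hepos m (by omega) le_rfl
    linarith
  obtain ⟨k, hk⟩ := hmeven
  have hk2 : m = 2 * k := by omega
  have hBk : ∑ t ∈ Finset.Icc 1 k,
      ((entry d (n + 2 * t) : ℤ) - (entry d (n + (2 * t - 1)) : ℤ)) = 0 := by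
    rw [← pairSum_aux (fun j => (entry d (n + j) : ℤ)) k, ← hk2]; exact hB
  have hall := (Finset.sum_eq_zero_iff_of_nonpos fun t ht => by
    simp only [Finset.mem_Icc] at ht
    exact sub_nonpos.mpr (hemono (2 * t - 1) (2 * t) (by omega) (by omega) (by omega))).mp hBk
  refine ⟨show n % 2 = l % 2 by omega, fun j hj1 hj2 => ?_, fun j hj1 hj2 => ?_⟩
  · have hjk : j ≤ k := by omega
    have := hall j (Finset.mem_Icc.mpr ⟨hj1, hjk⟩)
    have heq : (entry d (n + 2 * j) : ℤ) = (entry d (n + (2 * j - 1)) : ℤ) := by linarith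
    have heq2 : entry d (n + 2 * j) = entry d (n + (2 * j - 1)) := by exact_mod_cast heq
    rw [show n + 2 * j - 1 = n + (2 * j - 1) from by omega, heq2]
  · exact hmono (n + 2 * j) (n + 2 * j + 1) (by omega) (by omega) (by omega)
end

section
/- For every fixed integer a ≥ 0, every integer b ≥ 1, and every integer n ≥ 0, the number of (a,b)-sequences Δ with |Δ| = 2n equals the number of partitions of n belonging to P_{a,b}. -/
namespace ABP

/-- number of elements of `S` that are `≥ k` -/
def cnt (S : Multiset ℕ) (k : ℕ) : ℕ := (S.filter (k ≤ ·)).card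

/-- conjugate partition (as multiset of positive column lengths) -/
def conj (S : Multiset ℕ) : Multiset ℕ :=
  ((Finset.Icc 1 S.sum).val.map (cnt S)).filter (0 < ·)

lemma cnt_anti {S : Multiset ℕ} {j k : ℕ} (h : j ≤ k) : cnt S k ≤ cnt S j :=
  Multiset.card_le_card (Multiset.monotone_filter_right _ fun _ hb => le_trans h hb)

lemma cnt_le_card (S : Multiset ℕ) (k : ℕ) : cnt S k ≤ Multiset.card S :=
  Multiset.card_le_card (Multiset.filter_le _ _)

lemma cnt_eq_zero {S : Multiset ℕ} {j : ℕ} (h : ∀ s ∈ S, s < j) : cnt S j = 0 := by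
  unfold cnt
  rw [Multiset.card_eq_zero, Multiset.filter_eq_nil]
  intro a ha
  exact not_le.2 (h a ha)

lemma cnt_pos_iff {S : Multiset ℕ} {j : ℕ} : 0 < cnt S j ↔ ∃ s ∈ S, j ≤ s := by
  unfold cnt
  rw [Multiset.card_pos_iff_exists_mem]
  constructor
  · rintro ⟨a, ha⟩; rw [Multiset.mem_filter] at ha; exact ⟨a, ha.1, ha.2⟩
  · rintro ⟨s, hs, hjs⟩; exact ⟨s, Multiset.mem_filter.2 ⟨hs, hjs⟩⟩

lemma cnt_cons (a : ℕ) (S : Multiset ℕ) (k : ℕ) :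
    cnt (a ::ₘ S) k = (if k ≤ a then 1 else 0) + cnt S k := by
  unfold cnt
  rw [Multiset.filter_cons, Multiset.card_add]
  congr 1
  split <;> simp

lemma mem_le_sum {S : Multiset ℕ} {s : ℕ} (h : s ∈ S) : s ≤ S.sum :=
  Multiset.single_le_sum (fun x _ => Nat.zero_le x) s h

lemma card_le_sum_of_pos {S : Multiset ℕ} (h : ∀ s ∈ S, 0 < s) : Multiset.card S ≤ S.sum := by
  induction S using Multiset.induction with
  | empty => simp
  | cons a S ih =>
    simp only [Multiset.card_cons, Multiset.sum_cons]
    have h1 : 0 < a := h a (Multiset.mem_cons_self a S)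
    have h2 := ih fun s hs => h s (Multiset.mem_cons_of_mem hs)
    omega

lemma conj_eq_of_bound {S : Multiset ℕ} {B : ℕ} (hB : ∀ s ∈ S, s ≤ B) :
    conj S = ((Finset.Icc 1 B).val.map (cnt S)).filter (0 < ·) := by
  suffices H : ∀ B1 B2 : ℕ, B1 ≤ B2 → (∀ s ∈ S, s ≤ B1) →
      ((Finset.Icc 1 B2).val.map (cnt S)).filter (0 < ·)
        = ((Finset.Icc 1 B1).val.map (cnt S)).filter (0 < ·) by
    unfold conj
    rcases le_total B S.sum with h | h
    · exact H B S.sum h hB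
    · exact (H S.sum B h fun s hs => mem_le_sum hs).symm
  intro B1 B2 hle hbd
  induction B2, hle using Nat.le_induction with
  | base => rfl
  | succ B2 hB2 ih =>
    rw [← ih]
    have hni : B2 + 1 ∉ Finset.Icc 1 B2 := by simp
    have : Finset.Icc 1 (B2 + 1) = insert (B2+1) (Finset.Icc 1 B2) := by
      ext x; simp [Finset.mem_Icc]; omega
    rw [this, Finset.insert_val_of_notMem hni, Multiset.map_cons, Multiset.filter_cons]
    have : cnt S (B2 + 1) = 0 := cnt_eq_zero fun s hs => by
      have := hbd s hs; omega
    rw [this]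
    simp

lemma conj_pos {S : Multiset ℕ} : ∀ y ∈ conj S, 0 < y := by
  intro y hy
  exact (Multiset.mem_filter.1 hy).2

lemma sum_filter_pos (X : Multiset ℕ) : (X.filter (0 < ·)).sum = X.sum := by
  conv_rhs => rw [← Multiset.filter_add_not (0 < ·) X]
  rw [Multiset.sum_add]
  have : (X.filter (fun a => ¬ 0 < a)).sum = 0 := by
    apply Multiset.sum_eq_zero
    intro x hx
    have := (Multiset.mem_filter.1 hx).2
    omega
  omega

lemma sum_cnt {S : Multiset ℕ} {B : ℕ} (hB : ∀ s ∈ S, s ≤ B) :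
    ∑ j ∈ Finset.Icc 1 B, cnt S j = S.sum := by
  induction S using Multiset.induction with
  | empty => simp [cnt]
  | cons a S ih =>
    have ha : a ≤ B := hB a (Multiset.mem_cons_self a S)
    have hS : ∀ s ∈ S, s ≤ B := fun s hs => hB s (Multiset.mem_cons_of_mem hs)
    simp only [cnt_cons, Finset.sum_add_distrib, ih hS, Multiset.sum_cons]
    congr 1
    rw [← Finset.card_filter]
    have : (Finset.Icc 1 B).filter (fun j => j ≤ a) = Finset.Icc 1 a := by
      ext x; simp [Finset.mem_Icc, Finset.mem_filter]; omega
    rw [this, Nat.card_Icc]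
    omega

lemma sum_conj (S : Multiset ℕ) : (conj S).sum = S.sum := by
  unfold conj
  rw [sum_filter_pos]
  have : ((Finset.Icc 1 S.sum).val.map (cnt S)).sum = ∑ j ∈ Finset.Icc 1 S.sum, cnt S j := rfl
  rw [this, sum_cnt fun s hs => mem_le_sum hs]

lemma card_filter_Icc_ge {B k : ℕ} (p : ℕ → Prop) [DecidablePred p] (hk : 1 ≤ k)
    (hdown : ∀ i j, 1 ≤ i → i ≤ j → p j → p i) (hbd : ∀ i, 1 ≤ i → p i → i ≤ B) :
    k ≤ ((Finset.Icc 1 B).filter p).card ↔ p k := by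
  constructor
  · intro h
    by_contra hnp
    have hsub : (Finset.Icc 1 B).filter p ⊆ Finset.Icc 1 (k-1) := by
      intro i hi
      rw [Finset.mem_filter, Finset.mem_Icc] at hi
      rw [Finset.mem_Icc]
      rcases hi with ⟨⟨h1, _⟩, hp⟩
      by_contra hc
      push_neg at hc
      exact hnp (hdown k i hk (by omega) hp)
    have := Finset.card_le_card hsub
    rw [Nat.card_Icc] at this
    omega
  · intro hpk
    have hsub : Finset.Icc 1 k ⊆ (Finset.Icc 1 B).filter p := by
      intro i hi
      rw [Finset.mem_Icc] at hi
      have hpi : p i := hdown i k hi.1 hi.2 hpk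
      rw [Finset.mem_filter, Finset.mem_Icc]
      exact ⟨⟨hi.1, hbd i hi.1 hpi⟩, hpi⟩
    have := Finset.card_le_card hsub
    rwa [Nat.card_Icc] at this

lemma cnt_conj {S : Multiset ℕ} {B k : ℕ} (hB : ∀ s ∈ S, s ≤ B) (hk : 1 ≤ k) :
    cnt (conj S) k = ((Finset.Icc 1 B).filter (fun j => k ≤ cnt S j)).card := by
  rw [show cnt (conj S) k = (Multiset.filter (fun x => k ≤ x) (conj S)).card from rfl,
      conj_eq_of_bound hB, Multiset.filter_filter, Multiset.filter_map]
  rw [show ((Finset.Icc 1 B).filter (fun j => k ≤ cnt S j)).card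
      = Multiset.card ((Finset.Icc 1 B).val.filter (fun j => k ≤ cnt S j)) from by
    rw [← Finset.filter_val]; rfl]
  rw [Multiset.card_map]
  congr 1
  apply Multiset.filter_congr
  intro j _
  simp only [Function.comp]
  constructor
  · exact fun h => h.1
  · intro h
    exact ⟨h, by unfold cnt at h ⊢; omega⟩

lemma count_eq_cnt_sub {S : Multiset ℕ} (m : ℕ) :
    cnt S m = Multiset.count m S + cnt S (m + 1) := by
  unfold cnt
  have h := Multiset.filter_add_filter (fun x : ℕ => x = m) (fun x : ℕ => m + 1 ≤ x) S
  have h1 : S.filter (fun x => x = m ∨ m + 1 ≤ x) = S.filter (m ≤ ·) := by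
    apply Multiset.filter_congr; intro x _; omega
  have h2 : S.filter (fun x => x = m ∧ m + 1 ≤ x) = 0 := by
    rw [Multiset.filter_eq_nil]; intro a _; omega
  rw [h1, h2] at h
  have h3 : Multiset.count m S = (S.filter (fun x => x = m)).card := by
    rw [Multiset.count, Multiset.countP_eq_card_filter]
    congr 1
    apply Multiset.filter_congr; intro x _; exact eq_comm
  rw [h3]
  have := congrArg Multiset.card h
  rw [Multiset.card_add, add_zero] at this
  omega

lemma ext_cnt {S T : Multiset ℕ} (hS : ∀ s ∈ S, 0 < s) (hT : ∀ s ∈ T, 0 < s)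
    (h : ∀ k, 1 ≤ k → cnt S k = cnt T k) : S = T := by
  ext m
  rcases Nat.eq_zero_or_pos m with rfl | hm
  · rw [Multiset.count_eq_zero.2 (fun hc => by have := hS 0 hc; omega),
        Multiset.count_eq_zero.2 (fun hc => by have := hT 0 hc; omega)]
  · have e1 := count_eq_cnt_sub (S := S) m
    have e2 := count_eq_cnt_sub (S := T) m
    have k1 := h m hm
    have k2 := h (m+1) (by omega)
    omega

lemma conj_conj {S : Multiset ℕ} (hpos : ∀ s ∈ S, 0 < s) : conj (conj S) = S := by
  apply ext_cnt conj_pos hpos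
  intro k hk
  have hBc : ∀ s ∈ conj S, s ≤ (conj S).sum := fun s hs => mem_le_sum hs
  rw [cnt_conj hBc hk]
  have hstep : ∀ j, 1 ≤ j → (k ≤ cnt (conj S) j ↔ j ≤ cnt S k) := by
    intro j hj
    rw [cnt_conj (B := S.sum) (fun s hs => mem_le_sum hs) hj]
    exact card_filter_Icc_ge (fun i => j ≤ cnt S i) hk
      (fun i i' hi hii' hp => le_trans hp (cnt_anti hii'))
      (fun i _ hp => by
        have : 0 < cnt S i := by omega
        rcases cnt_pos_iff.1 this with ⟨s, hs, his⟩
        exact le_trans his (mem_le_sum hs))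
  have hfc : (Finset.Icc 1 ((conj S).sum)).filter (fun j => k ≤ cnt (conj S) j)
      = Finset.Icc 1 (cnt S k) := by
    ext j
    simp only [Finset.mem_filter, Finset.mem_Icc]
    constructor
    · rintro ⟨⟨h1, _⟩, hp⟩
      exact ⟨h1, (hstep j h1).1 hp⟩
    · rintro ⟨h1, h2⟩
      have hle : cnt S k ≤ (conj S).sum := by
        rw [sum_conj]
        exact le_trans (cnt_le_card S k) (card_le_sum_of_pos hpos)
      exact ⟨⟨h1, by omega⟩, (hstep j h1).2 h2⟩
  rw [hfc, Nat.card_Icc]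
  omega

lemma card_conj_le_iff {S : Multiset ℕ} {P : ℕ} :
    Multiset.card (conj S) ≤ P ↔ ∀ s ∈ S, s ≤ P := by
  constructor
  · intro h s hs
    by_contra hc
    push_neg at hc
    have h1 : cnt (conj S) 1 = ((Finset.Icc 1 S.sum).filter (fun j => 1 ≤ cnt S j)).card :=
      cnt_conj (fun s hs => mem_le_sum hs) le_rfl
    have hsub : Finset.Icc 1 s ⊆ (Finset.Icc 1 S.sum).filter (fun j => 1 ≤ cnt S j) := by
      intro j hj
      rw [Finset.mem_Icc] at hj
      rw [Finset.mem_filter, Finset.mem_Icc]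
      refine ⟨⟨hj.1, le_trans hj.2 (mem_le_sum hs)⟩, ?_⟩
      have : 0 < cnt S j := cnt_pos_iff.2 ⟨s, hs, hj.2⟩
      omega
    have hcard := Finset.card_le_card hsub
    rw [Nat.card_Icc] at hcard
    have := cnt_le_card (conj S) 1
    omega
  · intro h
    rw [conj_eq_of_bound h]
    calc Multiset.card ((((Finset.Icc 1 P).val.map (cnt S))).filter (0 < ·))
        ≤ Multiset.card ((Finset.Icc 1 P).val.map (cnt S)) :=
          Multiset.card_le_card (Multiset.filter_le _ _)
      _ = P := by rw [Multiset.card_map]; simp [Nat.card_Icc]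

lemma mem_conj_le_iff {S : Multiset ℕ} (hpos : ∀ s ∈ S, 0 < s) {P : ℕ} :
    (∀ y ∈ conj S, y ≤ P) ↔ Multiset.card S ≤ P := by
  conv_rhs => rw [← conj_conj hpos]
  exact (card_conj_le_iff (S := conj S)).symm

lemma card_filter_odd_conj {S : Multiset ℕ} {B : ℕ} (hB : ∀ s ∈ S, s ≤ B) :
    Multiset.card ((conj S).filter (fun y => Odd y)) = ∑ j ∈ Finset.Icc 1 B, cnt S j % 2 := by
  rw [conj_eq_of_bound hB, Multiset.filter_filter]
  have h1 : (((Finset.Icc 1 B).val.map (cnt S)).filter (fun a => Odd a ∧ 0 < a))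
      = (((Finset.Icc 1 B).val.map (cnt S)).filter (fun a => Odd a)) := by
    apply Multiset.filter_congr
    intro x _
    constructor
    · exact fun h => h.1
    · intro h; refine ⟨h, ?_⟩; rcases h with ⟨t, ht⟩; omega
  rw [h1, Multiset.filter_map, Multiset.card_map, ← Finset.filter_val]
  show (Finset.filter (fun j => Odd (cnt S j)) (Finset.Icc 1 B)).card = _
  rw [Finset.card_filter]
  apply Finset.sum_congr rfl
  intro j _
  rcases Nat.even_or_odd (cnt S j) with he | ho
  · rw [if_neg (by simpa using (Nat.not_odd_iff_even.2 he)), Nat.even_iff.1 he]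
  · rw [if_pos ho, Nat.odd_iff.1 ho]

/-! ### alternating sums -/

def asum : List ℕ → ℤ
  | [] => 0
  | x :: t => (x : ℤ) - asum t

def pre (a b : ℕ) : List ℕ := (List.range b).map (fun k => a + 1 + k)

lemma sum_range_neg_pow (L : List ℕ) :
    ∑ i ∈ Finset.range L.length, (-1 : ℤ) ^ i * (L.getD i 0 : ℤ) = asum L := by
  induction L with
  | nil => simp [asum]
  | cons x t ih =>
    rw [show (x :: t).length = t.length + 1 from rfl, Finset.sum_range_succ']
    simp only [pow_succ, List.getD_cons_succ, List.getD_cons_zero, pow_zero, one_mul]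
    have : ∑ k ∈ Finset.range t.length, (-1:ℤ) ^ k * (-1) * ((t.getD k 0 : ℕ) : ℤ)
        = -∑ k ∈ Finset.range t.length, (-1:ℤ) ^ k * ((t.getD k 0 : ℕ) : ℤ) := by
      rw [← Finset.sum_neg_distrib]
      apply Finset.sum_congr rfl
      intro k _
      ring
    rw [this, ih, asum]
    ring

lemma asum_append (p q : List ℕ) :
    asum (p ++ q) = asum p + (-1) ^ p.length * asum q := by
  induction p with
  | nil => simp [asum]
  | cons x t ih =>
    show asum (x :: (t ++ q)) = _
    rw [asum, ih, asum]
    rw [show (x :: t).length = t.length + 1 from rfl, pow_succ]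
    ring

lemma pre_succ (a b : ℕ) : pre a (b + 1) = pre a b ++ [a + 1 + b] := by
  unfold pre
  rw [List.range_succ, List.map_append]
  rfl

lemma length_pre (a b : ℕ) : (pre a b).length = b := by
  simp [pre]

lemma asum_pre_succ (a b : ℕ) :
    asum (pre a (b + 1)) = asum (pre a b) + (-1) ^ b * (a + 1 + b : ℤ) := by
  rw [pre_succ, asum_append, length_pre]
  norm_num [asum]

lemma asum_pre (a : ℕ) : ∀ c : ℕ,
    asum (pre a (2 * c)) = -(c : ℤ) ∧ asum (pre a (2 * c + 1)) = (a : ℤ) + c + 1 := by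
  intro c
  induction c with
  | zero =>
    constructor
    · simp [pre, asum]
    · have := asum_pre_succ a 0
      simp [pre, asum] at this ⊢
  | succ c ih =>
    have h1 : asum (pre a (2 * c + 2)) = asum (pre a (2 * c + 1)) + (-1) ^ (2*c+1) * (a + 1 + (2*c+1) : ℤ) := by
      have := asum_pre_succ a (2 * c + 1)
      convert this using 3 <;> push_cast <;> ring
    have h2 : asum (pre a (2 * c + 3)) = asum (pre a (2 * c + 2)) + (-1) ^ (2*c+2) * (a + 1 + (2*c+2) : ℤ) := by
      have := asum_pre_succ a (2 * c + 2)
      convert this using 3 <;> push_cast <;> ring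
    have e1 : (-1 : ℤ) ^ (2*c+1) = -1 := Odd.neg_one_pow ⟨c, by ring⟩
    have e2 : (-1 : ℤ) ^ (2*c+2) = 1 := Even.neg_one_pow ⟨c+1, by ring⟩
    constructor
    · rw [show 2 * (c+1) = 2*c + 2 from by ring, h1, ih.2, e1]
      push_cast; ring
    · rw [show 2 * (c+1) + 1 = 2*c + 3 from by ring, h2, h1, ih.2, e1, e2]
      push_cast; ring

lemma sum_pre (a : ℕ) : ∀ b : ℕ, (pre a b).sum * 2 = b * (2 * a + b + 1) := by
  intro b
  induction b with
  | zero => simp [pre]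
  | succ b ih =>
    rw [pre_succ, List.sum_append]
    simp only [List.sum_cons, List.sum_nil]
    nlinarith [ih]

lemma altSum_eq_neg_asum (d : List ℕ) : altSum d d.length = - asum d := by
  unfold altSum
  rw [← Finset.Ico_add_one_right_eq_Icc, Finset.sum_Ico_eq_sum_range]
  rw [← sum_range_neg_pow d]
  rw [show d.length + 1 - 1 = d.length from rfl]
  rw [← Finset.sum_neg_distrib]
  apply Finset.sum_congr rfl
  intro i _
  have : entry d (1 + i) = d.getD i 0 := by
    unfold entry
    congr 1
    omega
  rw [this, pow_add]
  ring

lemma asum_sorted {μ : List ℕ} (hs : μ.Pairwise (· ≥ ·)) :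
    ∀ {B : ℕ}, (∀ x ∈ μ, x ≤ B) →
    asum μ = ∑ j ∈ Finset.Icc 1 B, ((cnt (↑μ) j % 2 : ℕ) : ℤ) := by
  induction μ with
  | nil =>
    intro B _
    have : ∀ j ∈ Finset.Icc 1 B, ((cnt (↑([] : List ℕ)) j % 2 : ℕ) : ℤ) = 0 := by
      intro j _
      have : cnt (↑([] : List ℕ)) j = 0 := by simp [cnt]
      rw [this]
      rfl
    rw [Finset.sum_congr rfl this, asum]
    simp
  | cons x t ih =>
    intro B hB
    rw [List.pairwise_cons] at hs
    have hxB : x ≤ B := hB x List.mem_cons_self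
    have htx : ∀ y ∈ t, y ≤ x := fun y hy => hs.1 y hy
    have hcoe : (↑(x :: t) : Multiset ℕ) = x ::ₘ ↑t := rfl
    have hsplit : ∑ j ∈ Finset.Icc 1 B, ((cnt (↑(x::t)) j % 2 : ℕ) : ℤ)
        = ∑ j ∈ Finset.Icc 1 x, ((cnt (↑(x::t)) j % 2 : ℕ) : ℤ)
          + ∑ j ∈ Finset.Ioc x B, ((cnt (↑(x::t)) j % 2 : ℕ) : ℤ) := by
      have hic : ∀ y : ℕ, Finset.Icc 1 y = Finset.Ioc 0 y := by
        intro y; ext z; simp [Finset.mem_Icc, Finset.mem_Ioc]; omega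
      rw [hic B, hic x, ← Finset.sum_Ioc_consecutive _ (Nat.zero_le x) hxB]
    have hzero : ∀ j ∈ Finset.Ioc x B, ((cnt (↑(x::t)) j % 2 : ℕ) : ℤ) = 0 := by
      intro j hj
      rw [Finset.mem_Ioc] at hj
      have : cnt (↑(x::t)) j = 0 := cnt_eq_zero (by
        intro s hsm
        rw [hcoe, Multiset.mem_cons] at hsm
        rcases hsm with rfl | hsm
        · omega
        · have := htx s (by exact_mod_cast hsm); omega)
      rw [this]
      rfl
    have hone : ∀ j ∈ Finset.Icc 1 x, ((cnt (↑(x::t)) j % 2 : ℕ) : ℤ)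
        = 1 - ((cnt (↑t) j % 2 : ℕ) : ℤ) := by
      intro j hj
      rw [Finset.mem_Icc] at hj
      rw [hcoe, cnt_cons, if_pos hj.2]
      have h2 := Nat.mod_two_eq_zero_or_one (cnt (↑t) j)
      rcases h2 with h2 | h2 <;> rw [h2] <;>
        · simp [Nat.add_mod, h2]
    rw [hsplit, Finset.sum_congr rfl hzero, Finset.sum_congr rfl hone]
    rw [Finset.sum_sub_distrib]
    simp only [Finset.sum_const, Nat.card_Icc, smul_eq_mul, mul_one, Finset.sum_const_zero, add_zero]
    rw [← ih hs.2 htx]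
    rw [asum]
    push_cast
    ring

/-! ### entry lemmas and sorted-list/multiset transfer -/

lemma entry_eq_getElem {L : List ℕ} {i : ℕ} (hi : 1 ≤ i) (h : i - 1 < L.length) :
    entry L i = L[i-1] := List.getD_eq_getElem L 0 h

lemma entry_getElem' {L : List ℕ} {i : ℕ} (h : i < L.length) :
    entry L (i + 1) = L[i] := by
  have : i + 1 - 1 = i := by omega
  unfold entry
  rw [this]
  exact List.getD_eq_getElem L 0 h

lemma entry_eq_zero {L : List ℕ} {i : ℕ} (h : L.length ≤ i - 1) :
    entry L i = 0 := List.getD_eq_default L 0 h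

lemma entry_le_bound {L : List ℕ} {B : ℕ} (h : ∀ y ∈ L, y ≤ B) (i : ℕ) :
    entry L i ≤ B := by
  rcases lt_or_ge (i-1) L.length with hl | hl
  · have : entry L i = L[i-1] := List.getD_eq_getElem L 0 hl
    rw [this]
    exact h _ (List.getElem_mem hl)
  · rw [entry_eq_zero hl]
    exact Nat.zero_le B

lemma cnt_coe_cons (x : ℕ) (t : List ℕ) (v : ℕ) :
    cnt (↑(x :: t)) v = (if v ≤ x then 1 else 0) + cnt (↑t) v := by
  have : (↑(x :: t) : Multiset ℕ) = x ::ₘ ↑t := rfl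
  rw [this, cnt_cons]

lemma entry_le_iff {L : List ℕ} (hs : L.Pairwise (· ≥ ·)) {c v : ℕ} (hc : 1 ≤ c) (hv : 1 ≤ v) :
    v ≤ entry L c ↔ c ≤ cnt (↑L) v := by
  induction L generalizing c with
  | nil =>
    have h1 : entry ([] : List ℕ) c = 0 := entry_eq_zero (by simp)
    have h2 : cnt (↑([] : List ℕ)) v = 0 := by simp [cnt]
    rw [h1, h2]
    omega
  | cons x t ih =>
    rw [List.pairwise_cons] at hs
    rw [cnt_coe_cons]
    rcases Nat.exists_eq_add_of_le hc with ⟨c', rfl⟩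
    rcases Nat.eq_zero_or_pos c' with rfl | hc'
    · have h1 : entry (x :: t) 1 = x := rfl
      rw [h1]
      by_cases hvx : v ≤ x
      · rw [if_pos hvx]; omega
      · rw [if_neg hvx]
        have : cnt (↑t) v = 0 := cnt_eq_zero (by
          intro s hsm
          have := hs.1 s (by exact_mod_cast hsm)
          omega)
        omega
    · have h1 : entry (x :: t) (1 + c') = entry t c' := by
        unfold entry
        have e1 : 1 + c' - 1 = (c' - 1) + 1 := by omega
        rw [e1, List.getD_cons_succ]
      rw [h1]
      by_cases hvx : v ≤ x
      · rw [if_pos hvx, ih hs.2 hc']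
        omega
      · rw [if_neg hvx]
        have hz : cnt (↑t) v = 0 := cnt_eq_zero (by
          intro s hsm
          have := hs.1 s (by exact_mod_cast hsm)
          omega)
        have hb : entry t c' ≤ x := entry_le_bound hs.1 c'
        omega

lemma ncard_sorted_eq (P : Multiset ℕ → Prop) :
    Set.ncard {L : List ℕ | L.Pairwise (· ≥ ·) ∧ P ↑L} = Set.ncard {S : Multiset ℕ | P S} := by
  have hbij : Set.BijOn (fun L : List ℕ => (↑L : Multiset ℕ))
      {L : List ℕ | L.Pairwise (· ≥ ·) ∧ P ↑L} {S : Multiset ℕ | P S} := by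
    apply Set.InvOn.bijOn (f' := fun S => Multiset.sort S (· ≥ ·))
    · constructor
      · intro L hL
        exact List.Perm.eq_of_pairwise' (r := (· ≥ ·)) (Multiset.pairwise_sort _ _) hL.1
          (by rw [← Multiset.coe_eq_coe, Multiset.sort_eq])
      · intro S _
        exact Multiset.sort_eq S _
    · intro L hL
      exact hL.2
    · intro S hS
      refine ⟨Multiset.pairwise_sort _ _, ?_⟩
      rw [Multiset.sort_eq]
      exact hS
  rw [← hbij.image_eq, Set.ncard_image_of_injOn hbij.injOn]

/-! ### Step A: stripping the forced prefix of an (a,b)-sequence -/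

lemma pre_getElem {a b i : ℕ} (h : i < b) : (pre a b)[i]'(by rw [length_pre]; exact h) = a + 1 + i := by
  simp [pre]

lemma take_eq_pre {a b : ℕ} {d : List ℕ} (hlen : b ≤ d.length)
    (h4 : ∀ i, 1 ≤ i → i ≤ b → entry d i = a + i) :
    d.take b = pre a b := by
  apply List.ext_getElem
  · rw [List.length_take, length_pre]; omega
  · intro i h1 h2
    rw [List.getElem_take]
    rw [List.length_take] at h1
    have hib : i < b := by omega
    have hie : entry d (i+1) = d[i] := entry_getElem' (by omega)
    have := h4 (i+1) (by omega) (by omega)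
    rw [hie] at this
    rw [this, pre_getElem hib]
    omega

lemma stepA (a b n : ℕ) (hb : 1 ≤ b) :
    Set.ncard {d : List ℕ | IsABSeq a b d ∧ d.sum = 2 * n} =
    Set.ncard {μ : List ℕ | μ.Pairwise (· ≥ ·) ∧ (∀ x ∈ μ, 0 < x) ∧ (∀ x ∈ μ, x ≤ a + b) ∧
      (-1 : ℤ) ^ b * asum μ = - asum (pre a b) ∧ (pre a b).sum + μ.sum = 2 * n} := by
  have hbij : Set.BijOn (fun d : List ℕ => d.drop b)
      {d : List ℕ | IsABSeq a b d ∧ d.sum = 2 * n}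
      {μ : List ℕ | μ.Pairwise (· ≥ ·) ∧ (∀ x ∈ μ, 0 < x) ∧ (∀ x ∈ μ, x ≤ a + b) ∧
        (-1 : ℤ) ^ b * asum μ = - asum (pre a b) ∧ (pre a b).sum + μ.sum = 2 * n} := by
    apply Set.InvOn.bijOn (f' := fun μ : List ℕ => pre a b ++ μ)
    · constructor
      · -- left inverse on the (a,b)-sequences
        rintro d ⟨⟨_, hlen, _, h4, _, _⟩, _⟩
        show pre a b ++ d.drop b = d
        rw [← take_eq_pre hlen h4, List.take_append_drop]
      · intro μ _
        exact List.drop_left' (length_pre a b)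
    · -- MapsTo drop
      rintro d ⟨⟨_, hlen, h3, h4, h5, h6⟩, h7⟩
      show d.drop b ∈ _
      simp only [Set.mem_setOf_eq]
      have hdec : pre a b ++ d.drop b = d := by
        rw [← take_eq_pre hlen h4, List.take_append_drop]
      have hlend : (d.drop b).length = d.length - b := List.length_drop
      have hgetd : ∀ i (_ : i < (d.drop b).length), (d.drop b)[i] = entry d (b + i + 1) := by
        intro i hi
        rw [List.getElem_drop]
        exact (entry_getElem' (by omega)).symm
      have hentb : entry d b = a + b := h4 b hb le_rfl
      refine ⟨?_, ?_, ?_, ?_, ?_⟩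
      · -- sorted
        rw [List.pairwise_iff_getElem]
        intro i j hi hj hij
        rw [hgetd i hi, hgetd j hj]
        exact h5 (b+i+1) (b+j+1) (by omega) (by omega) (by omega)
      · -- positive
        intro x hx
        rcases List.mem_iff_getElem.1 hx with ⟨i, hi, rfl⟩
        rw [hgetd i hi]
        exact h3 (b+i+1) (by omega) (by omega)
      · -- bounded
        intro x hx
        rcases List.mem_iff_getElem.1 hx with ⟨i, hi, rfl⟩
        rw [hgetd i hi, ← hentb]
        exact h5 b (b+i+1) le_rfl (by omega) (by omega)
      · -- alternating sum
        have h0 : altSum d d.length = 0 := h6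
        rw [altSum_eq_neg_asum] at h0
        have : asum d = asum (pre a b) + (-1)^b * asum (d.drop b) := by
          conv_lhs => rw [← hdec]
          rw [asum_append, length_pre]
        rw [this] at h0
        linarith
      · -- sum
        have : d.sum = (pre a b).sum + (d.drop b).sum := by
          conv_lhs => rw [← hdec]
          rw [List.sum_append]
        omega
    · -- MapsTo append
      rintro μ ⟨hs, hpos, hbd, hasum, hsum⟩
      show pre a b ++ μ ∈ _
      simp only [Set.mem_setOf_eq]
      have hlen : (pre a b ++ μ).length = b + μ.length := by
        rw [List.length_append, length_pre]
      have hentl : ∀ i, 1 ≤ i → i ≤ b → entry (pre a b ++ μ) i = a + i := by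
        intro i h1 h2
        have hi : i - 1 < (pre a b).length := by rw [length_pre]; omega
        rw [entry_eq_getElem h1 (by rw [hlen]; omega), List.getElem_append_left hi,
          pre_getElem (by omega : i - 1 < b)]
        omega
      have hentr : ∀ i, b < i → entry (pre a b ++ μ) i = entry μ (i - b) := by
        intro i h1
        rcases lt_or_ge (i - 1) (pre a b ++ μ).length with h2 | h2
        · rw [entry_eq_getElem (by omega) h2,
            List.getElem_append_right (by rw [length_pre]; omega)]
          have h3 : i - 1 - (pre a b).length < μ.length := by
            rw [length_pre]
            rw [hlen] at h2
            omega
          rw [← entry_getElem' h3]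
          congr 1
          rw [length_pre]
          omega
        · rw [entry_eq_zero (by omega), entry_eq_zero (by rw [hlen] at h2; omega)]
      have hentmu : ∀ i, 1 ≤ i → i ≤ μ.length → 0 < entry μ i ∧ entry μ i ≤ a + b := by
        intro i h1 h2
        have h3 : i - 1 < μ.length := by omega
        rw [entry_eq_getElem h1 h3]
        exact ⟨hpos _ (List.getElem_mem h3), hbd _ (List.getElem_mem h3)⟩
      refine ⟨⟨hb, by omega, ?_, hentl, ?_, ?_⟩, ?_⟩
      · -- positivity
        intro i h1 h2
        rcases le_or_gt i b with h3 | h3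
        · rw [hentl i h1 h3]; omega
        · rw [hentr i h3]
          exact (hentmu (i-b) (by omega) (by rw [hlen] at h2; omega)).1
      · -- monotone after b
        intro i j h1 h2 h3
        rw [hlen] at h3
        rcases eq_or_lt_of_le h2 with rfl | hij
        · exact le_rfl
        have hjb : b < j := by omega
        by_cases hib : b < i
        · rw [hentr i hib, hentr j hjb]
          have hi1 : i - b - 1 < μ.length := by omega
          have hj1 : j - b - 1 < μ.length := by omega
          rw [entry_eq_getElem (by omega) hi1, entry_eq_getElem (by omega) hj1]
          exact (List.pairwise_iff_getElem.1 hs) _ _ hi1 hj1 (by omega)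
        · have hi : i = b := by omega
          rw [hi, hentl b hb le_rfl, hentr j hjb]
          exact (hentmu (j - b) (by omega) (by omega)).2
      · -- alternating sum is zero
        rw [altSum_eq_neg_asum, asum_append, length_pre]
        have := hasum
        linarith
      · -- total sum
        rw [List.sum_append]
        omega
  rw [← hbij.image_eq, Set.ncard_image_of_injOn hbij.injOn]

/-! ### Steps B,C,D: to multisets, conjugate -/

lemma stepBC (a b n A : ℕ) (hb : 1 ≤ b) (hA : (A : ℤ) = -((-1 : ℤ)) ^ b * asum (pre a b)) :
    Set.ncard {d : List ℕ | IsABSeq a b d ∧ d.sum = 2 * n} =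
    Set.ncard {X : Multiset ℕ | (∀ x ∈ X, 0 < x) ∧ (∀ x ∈ X, x ≤ a + b) ∧
      Multiset.card ((conj X).filter (fun y => Odd y)) = A ∧ (pre a b).sum + X.sum = 2 * n} := by
  rw [stepA a b n hb]
  rw [← ncard_sorted_eq (fun X => (∀ x ∈ X, 0 < x) ∧ (∀ x ∈ X, x ≤ a + b) ∧
      Multiset.card ((conj X).filter (fun y => Odd y)) = A ∧ (pre a b).sum + X.sum = 2 * n)]
  congr 1
  ext μ
  simp only [Set.mem_setOf_eq, Multiset.mem_coe, Multiset.sum_coe]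
  constructor
  · rintro ⟨h1, h2, h3, h4, h5⟩
    refine ⟨h1, h2, h3, ?_, h5⟩
    have e1 : asum μ = ∑ j ∈ Finset.Icc 1 (a+b), ((cnt (↑μ) j % 2 : ℕ) : ℤ) :=
      asum_sorted h1 h3
    have e2 : Multiset.card ((conj (↑μ : Multiset ℕ)).filter (fun y => Odd y))
        = ∑ j ∈ Finset.Icc 1 (a+b), cnt (↑μ) j % 2 :=
      card_filter_odd_conj (fun s hs => h3 s (by exact_mod_cast hs))
    have e3 : (Multiset.card ((conj (↑μ : Multiset ℕ)).filter (fun y => Odd y)) : ℤ) = asum μ := by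
      rw [e1, e2]
      push_cast
      rfl
    have hsq : (-1 : ℤ)^b * ((-1 : ℤ)^b) = 1 := by
      rw [← pow_add]
      exact Even.neg_one_pow ⟨b, by ring⟩
    have h6 : asum μ = (A : ℤ) := by
      have h7 := congrArg (fun z => (-1 : ℤ)^b * z) h4
      rw [← mul_assoc, hsq, one_mul] at h7
      rw [h7, hA]
      ring
    have : (Multiset.card ((conj (↑μ : Multiset ℕ)).filter (fun y => Odd y)) : ℤ) = (A : ℤ) := by
      rw [e3, h6]
    exact_mod_cast this
  · rintro ⟨h1, h2, h3, h4, h5⟩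
    refine ⟨h1, h2, h3, ?_, h5⟩
    have e1 : asum μ = ∑ j ∈ Finset.Icc 1 (a+b), ((cnt (↑μ) j % 2 : ℕ) : ℤ) :=
      asum_sorted h1 h3
    have e2 : Multiset.card ((conj (↑μ : Multiset ℕ)).filter (fun y => Odd y))
        = ∑ j ∈ Finset.Icc 1 (a+b), cnt (↑μ) j % 2 :=
      card_filter_odd_conj (fun s hs => h3 s (by exact_mod_cast hs))
    have e3 : (A : ℤ) = asum μ := by
      rw [← h4, e2, e1]
      push_cast
      rfl
    have hsq : (-1 : ℤ)^b * ((-1 : ℤ)^b) = 1 := by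
      rw [← pow_add]
      exact Even.neg_one_pow ⟨b, by ring⟩
    rw [← e3, hA]
    linear_combination (-(asum (pre a b))) * hsq

lemma stepD (P A S m : ℕ) :
    Set.ncard {X : Multiset ℕ | (∀ x ∈ X, 0 < x) ∧ (∀ x ∈ X, x ≤ P) ∧
      Multiset.card ((conj X).filter (fun y => Odd y)) = A ∧ S + X.sum = m} =
    Set.ncard {Y : Multiset ℕ | (∀ y ∈ Y, 0 < y) ∧ Multiset.card Y ≤ P ∧
      Multiset.card (Y.filter (fun y => Odd y)) = A ∧ S + Y.sum = m} := by
  have hbij : Set.BijOn conj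
      {X : Multiset ℕ | (∀ x ∈ X, 0 < x) ∧ (∀ x ∈ X, x ≤ P) ∧
        Multiset.card ((conj X).filter (fun y => Odd y)) = A ∧ S + X.sum = m}
      {Y : Multiset ℕ | (∀ y ∈ Y, 0 < y) ∧ Multiset.card Y ≤ P ∧
        Multiset.card (Y.filter (fun y => Odd y)) = A ∧ S + Y.sum = m} := by
    apply Set.InvOn.bijOn (f' := conj)
    · exact ⟨fun X hX => conj_conj hX.1, fun Y hY => conj_conj hY.1⟩
    · rintro X ⟨h1, h2, h3, h4⟩
      exact ⟨conj_pos, card_conj_le_iff.2 h2, h3, by rw [sum_conj]; exact h4⟩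
    · rintro Y ⟨h1, h2, h3, h4⟩
      refine ⟨conj_pos, (mem_conj_le_iff h1).2 h2, ?_, by rw [sum_conj]; exact h4⟩
      rw [conj_conj h1]
      exact h3
  rw [← hbij.image_eq, Set.ncard_image_of_injOn hbij.injOn]

/-! ### Step E: split into odd and even halves -/

lemma sum_map_half_odd {O : Multiset ℕ} (h : ∀ o ∈ O, Odd o) :
    2 * (O.map (fun o => (o+1)/2)).sum = O.sum + Multiset.card O := by
  induction O using Multiset.induction with
  | empty => simp
  | cons a O ih =>
    have ha := h a (Multiset.mem_cons_self a O)
    have ih' := ih (fun o ho => h o (Multiset.mem_cons_of_mem ho))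
    simp only [Multiset.map_cons, Multiset.sum_cons, Multiset.card_cons]
    rcases ha with ⟨t, rfl⟩
    omega

lemma sum_map_half_even {E : Multiset ℕ} (h : ∀ e ∈ E, ¬ Odd e) :
    2 * (E.map (fun e => e/2)).sum = E.sum := by
  induction E using Multiset.induction with
  | empty => simp
  | cons a E ih =>
    have ha := h a (Multiset.mem_cons_self a E)
    have ih' := ih (fun o ho => h o (Multiset.mem_cons_of_mem ho))
    simp only [Multiset.map_cons, Multiset.sum_cons]
    rw [Nat.not_odd_iff_even] at ha
    rcases ha with ⟨t, rfl⟩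
    omega

lemma sum_map_double_sub {w : Multiset ℕ} (h : ∀ x ∈ w, 0 < x) :
    (w.map (fun m => 2*m - 1)).sum + Multiset.card w = 2 * w.sum := by
  induction w using Multiset.induction with
  | empty => simp
  | cons a w ih =>
    have ha := h a (Multiset.mem_cons_self a w)
    have ih' := ih (fun o ho => h o (Multiset.mem_cons_of_mem ho))
    simp only [Multiset.map_cons, Multiset.sum_cons, Multiset.card_cons]
    omega

lemma sum_map_double {e : Multiset ℕ} : (e.map (fun m => 2*m)).sum = 2 * e.sum := by
  induction e using Multiset.induction with
  | empty => simp
  | cons a e ih =>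
    simp only [Multiset.map_cons, Multiset.sum_cons, ih]
    ring

lemma stepE (P A S m : ℕ) :
    Set.ncard {Y : Multiset ℕ | (∀ y ∈ Y, 0 < y) ∧ Multiset.card Y ≤ P ∧
      Multiset.card (Y.filter (fun y => Odd y)) = A ∧ S + Y.sum = m} =
    Set.ncard {p : Multiset ℕ × Multiset ℕ | (∀ x ∈ p.1, 0 < x) ∧ (∀ x ∈ p.2, 0 < x) ∧
      Multiset.card p.1 = A ∧ A + Multiset.card p.2 ≤ P ∧
      S + 2 * (p.1.sum + p.2.sum) = m + A} := by
  have hbij : Set.BijOn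
      (fun Y : Multiset ℕ => ((Y.filter (fun y => Odd y)).map (fun o => (o+1)/2),
        (Y.filter (fun y => ¬ Odd y)).map (fun e => e/2)))
      {Y : Multiset ℕ | (∀ y ∈ Y, 0 < y) ∧ Multiset.card Y ≤ P ∧
        Multiset.card (Y.filter (fun y => Odd y)) = A ∧ S + Y.sum = m}
      {p : Multiset ℕ × Multiset ℕ | (∀ x ∈ p.1, 0 < x) ∧ (∀ x ∈ p.2, 0 < x) ∧
        Multiset.card p.1 = A ∧ A + Multiset.card p.2 ≤ P ∧
        S + 2 * (p.1.sum + p.2.sum) = m + A} := by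
    apply Set.InvOn.bijOn
      (f' := fun p : Multiset ℕ × Multiset ℕ =>
        p.1.map (fun m => 2*m - 1) + p.2.map (fun m => 2*m))
    · constructor
      · -- left inverse
        rintro Y ⟨hpos, _, _, _⟩
        show (((Y.filter (fun y => Odd y)).map (fun o => (o+1)/2)).map (fun m => 2*m-1))
            + ((Y.filter (fun y => ¬ Odd y)).map (fun e => e/2)).map (fun m => 2*m) = Y
        rw [Multiset.map_map, Multiset.map_map]
        have h1 : (Y.filter (fun y => Odd y)).map ((fun m => 2*m-1) ∘ (fun o => (o+1)/2))
            = Y.filter (fun y => Odd y) := by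
          conv_rhs => rw [← Multiset.map_id (Y.filter (fun y => Odd y))]
          apply Multiset.map_congr rfl
          intro x hx
          have hox : Odd x := (Multiset.mem_filter.1 hx).2
          rcases hox with ⟨t, ht⟩
          simp only [Function.comp, id] at ht ⊢
          omega
        have h2 : (Y.filter (fun y => ¬ Odd y)).map ((fun m => 2*m) ∘ (fun e => e/2))
            = Y.filter (fun y => ¬ Odd y) := by
          conv_rhs => rw [← Multiset.map_id (Y.filter (fun y => ¬ Odd y))]
          apply Multiset.map_congr rfl
          intro x hx
          have hox : ¬ Odd x := (Multiset.mem_filter.1 hx).2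
          rw [Nat.not_odd_iff_even] at hox
          rcases hox with ⟨t, ht⟩
          simp only [Function.comp, id]
          omega
        rw [h1, h2, Multiset.filter_add_not]
      · -- right inverse
        rintro p ⟨hp1, hp2, _, _, _⟩
        have hof : (p.1.map (fun m => 2*m - 1)).filter (fun y => Odd y)
            = p.1.map (fun m => 2*m - 1) := by
          rw [Multiset.filter_eq_self]
          intro y hy
          rcases Multiset.mem_map.1 hy with ⟨x, hx, rfl⟩
          have := hp1 x hx
          exact ⟨x - 1, by omega⟩
        have hef : (p.2.map (fun m => 2*m)).filter (fun y => Odd y) = 0 := by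
          rw [Multiset.filter_eq_nil]
          intro y hy
          rcases Multiset.mem_map.1 hy with ⟨x, hx, rfl⟩
          intro ⟨t, ht⟩
          omega
        have hof' : (p.1.map (fun m => 2*m - 1)).filter (fun y => ¬ Odd y) = 0 := by
          rw [Multiset.filter_eq_nil]
          intro y hy
          rcases Multiset.mem_map.1 hy with ⟨x, hx, rfl⟩
          have := hp1 x hx
          intro hn
          exact hn ⟨x - 1, by omega⟩
        have hef' : (p.2.map (fun m => 2*m)).filter (fun y => ¬ Odd y)
            = p.2.map (fun m => 2*m) := by
          rw [Multiset.filter_eq_self]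
          intro y hy
          rcases Multiset.mem_map.1 hy with ⟨x, hx, rfl⟩
          intro ⟨t, ht⟩
          omega
        have key1 : ((p.1.map (fun m => 2*m - 1) + p.2.map (fun m => 2*m)).filter
              (fun y => Odd y)).map (fun o => (o+1)/2) = p.1 := by
          rw [Multiset.filter_add, hof, hef, add_zero, Multiset.map_map]
          conv_rhs => rw [← Multiset.map_id p.1]
          apply Multiset.map_congr rfl
          intro x hx
          have := hp1 x hx
          simp only [Function.comp, id]
          omega
        have key2 : ((p.1.map (fun m => 2*m - 1) + p.2.map (fun m => 2*m)).filter
              (fun y => ¬ Odd y)).map (fun e => e/2) = p.2 := by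
          rw [Multiset.filter_add, hof', hef', zero_add, Multiset.map_map]
          conv_rhs => rw [← Multiset.map_id p.2]
          apply Multiset.map_congr rfl
          intro x hx
          simp only [Function.comp, id]
          omega
        exact Prod.ext key1 key2
    · -- MapsTo forward
      rintro Y ⟨hpos, hcard, hodd, hsum⟩
      have hYsplit := Multiset.filter_add_not (fun y => Odd y) Y
      have hcs : Multiset.card (Y.filter (fun y => Odd y))
          + Multiset.card (Y.filter (fun y => ¬ Odd y)) = Multiset.card Y := by
        rw [← Multiset.card_add, hYsplit]
      have hss : (Y.filter (fun y => Odd y)).sum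
          + (Y.filter (fun y => ¬ Odd y)).sum = Y.sum := by
        rw [← Multiset.sum_add, hYsplit]
      have ho2 := sum_map_half_odd (O := Y.filter (fun y => Odd y))
        (fun o ho => (Multiset.mem_filter.1 ho).2)
      have he2 := sum_map_half_even (E := Y.filter (fun y => ¬ Odd y))
        (fun e he => (Multiset.mem_filter.1 he).2)
      refine ⟨?_, ?_, ?_, ?_, ?_⟩
      · intro x hx
        rcases Multiset.mem_map.1 hx with ⟨o, ho, rfl⟩
        have := (Multiset.mem_filter.1 ho).2
        rcases this with ⟨t, rfl⟩
        omega
      · intro x hx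
        rcases Multiset.mem_map.1 hx with ⟨e, he, rfl⟩
        have h1 := (Multiset.mem_filter.1 he).2
        have h2 := hpos e (Multiset.mem_of_mem_filter he)
        rw [Nat.not_odd_iff_even] at h1
        rcases h1 with ⟨t, rfl⟩
        omega
      · rw [Multiset.card_map]; exact hodd
      · rw [Multiset.card_map]; omega
      · simp only [Multiset.sum_map_mul_left] at *
        omega
    · -- MapsTo backward
      rintro p ⟨hp1, hp2, hcard, hbd, hsum⟩
      have h1 := sum_map_double_sub hp1
      have h2 : (p.2.map (fun m => 2*m)).sum = 2 * p.2.sum := sum_map_double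
      refine ⟨?_, ?_, ?_, ?_⟩
      · intro y hy
        rcases Multiset.mem_add.1 hy with hy | hy <;> rcases Multiset.mem_map.1 hy with ⟨x, hx, rfl⟩
        · have := hp1 x hx; omega
        · have := hp2 x hx; omega
      · rw [Multiset.card_add, Multiset.card_map, Multiset.card_map, hcard]
        exact hbd
      · rw [Multiset.filter_add]
        have hof : (p.1.map (fun m => 2*m - 1)).filter (fun y => Odd y)
            = p.1.map (fun m => 2*m - 1) := by
          rw [Multiset.filter_eq_self]
          intro y hy
          rcases Multiset.mem_map.1 hy with ⟨x, hx, rfl⟩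
          have := hp1 x hx
          exact ⟨x - 1, by omega⟩
        have hef : (p.2.map (fun m => 2*m)).filter (fun y => Odd y) = 0 := by
          rw [Multiset.filter_eq_nil]
          intro y hy
          rcases Multiset.mem_map.1 hy with ⟨x, hx, rfl⟩
          intro ⟨t, ht⟩
          omega
        rw [hof, hef, add_zero, Multiset.card_map, hcard]
      · rw [Multiset.sum_add, h2]
        omega
  rw [← hbij.image_eq, Set.ncard_image_of_injOn hbij.injOn]

/-! ### RHS chain: splitting off the Durfee-type rectangle -/

lemma sum_map_add_const {T : Multiset ℕ} (K : ℕ) :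
    (T.map (fun x => x + K)).sum = T.sum + K * Multiset.card T := by
  induction T using Multiset.induction with
  | empty => simp
  | cons a T ih =>
    simp only [Multiset.map_cons, Multiset.sum_cons, Multiset.card_cons, ih]
    ring

lemma sum_map_sub_const {T : Multiset ℕ} {K : ℕ} (h : ∀ x ∈ T, K ≤ x) :
    (T.map (fun x => x - K)).sum + K * Multiset.card T = T.sum := by
  induction T using Multiset.induction with
  | empty => simp
  | cons a T ih =>
    have ha := h a (Multiset.mem_cons_self a T)
    have ih' := ih (fun x hx => h x (Multiset.mem_cons_of_mem hx))
    simp only [Multiset.map_cons, Multiset.sum_cons, Multiset.card_cons]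
    have : K * (Multiset.card T + 1) = K * Multiset.card T + K := by ring
    omega

lemma stepG (K c n : ℕ) (hK : 1 ≤ K) :
    Set.ncard {Λ : Multiset ℕ | (∀ x ∈ Λ, 0 < x) ∧ Λ.sum = n ∧ cnt Λ (K+1) = c} =
    Set.ncard {p : Multiset ℕ × Multiset ℕ | (∀ x ∈ p.1, 0 < x) ∧ (∀ x ∈ p.2, 0 < x) ∧
      Multiset.card p.1 = c ∧ (∀ x ∈ p.2, x ≤ K) ∧ p.1.sum + p.2.sum + c * K = n} := by
  have hcnt : ∀ Λ : Multiset ℕ, cnt Λ (K+1) = Multiset.card (Λ.filter (fun x => K < x)) := by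
    intro Λ
    unfold cnt
    congr 1
  have hbij : Set.BijOn
      (fun Λ : Multiset ℕ => ((Λ.filter (fun x => K < x)).map (fun x => x - K),
        Λ.filter (fun x => ¬ K < x)))
      {Λ : Multiset ℕ | (∀ x ∈ Λ, 0 < x) ∧ Λ.sum = n ∧ cnt Λ (K+1) = c}
      {p : Multiset ℕ × Multiset ℕ | (∀ x ∈ p.1, 0 < x) ∧ (∀ x ∈ p.2, 0 < x) ∧
        Multiset.card p.1 = c ∧ (∀ x ∈ p.2, x ≤ K) ∧ p.1.sum + p.2.sum + c * K = n} := by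
    apply Set.InvOn.bijOn
      (f' := fun p : Multiset ℕ × Multiset ℕ => p.1.map (fun x => x + K) + p.2)
    · constructor
      · -- left inverse
        rintro Λ _
        show ((Λ.filter (fun x => K < x)).map (fun x => x - K)).map (fun x => x + K)
            + Λ.filter (fun x => ¬ K < x) = Λ
        rw [Multiset.map_map]
        have : (Λ.filter (fun x => K < x)).map ((fun x => x + K) ∘ (fun x => x - K))
            = Λ.filter (fun x => K < x) := by
          conv_rhs => rw [← Multiset.map_id (Λ.filter (fun x => K < x))]
          apply Multiset.map_congr rfl
          intro x hx
          have := (Multiset.mem_filter.1 hx).2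
          simp only [Function.comp, id]
          omega
        rw [this, Multiset.filter_add_not]
      · -- right inverse
        rintro p ⟨hp1, hp2, hc, hbd, hsum⟩
        have hT : (p.1.map (fun x => x + K) + p.2).filter (fun x => K < x)
            = p.1.map (fun x => x + K) := by
          rw [Multiset.filter_add]
          have h1 : (p.1.map (fun x => x + K)).filter (fun x => K < x)
              = p.1.map (fun x => x + K) := by
            rw [Multiset.filter_eq_self]
            intro y hy
            rcases Multiset.mem_map.1 hy with ⟨x, hx, rfl⟩
            have := hp1 x hx
            omega
          have h2 : p.2.filter (fun x => K < x) = 0 := by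
            rw [Multiset.filter_eq_nil]
            intro x hx
            have := hbd x hx
            omega
          rw [h1, h2, add_zero]
        have hN : (p.1.map (fun x => x + K) + p.2).filter (fun x => ¬ K < x) = p.2 := by
          rw [Multiset.filter_add]
          have h1 : (p.1.map (fun x => x + K)).filter (fun x => ¬ K < x) = 0 := by
            rw [Multiset.filter_eq_nil]
            intro y hy
            rcases Multiset.mem_map.1 hy with ⟨x, hx, rfl⟩
            have := hp1 x hx
            omega
          have h2 : p.2.filter (fun x => ¬ K < x) = p.2 := by
            rw [Multiset.filter_eq_self]
            intro x hx
            have := hbd x hx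
            omega
          rw [h1, h2, zero_add]
        refine Prod.ext ?_ ?_
        · show ((p.1.map (fun x => x + K) + p.2).filter (fun x => K < x)).map (fun x => x - K)
              = p.1
          rw [hT, Multiset.map_map]
          conv_rhs => rw [← Multiset.map_id p.1]
          apply Multiset.map_congr rfl
          intro x hx
          simp only [Function.comp, id]
          omega
        · exact hN
    · -- MapsTo forward
      rintro Λ ⟨hpos, hsum, hcntc⟩
      show ((Λ.filter (fun x => K < x)).map (fun x => x - K),
        Λ.filter (fun x => ¬ K < x)) ∈ _
      simp only [Set.mem_setOf_eq]
      have hsplit := Multiset.filter_add_not (fun x => K < x) Λ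
      have hsums : (Λ.filter (fun x => K < x)).sum + (Λ.filter (fun x => ¬ K < x)).sum
          = Λ.sum := by rw [← Multiset.sum_add, hsplit]
      have hmapsum := sum_map_sub_const (T := Λ.filter (fun x => K < x)) (K := K)
        (fun x hx => le_of_lt (Multiset.mem_filter.1 hx).2)
      have hcard : Multiset.card (Λ.filter (fun x => K < x)) = c := by
        rw [← hcnt]; exact hcntc
      refine ⟨?_, ?_, ?_, ?_, ?_⟩
      · intro x hx
        rcases Multiset.mem_map.1 hx with ⟨y, hy, rfl⟩
        have := (Multiset.mem_filter.1 hy).2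
        omega
      · intro x hx
        exact hpos x (Multiset.mem_of_mem_filter hx)
      · rw [Multiset.card_map]; exact hcard
      · intro x hx
        have := (Multiset.mem_filter.1 hx).2
        omega
      · rw [hcard] at hmapsum
        have : c * K = K * c := by ring
        omega
    · -- MapsTo backward
      rintro p ⟨hp1, hp2, hc, hbd, hsum⟩
      show p.1.map (fun x => x + K) + p.2 ∈ _
      simp only [Set.mem_setOf_eq]
      refine ⟨?_, ?_, ?_⟩
      · intro x hx
        rcases Multiset.mem_add.1 hx with hx | hx
        · rcases Multiset.mem_map.1 hx with ⟨y, hy, rfl⟩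
          omega
        · exact hp2 x hx
      · rw [Multiset.sum_add, sum_map_add_const, hc]
        have : K * c = c * K := by ring
        omega
      · rw [hcnt, Multiset.filter_add]
        have h1 : (p.1.map (fun x => x + K)).filter (fun x => K < x)
            = p.1.map (fun x => x + K) := by
          rw [Multiset.filter_eq_self]
          intro y hy
          rcases Multiset.mem_map.1 hy with ⟨x, hx, rfl⟩
          have := hp1 x hx
          omega
        have h2 : p.2.filter (fun x => K < x) = 0 := by
          rw [Multiset.filter_eq_nil]
          intro x hx
          have := hbd x hx
          omega
        rw [h1, h2, add_zero, Multiset.card_map]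
        exact hc
  rw [← hbij.image_eq, Set.ncard_image_of_injOn hbij.injOn]

lemma replicate_le_filter {Λ : Multiset ℕ} (K m : ℕ) (h : m + cnt Λ (K+1) ≤ cnt Λ K) :
    Multiset.replicate m K ≤ Λ.filter (fun x => ¬ K < x) := by
  rw [Multiset.le_iff_count]
  intro x
  rcases eq_or_ne x K with rfl | hne
  · rw [Multiset.count_replicate_self]
    rw [Multiset.count_filter_of_pos (p := fun y => ¬ x < y) (show ¬ x < x from lt_irrefl x)]
    have hcc := count_eq_cnt_sub (S := Λ) x
    omega
  · rw [Multiset.count_replicate, if_neg (Ne.symm hne)]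
    exact Nat.zero_le _

lemma stepH (K k n : ℕ) (hK : 1 ≤ K) :
    Set.ncard {Λ : Multiset ℕ | (∀ x ∈ Λ, 0 < x) ∧ Λ.sum = n ∧
      k + 1 ≤ cnt Λ K ∧ cnt Λ (K+1) ≤ k} =
    Set.ncard {p : Multiset ℕ × Multiset ℕ | (∀ x ∈ p.1, 0 < x) ∧ (∀ x ∈ p.2, 0 < x) ∧
      Multiset.card p.1 ≤ k ∧ (∀ x ∈ p.2, x ≤ K) ∧ p.1.sum + p.2.sum + (k+1) * K = n} := by
  have hcnt : ∀ Λ : Multiset ℕ, cnt Λ (K+1) = Multiset.card (Λ.filter (fun x => K < x)) := by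
    intro Λ
    unfold cnt
    congr 1
  have hbij : Set.BijOn
      (fun Λ : Multiset ℕ => ((Λ.filter (fun x => K < x)).map (fun x => x - K),
        Λ.filter (fun x => ¬ K < x) - Multiset.replicate (k + 1 - cnt Λ (K+1)) K))
      {Λ : Multiset ℕ | (∀ x ∈ Λ, 0 < x) ∧ Λ.sum = n ∧
        k + 1 ≤ cnt Λ K ∧ cnt Λ (K+1) ≤ k}
      {p : Multiset ℕ × Multiset ℕ | (∀ x ∈ p.1, 0 < x) ∧ (∀ x ∈ p.2, 0 < x) ∧
        Multiset.card p.1 ≤ k ∧ (∀ x ∈ p.2, x ≤ K) ∧ p.1.sum + p.2.sum + (k+1) * K = n} := by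
    apply Set.InvOn.bijOn
      (f' := fun p : Multiset ℕ × Multiset ℕ =>
        p.1.map (fun x => x + K) + Multiset.replicate (k + 1 - Multiset.card p.1) K + p.2)
    · constructor
      · -- left inverse
        rintro Λ ⟨hpos, hsum, hge, hle⟩
        show ((Λ.filter (fun x => K < x)).map (fun x => x - K)).map (fun x => x + K)
            + Multiset.replicate
                (k + 1 - Multiset.card ((Λ.filter (fun x => K < x)).map (fun x => x - K))) K
            + (Λ.filter (fun x => ¬ K < x) - Multiset.replicate (k + 1 - cnt Λ (K+1)) K) = Λ
        have hmm : Multiset.card ((Λ.filter (fun x => K < x)).map (fun x => x - K))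
            = cnt Λ (K+1) := by rw [Multiset.card_map, hcnt]
        rw [hmm, Multiset.map_map]
        have h1 : (Λ.filter (fun x => K < x)).map ((fun x => x + K) ∘ (fun x => x - K))
            = Λ.filter (fun x => K < x) := by
          conv_rhs => rw [← Multiset.map_id (Λ.filter (fun x => K < x))]
          apply Multiset.map_congr rfl
          intro x hx
          have := (Multiset.mem_filter.1 hx).2
          simp only [Function.comp, id]
          omega
        have hrep : Multiset.replicate (k + 1 - cnt Λ (K+1)) K ≤ Λ.filter (fun x => ¬ K < x) :=
          replicate_le_filter K _ (by omega)
        rw [h1, add_assoc]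
        have h2 : Multiset.replicate (k + 1 - cnt Λ (K+1)) K
            + (Λ.filter (fun x => ¬ K < x) - Multiset.replicate (k + 1 - cnt Λ (K+1)) K)
            = Λ.filter (fun x => ¬ K < x) := by
          rw [add_comm]
          exact tsub_add_cancel_of_le hrep
        rw [h2, Multiset.filter_add_not]
      · -- right inverse
        rintro p ⟨hp1, hp2, hck, hbd, hsum⟩
        set Λ' := p.1.map (fun x => x + K) + Multiset.replicate (k + 1 - Multiset.card p.1) K
          + p.2 with hL
        have hT : Λ'.filter (fun x => K < x) = p.1.map (fun x => x + K) := by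
          rw [hL, Multiset.filter_add, Multiset.filter_add]
          have h1 : (p.1.map (fun x => x + K)).filter (fun x => K < x)
              = p.1.map (fun x => x + K) := by
            rw [Multiset.filter_eq_self]
            intro y hy
            rcases Multiset.mem_map.1 hy with ⟨x, hx, rfl⟩
            have := hp1 x hx
            omega
          have h2 : (Multiset.replicate (k + 1 - Multiset.card p.1) K).filter
              (fun x => K < x) = 0 := by
            rw [Multiset.filter_eq_nil]
            intro x hx
            have := Multiset.eq_of_mem_replicate hx
            omega
          have h3 : p.2.filter (fun x => K < x) = 0 := by
            rw [Multiset.filter_eq_nil]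
            intro x hx
            have := hbd x hx
            omega
          rw [h1, h2, h3, add_zero, add_zero]
        have hN : Λ'.filter (fun x => ¬ K < x)
            = Multiset.replicate (k + 1 - Multiset.card p.1) K + p.2 := by
          rw [hL, Multiset.filter_add, Multiset.filter_add]
          have h1 : (p.1.map (fun x => x + K)).filter (fun x => ¬ K < x) = 0 := by
            rw [Multiset.filter_eq_nil]
            intro y hy
            rcases Multiset.mem_map.1 hy with ⟨x, hx, rfl⟩
            have := hp1 x hx
            omega
          have h2 : (Multiset.replicate (k + 1 - Multiset.card p.1) K).filter
              (fun x => ¬ K < x) = Multiset.replicate (k + 1 - Multiset.card p.1) K := by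
            rw [Multiset.filter_eq_self]
            intro x hx
            have := Multiset.eq_of_mem_replicate hx
            omega
          have h3 : p.2.filter (fun x => ¬ K < x) = p.2 := by
            rw [Multiset.filter_eq_self]
            intro x hx
            have := hbd x hx
            omega
          rw [h1, h2, h3, zero_add]
        have hcT : cnt Λ' (K+1) = Multiset.card p.1 := by
          rw [hcnt, hT, Multiset.card_map]
        refine Prod.ext ?_ ?_
        · show (Λ'.filter (fun x => K < x)).map (fun x => x - K) = p.1
          rw [hT, Multiset.map_map]
          conv_rhs => rw [← Multiset.map_id p.1]
          apply Multiset.map_congr rfl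
          intro x hx
          simp only [Function.comp, id]
          omega
        · show Λ'.filter (fun x => ¬ K < x)
              - Multiset.replicate (k + 1 - cnt Λ' (K+1)) K = p.2
          rw [hN, hcT]
          exact add_tsub_cancel_left _ _
    · -- MapsTo forward
      rintro Λ ⟨hpos, hsum, hge, hle⟩
      show ((Λ.filter (fun x => K < x)).map (fun x => x - K),
        Λ.filter (fun x => ¬ K < x) - Multiset.replicate (k + 1 - cnt Λ (K+1)) K) ∈ _
      simp only [Set.mem_setOf_eq]
      have hrep : Multiset.replicate (k + 1 - cnt Λ (K+1)) K ≤ Λ.filter (fun x => ¬ K < x) :=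
        replicate_le_filter K _ (by omega)
      have hsub : Λ.filter (fun x => ¬ K < x) - Multiset.replicate (k + 1 - cnt Λ (K+1)) K
          ≤ Λ.filter (fun x => ¬ K < x) := tsub_le_self
      have hsubsum : (Λ.filter (fun x => ¬ K < x)
            - Multiset.replicate (k + 1 - cnt Λ (K+1)) K).sum
          + (k + 1 - cnt Λ (K+1)) * K = (Λ.filter (fun x => ¬ K < x)).sum := by
        have := congrArg Multiset.sum (tsub_add_cancel_of_le hrep)
        rw [Multiset.sum_add, Multiset.sum_replicate, smul_eq_mul] at this
        omega
      have hsplit := Multiset.filter_add_not (fun x => K < x) Λ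
      have hsums : (Λ.filter (fun x => K < x)).sum + (Λ.filter (fun x => ¬ K < x)).sum
          = Λ.sum := by rw [← Multiset.sum_add, hsplit]
      have hmapsum := sum_map_sub_const (T := Λ.filter (fun x => K < x)) (K := K)
        (fun x hx => le_of_lt (Multiset.mem_filter.1 hx).2)
      have hcard : Multiset.card (Λ.filter (fun x => K < x)) = cnt Λ (K+1) := (hcnt Λ).symm
      refine ⟨?_, ?_, ?_, ?_, ?_⟩
      · intro x hx
        rcases Multiset.mem_map.1 hx with ⟨y, hy, rfl⟩
        have := (Multiset.mem_filter.1 hy).2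
        omega
      · intro x hx
        exact hpos x (Multiset.mem_of_mem_filter (Multiset.mem_of_le hsub hx))
      · rw [Multiset.card_map, hcard]
        exact hle
      · intro x hx
        have := (Multiset.mem_filter.1 (Multiset.mem_of_le hsub hx)).2
        omega
      · -- sum condition
        have e1 : (k + 1) * K = (k + 1 - cnt Λ (K+1)) * K + cnt Λ (K+1) * K := by
          have : k + 1 - cnt Λ (K+1) + cnt Λ (K+1) = k + 1 := by omega
          calc (k+1) * K = (k + 1 - cnt Λ (K+1) + cnt Λ (K+1)) * K := by rw [this]
            _ = _ := by ring
        have e2 : K * Multiset.card (Λ.filter (fun x => K < x)) = cnt Λ (K+1) * K := by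
          rw [hcard]; ring
        omega
    · -- MapsTo backward
      rintro p ⟨hp1, hp2, hck, hbd, hsum⟩
      show p.1.map (fun x => x + K) + Multiset.replicate (k + 1 - Multiset.card p.1) K + p.2 ∈ _
      simp only [Set.mem_setOf_eq]
      refine ⟨?_, ?_, ?_, ?_⟩
      · intro x hx
        rcases Multiset.mem_add.1 hx with hx | hx
        · rcases Multiset.mem_add.1 hx with hx | hx
          · rcases Multiset.mem_map.1 hx with ⟨y, hy, rfl⟩
            omega
          · have := Multiset.eq_of_mem_replicate hx
            omega
        · exact hp2 x hx
      · rw [Multiset.sum_add, Multiset.sum_add, sum_map_add_const, Multiset.sum_replicate,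
          smul_eq_mul]
        have e1 : (k + 1 - Multiset.card p.1) * K + Multiset.card p.1 * K = (k+1) * K := by
          have : k + 1 - Multiset.card p.1 + Multiset.card p.1 = k + 1 := by omega
          calc (k + 1 - Multiset.card p.1) * K + Multiset.card p.1 * K
              = (k + 1 - Multiset.card p.1 + Multiset.card p.1) * K := by ring
            _ = _ := by rw [this]
        have e2 : K * Multiset.card p.1 = Multiset.card p.1 * K := by ring
        omega
      · -- cnt at K : ≥ k+1
        have h1 : cnt (p.1.map (fun x => x + K) + Multiset.replicate (k + 1 - Multiset.card p.1) K
              + p.2) K ≥ cnt (p.1.map (fun x => x + K)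
                + Multiset.replicate (k + 1 - Multiset.card p.1) K) K := by
          unfold cnt
          rw [Multiset.filter_add]
          rw [Multiset.card_add]
          omega
        have h2 : cnt (p.1.map (fun x => x + K)
            + Multiset.replicate (k + 1 - Multiset.card p.1) K) K
            = Multiset.card p.1 + (k + 1 - Multiset.card p.1) := by
          unfold cnt
          rw [Multiset.filter_add, Multiset.card_add]
          congr 1
          · have : (p.1.map (fun x => x + K)).filter (fun x => K ≤ x)
                = p.1.map (fun x => x + K) := by
              rw [Multiset.filter_eq_self]
              intro y hy
              rcases Multiset.mem_map.1 hy with ⟨x, hx, rfl⟩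
              omega
            rw [this, Multiset.card_map]
          · have : (Multiset.replicate (k + 1 - Multiset.card p.1) K).filter (fun x => K ≤ x)
                = Multiset.replicate (k + 1 - Multiset.card p.1) K := by
              rw [Multiset.filter_eq_self]
              intro x hx
              have := Multiset.eq_of_mem_replicate hx
              omega
            rw [this, Multiset.card_replicate]
        omega
      · -- cnt at K+1 ≤ k
        have hT : (p.1.map (fun x => x + K) + Multiset.replicate (k + 1 - Multiset.card p.1) K
              + p.2).filter (fun x => K < x) = p.1.map (fun x => x + K) := by
            rw [Multiset.filter_add, Multiset.filter_add]
            have h1 : (p.1.map (fun x => x + K)).filter (fun x => K < x)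
                = p.1.map (fun x => x + K) := by
              rw [Multiset.filter_eq_self]
              intro y hy
              rcases Multiset.mem_map.1 hy with ⟨x, hx, rfl⟩
              have := hp1 x hx
              omega
            have h2 : (Multiset.replicate (k + 1 - Multiset.card p.1) K).filter
                (fun x => K < x) = 0 := by
              rw [Multiset.filter_eq_nil]
              intro x hx
              have := Multiset.eq_of_mem_replicate hx
              omega
            have h3 : p.2.filter (fun x => K < x) = 0 := by
              rw [Multiset.filter_eq_nil]
              intro x hx
              have := hbd x hx
              omega
            rw [h1, h2, h3, add_zero, add_zero]
        rw [hcnt, hT, Multiset.card_map]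
        exact hck
  rw [← hbij.image_eq, Set.ncard_image_of_injOn hbij.injOn]

lemma stepI (K : ℕ) (Q : Multiset ℕ → ℕ → Prop) :
    Set.ncard {p : Multiset ℕ × Multiset ℕ | (∀ x ∈ p.1, 0 < x) ∧ (∀ x ∈ p.2, 0 < x) ∧
      Q p.1 p.2.sum ∧ (∀ x ∈ p.2, x ≤ K)} =
    Set.ncard {p : Multiset ℕ × Multiset ℕ | (∀ x ∈ p.1, 0 < x) ∧ (∀ x ∈ p.2, 0 < x) ∧
      Q p.1 p.2.sum ∧ Multiset.card p.2 ≤ K} := by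
  have hbij : Set.BijOn (fun p : Multiset ℕ × Multiset ℕ => (p.1, conj p.2))
      {p : Multiset ℕ × Multiset ℕ | (∀ x ∈ p.1, 0 < x) ∧ (∀ x ∈ p.2, 0 < x) ∧
        Q p.1 p.2.sum ∧ (∀ x ∈ p.2, x ≤ K)}
      {p : Multiset ℕ × Multiset ℕ | (∀ x ∈ p.1, 0 < x) ∧ (∀ x ∈ p.2, 0 < x) ∧
        Q p.1 p.2.sum ∧ Multiset.card p.2 ≤ K} := by
    apply Set.InvOn.bijOn (f' := fun p : Multiset ℕ × Multiset ℕ => (p.1, conj p.2))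
    · constructor
      · rintro p ⟨_, hpos, _, _⟩
        show (p.1, conj (conj p.2)) = p
        rw [conj_conj hpos]
      · rintro p ⟨_, hpos, _, _⟩
        show (p.1, conj (conj p.2)) = p
        rw [conj_conj hpos]
    · rintro p ⟨h1, h2, h3, h4⟩
      refine ⟨h1, conj_pos, ?_, card_conj_le_iff.2 h4⟩
      show Q p.1 (conj p.2).sum
      rw [sum_conj]
      exact h3
    · rintro p ⟨h1, h2, h3, h4⟩
      refine ⟨h1, conj_pos, ?_, ?_⟩
      · show Q p.1 (conj p.2).sum
        rw [sum_conj]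
        exact h3
      · exact (mem_conj_le_iff h2).2 h4
  rw [← hbij.image_eq, Set.ncard_image_of_injOn hbij.injOn]

lemma stepJ (K k E n : ℕ) (hK : 1 ≤ K) :
    Set.ncard {p : Multiset ℕ × Multiset ℕ | (∀ x ∈ p.1, 0 < x) ∧ (∀ x ∈ p.2, 0 < x) ∧
      (Multiset.card p.1 ≤ k ∧ p.1.sum + p.2.sum + E = n) ∧ Multiset.card p.2 ≤ K} =
    Set.ncard {q : Multiset ℕ × Multiset ℕ | (∀ x ∈ q.1, 0 < x) ∧ (∀ x ∈ q.2, 0 < x) ∧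
      Multiset.card q.1 = K ∧ K + Multiset.card q.2 ≤ K + k ∧
      (q.1.sum + q.2.sum) + E = n + K} := by
  have hbij : Set.BijOn (fun p : Multiset ℕ × Multiset ℕ =>
      (p.2.map (fun x => x + 1) + Multiset.replicate (K - Multiset.card p.2) 1, p.1))
      {p : Multiset ℕ × Multiset ℕ | (∀ x ∈ p.1, 0 < x) ∧ (∀ x ∈ p.2, 0 < x) ∧
        (Multiset.card p.1 ≤ k ∧ p.1.sum + p.2.sum + E = n) ∧ Multiset.card p.2 ≤ K}
      {q : Multiset ℕ × Multiset ℕ | (∀ x ∈ q.1, 0 < x) ∧ (∀ x ∈ q.2, 0 < x) ∧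
        Multiset.card q.1 = K ∧ K + Multiset.card q.2 ≤ K + k ∧
        (q.1.sum + q.2.sum) + E = n + K} := by
    apply Set.InvOn.bijOn (f' := fun q : Multiset ℕ × Multiset ℕ =>
      (q.2, (q.1.filter (fun x => 1 < x)).map (fun x => x - 1)))
    · constructor
      · -- left inverse
        rintro p ⟨hp1, hp2, _, _⟩
        refine Prod.ext rfl ?_
        show (((p.2.map (fun x => x + 1) + Multiset.replicate (K - Multiset.card p.2) 1).filter
            (fun x => 1 < x)).map (fun x => x - 1)) = p.2
        rw [Multiset.filter_add]
        have h1 : (p.2.map (fun x => x + 1)).filter (fun x => 1 < x) = p.2.map (fun x => x + 1) := by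
          rw [Multiset.filter_eq_self]
          intro y hy
          rcases Multiset.mem_map.1 hy with ⟨x, hx, rfl⟩
          have := hp2 x hx
          omega
        have h2 : (Multiset.replicate (K - Multiset.card p.2) 1).filter (fun x => 1 < x) = 0 := by
          rw [Multiset.filter_eq_nil]
          intro x hx
          have := Multiset.eq_of_mem_replicate hx
          omega
        rw [h1, h2, add_zero, Multiset.map_map]
        conv_rhs => rw [← Multiset.map_id p.2]
        apply Multiset.map_congr rfl
        intro x hx
        simp only [Function.comp, id]
        omega
      · -- right inverse
        rintro q ⟨hq1, hq2, hcard, hbd, hsum⟩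
        refine Prod.ext ?_ rfl
        show ((q.1.filter (fun x => 1 < x)).map (fun x => x - 1)).map (fun x => x + 1)
            + Multiset.replicate
              (K - Multiset.card ((q.1.filter (fun x => 1 < x)).map (fun x => x - 1))) 1 = q.1
        rw [Multiset.map_map, Multiset.card_map]
        have h1 : (q.1.filter (fun x => 1 < x)).map ((fun x => x + 1) ∘ (fun x => x - 1))
            = q.1.filter (fun x => 1 < x) := by
          conv_rhs => rw [← Multiset.map_id (q.1.filter (fun x => 1 < x))]
          apply Multiset.map_congr rfl
          intro x hx
          have := (Multiset.mem_filter.1 hx).2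
          simp only [Function.comp, id]
          omega
        rw [h1]
        have h2 : q.1.filter (fun x => ¬ 1 < x) = Multiset.replicate
            (Multiset.card q.1 - Multiset.card (q.1.filter (fun x => 1 < x))) 1 := by
          rw [Multiset.eq_replicate]
          constructor
          · have := Multiset.filter_add_not (fun x => 1 < x) q.1
            have hc := congrArg Multiset.card this
            rw [Multiset.card_add] at hc
            omega
          · intro b hb
            have hb1 := (Multiset.mem_filter.1 hb).2
            have hb2 := hq1 b (Multiset.mem_of_mem_filter hb)
            omega
        have h3 : K - Multiset.card (q.1.filter (fun x => 1 < x))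
            = Multiset.card q.1 - Multiset.card (q.1.filter (fun x => 1 < x)) := by
          rw [hcard]
        rw [h3, ← h2, Multiset.filter_add_not]
    · -- MapsTo forward
      rintro p ⟨hp1, hp2, ⟨hck, hsum⟩, hcK⟩
      show (p.2.map (fun x => x + 1) + Multiset.replicate (K - Multiset.card p.2) 1, p.1) ∈ _
      simp only [Set.mem_setOf_eq]
      refine ⟨?_, hp1, ?_, ?_, ?_⟩
      · intro x hx
        rcases Multiset.mem_add.1 hx with hx | hx
        · rcases Multiset.mem_map.1 hx with ⟨y, hy, rfl⟩
          omega
        · have := Multiset.eq_of_mem_replicate hx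
          omega
      · rw [Multiset.card_add, Multiset.card_map, Multiset.card_replicate]
        omega
      · omega
      · rw [Multiset.sum_add, Multiset.sum_replicate, smul_eq_mul, mul_one, sum_map_add_const]
        have : 1 * Multiset.card p.2 = Multiset.card p.2 := by ring
        omega
    · -- MapsTo backward
      rintro q ⟨hq1, hq2, hcard, hbd, hsum⟩
      show (q.2, (q.1.filter (fun x => 1 < x)).map (fun x => x - 1)) ∈ _
      simp only [Set.mem_setOf_eq]
      have hsplit := Multiset.filter_add_not (fun x => 1 < x) q.1
      have hcs := congrArg Multiset.card hsplit
      rw [Multiset.card_add] at hcs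
      have hss := congrArg Multiset.sum hsplit
      rw [Multiset.sum_add] at hss
      have hones : (q.1.filter (fun x => ¬ 1 < x)).sum = Multiset.card (q.1.filter (fun x => ¬ 1 < x)) := by
        have : ∀ b ∈ q.1.filter (fun x => ¬ 1 < x), b = 1 := by
          intro b hb
          have hb1 := (Multiset.mem_filter.1 hb).2
          have hb2 := hq1 b (Multiset.mem_of_mem_filter hb)
          omega
        calc (q.1.filter (fun x => ¬ 1 < x)).sum
            = (Multiset.replicate (Multiset.card (q.1.filter (fun x => ¬ 1 < x))) 1).sum := by
              congr 1
              rw [Multiset.eq_replicate]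
              exact ⟨rfl, this⟩
          _ = _ := by rw [Multiset.sum_replicate, smul_eq_mul, mul_one]
      have hmapsum := sum_map_sub_const (T := q.1.filter (fun x => 1 < x)) (K := 1)
        (fun x hx => by have := (Multiset.mem_filter.1 hx).2; omega)
      refine ⟨hq2, ?_, ?_, ?_⟩
      · intro x hx
        rcases Multiset.mem_map.1 hx with ⟨y, hy, rfl⟩
        have := (Multiset.mem_filter.1 hy).2
        omega
      · exact ⟨by omega, by omega⟩
      · rw [Multiset.card_map]
        omega
  rw [← hbij.image_eq, Set.ncard_image_of_injOn hbij.injOn]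

/-! ### RHS set conversion -/

lemma rhs_conv_even (a c n : ℕ) (hc : 1 ≤ c) :
    {L : List ℕ | IsPartitionList L ∧ L.sum = n ∧
      (c + c + 1) / 2 + a ≤ entry L ((c + c + 1) / 2) ∧
      entry L ((c + c + 1) / 2 + 1) < (c + c + 1) / 2 + 1 + a ∧
      (Even (c + c) → a + (c + c) / 2 < entry L ((c + c) / 2)) ∧
      (Odd (c + c) → entry L ((c + c + 1) / 2) = a + (c + c + 1) / 2)} =
    {L : List ℕ | L.Pairwise (· ≥ ·) ∧ ((∀ x ∈ (↑L : Multiset ℕ), 0 < x) ∧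
      (↑L : Multiset ℕ).sum = n ∧ cnt (↑L) (a + c + 1) = c)} := by
  have h2 : (c + c + 1) / 2 = c := by omega
  have h3 : (c + c) / 2 = c := by omega
  have heb : Even (c + c) := ⟨c, rfl⟩
  have hob : ¬ Odd (c + c) := by rw [Nat.odd_iff]; omega
  ext L
  simp only [Set.mem_setOf_eq, h2, h3, IsPartitionList, Multiset.mem_coe, Multiset.sum_coe]
  constructor
  · rintro ⟨⟨hsort, hpos⟩, hsum, h1, hlt, hev, _⟩
    have hev' := hev heb
    refine ⟨hsort, hpos, hsum, ?_⟩
    have hge : c ≤ cnt (↑L) (a+c+1) := (entry_le_iff hsort hc (by omega)).1 (by omega)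
    have hle : ¬ (c+1 ≤ cnt (↑L) (a+c+1)) := fun hcon => by
      have := (entry_le_iff hsort (by omega : 1 ≤ c+1) (by omega : 1 ≤ a+c+1)).2 hcon
      omega
    omega
  · rintro ⟨hsort, hpos, hsum, hcnt⟩
    have hge : a + c + 1 ≤ entry L c := (entry_le_iff hsort hc (by omega)).2 (by omega)
    have hlt : ¬ (a + c + 1 ≤ entry L (c+1)) := fun hcon => by
      have := (entry_le_iff hsort (by omega : 1 ≤ c+1) (by omega : 1 ≤ a+c+1)).1 hcon
      omega
    exact ⟨⟨hsort, hpos⟩, hsum, by omega, by omega, fun _ => by omega,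
      fun ho => absurd ho hob⟩

lemma rhs_conv_odd (a k n : ℕ) :
    {L : List ℕ | IsPartitionList L ∧ L.sum = n ∧
      (2 * k + 1 + 1) / 2 + a ≤ entry L ((2 * k + 1 + 1) / 2) ∧
      entry L ((2 * k + 1 + 1) / 2 + 1) < (2 * k + 1 + 1) / 2 + 1 + a ∧
      (Even (2 * k + 1) → a + (2 * k + 1) / 2 < entry L ((2 * k + 1) / 2)) ∧
      (Odd (2 * k + 1) → entry L ((2 * k + 1 + 1) / 2) = a + (2 * k + 1 + 1) / 2)} =
    {L : List ℕ | L.Pairwise (· ≥ ·) ∧ ((∀ x ∈ (↑L : Multiset ℕ), 0 < x) ∧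
      (↑L : Multiset ℕ).sum = n ∧
      (k + 1 ≤ cnt (↑L) (a + k + 1) ∧ cnt (↑L) (a + k + 1 + 1) ≤ k))} := by
  have h2 : (2 * k + 1 + 1) / 2 = k + 1 := by omega
  have hob : Odd (2 * k + 1) := ⟨k, by ring⟩
  ext L
  simp only [Set.mem_setOf_eq, h2, IsPartitionList, Multiset.mem_coe, Multiset.sum_coe]
  constructor
  · rintro ⟨⟨hsort, hpos⟩, hsum, h1, hlt, _, hodd⟩
    have heq := hodd hob
    refine ⟨hsort, hpos, hsum, ?_, ?_⟩
    · exact (entry_le_iff hsort (by omega) (by omega)).1 (by omega)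
    · by_contra hcon
      push_neg at hcon
      have := (entry_le_iff hsort (by omega : 1 ≤ k+1) (by omega : 1 ≤ a+k+1+1)).2 hcon
      omega
  · rintro ⟨hsort, hpos, hsum, hge, hle⟩
    have e1 : a + k + 1 ≤ entry L (k+1) :=
      (entry_le_iff hsort (by omega) (by omega)).2 hge
    have e2 : ¬ (a + k + 1 + 1 ≤ entry L (k+1)) := fun hcon => by
      have := (entry_le_iff hsort (by omega : 1 ≤ k+1) (by omega : 1 ≤ a+k+1+1)).1 hcon
      omega
    have e3 : ¬ (a + k + 1 + 1 ≤ entry L (k+1+1)) := fun hcon => by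
      have := (entry_le_iff hsort (by omega : 1 ≤ k+1+1) (by omega : 1 ≤ a+k+1+1)).1 hcon
      omega
    exact ⟨⟨hsort, hpos⟩, hsum, by omega, by omega,
      fun he => absurd he (by rw [Nat.even_iff]; omega), fun _ => by omega⟩

end ABP

/-- Theorem 2.5: the number of `(a,b)`-sequences `Δ` with `|Δ| = 2n` equals the number of
partitions of `n` whose `a`-Durfee rectangle has size `⌈b/2⌉ × (⌈b/2⌉ + a)`, with
`λ_{b/2} > a + b/2` if `b` is even and `λ_{(b+1)/2} = a + (b+1)/2` if `b` is odd. -/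
theorem abseq_count_eq_pab_count (a b n : ℕ) (hb : 1 ≤ b) :
    Set.ncard {d : List ℕ | IsABSeq a b d ∧ d.sum = 2 * n} =
    Set.ncard {L : List ℕ | IsPartitionList L ∧ L.sum = n ∧
      (b + 1) / 2 + a ≤ entry L ((b + 1) / 2) ∧
      entry L ((b + 1) / 2 + 1) < (b + 1) / 2 + 1 + a ∧
      (Even b → a + b / 2 < entry L (b / 2)) ∧
      (Odd b → entry L ((b + 1) / 2) = a + (b + 1) / 2)} := by
  rcases Nat.even_or_odd b with ⟨c, hc⟩ | ⟨k, hk⟩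
  · -- even case : b = c + c
    subst hc
    have hc1 : 1 ≤ c := by omega
    have hA : ((c : ℕ) : ℤ) = -((-1 : ℤ))^(c+c) * ABP.asum (ABP.pre a (c+c)) := by
      have h1 := (ABP.asum_pre a c).1
      rw [show 2*c = c + c from by ring] at h1
      rw [h1, Even.neg_one_pow ⟨c, rfl⟩]
      ring
    rw [ABP.stepBC a (c+c) n c hb hA,
        ABP.stepD (a+(c+c)) c ((ABP.pre a (c+c)).sum) (2*n),
        ABP.stepE (a+(c+c)) c ((ABP.pre a (c+c)).sum) (2*n)]
    rw [ABP.rhs_conv_even a c n hc1,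
        ABP.ncard_sorted_eq (fun X => (∀ x ∈ X, 0 < x) ∧ X.sum = n ∧ ABP.cnt X (a+c+1) = c),
        ABP.stepG (a+c) c n (by omega)]
    have hre : {p : Multiset ℕ × Multiset ℕ | (∀ x ∈ p.1, 0 < x) ∧ (∀ x ∈ p.2, 0 < x) ∧
        Multiset.card p.1 = c ∧ (∀ x ∈ p.2, x ≤ a+c) ∧ p.1.sum + p.2.sum + c * (a+c) = n} =
        {p : Multiset ℕ × Multiset ℕ | (∀ x ∈ p.1, 0 < x) ∧ (∀ x ∈ p.2, 0 < x) ∧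
        (Multiset.card p.1 = c ∧ p.1.sum + p.2.sum + c * (a+c) = n) ∧ (∀ x ∈ p.2, x ≤ a+c)} := by
      ext p
      simp only [Set.mem_setOf_eq]
      tauto
    rw [hre, ABP.stepI (a+c) (fun r s => Multiset.card r = c ∧ r.sum + s + c * (a+c) = n)]
    have hS : (ABP.pre a (c+c)).sum = 2*(c*(a+c)) + c := by
      have h1 := ABP.sum_pre a (c+c)
      nlinarith [h1]
    obtain ⟨E, hE⟩ : ∃ E, c * (a+c) = E := ⟨_, rfl⟩
    rw [hE] at hS
    rw [hE]
    congr 1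
    ext p
    simp only [Set.mem_setOf_eq]
    constructor
    · rintro ⟨h1, h2, h3, h4, h5⟩
      exact ⟨h1, h2, ⟨h3, by omega⟩, by omega⟩
    · rintro ⟨h1, h2, ⟨h3, h4⟩, h5⟩
      exact ⟨h1, h2, h3, by omega, by omega⟩
  · -- odd case : b = 2k+1
    subst hk
    have hA : ((a + k + 1 : ℕ) : ℤ) = -((-1 : ℤ))^(2*k+1) * ABP.asum (ABP.pre a (2*k+1)) := by
      have h1 := (ABP.asum_pre a k).2
      rw [h1, Odd.neg_one_pow ⟨k, by ring⟩]
      push_cast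
      ring
    rw [ABP.stepBC a (2*k+1) n (a+k+1) hb hA,
        ABP.stepD (a+(2*k+1)) (a+k+1) ((ABP.pre a (2*k+1)).sum) (2*n),
        ABP.stepE (a+(2*k+1)) (a+k+1) ((ABP.pre a (2*k+1)).sum) (2*n)]
    rw [ABP.rhs_conv_odd a k n,
        ABP.ncard_sorted_eq (fun X => (∀ x ∈ X, 0 < x) ∧ X.sum = n ∧
          (k + 1 ≤ ABP.cnt X (a+k+1) ∧ ABP.cnt X (a+k+1+1) ≤ k)),
        ABP.stepH (a+k+1) k n (by omega)]
    have hre : {p : Multiset ℕ × Multiset ℕ | (∀ x ∈ p.1, 0 < x) ∧ (∀ x ∈ p.2, 0 < x) ∧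
        Multiset.card p.1 ≤ k ∧ (∀ x ∈ p.2, x ≤ a+k+1) ∧
        p.1.sum + p.2.sum + (k+1) * (a+k+1) = n} =
        {p : Multiset ℕ × Multiset ℕ | (∀ x ∈ p.1, 0 < x) ∧ (∀ x ∈ p.2, 0 < x) ∧
        (Multiset.card p.1 ≤ k ∧ p.1.sum + p.2.sum + (k+1) * (a+k+1) = n) ∧
        (∀ x ∈ p.2, x ≤ a+k+1)} := by
      ext p
      simp only [Set.mem_setOf_eq]
      tauto
    rw [hre, ABP.stepI (a+k+1)
        (fun r s => Multiset.card r ≤ k ∧ r.sum + s + (k+1) * (a+k+1) = n),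
      ABP.stepJ (a+k+1) k ((k+1) * (a+k+1)) n (by omega)]
    have hS : (ABP.pre a (2*k+1)).sum + (a+k+1) = 2*((k+1)*(a+k+1)) := by
      have h1 := ABP.sum_pre a (2*k+1)
      nlinarith [h1]
    obtain ⟨E, hE⟩ : ∃ E, (k+1) * (a+k+1) = E := ⟨_, rfl⟩
    rw [hE] at hS
    rw [hE]
    congr 1
    ext p
    simp only [Set.mem_setOf_eq]
    constructor
    · rintro ⟨h1, h2, h3, h4, h5⟩
      exact ⟨h1, h2, h3, by omega, by omega⟩
    · rintro ⟨h1, h2, h3, h4, h5⟩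
      exact ⟨h1, h2, h3, by omega, by omega⟩
end

section
/- For all integers a ≥ 0, k ≥ 1, and n ≥ 0, the number of (a, 2k−1)-sequences Δ with |Δ| = 2n equals the number of ordered pairs (μ, ν) of partitions such that every part of μ is at most k − 1, every part of ν is at most a + k, and |μ| + |ν| + k(a + k) = n. -/
def cnt (e : List ℕ) (j : ℕ) : ℕ := e.countP (fun x => decide (j + 1 ≤ x))

def conjL (e : List ℕ) : List ℕ := (List.range (e.headD 0)).map (cnt e)

lemma length_conjL (e : List ℕ) : (conjL e).length = e.headD 0 := by simp [conjL]

lemma head_le_of_sorted {e : List ℕ} (he : e.Pairwise (· ≥ ·)) {x : ℕ} (hx : x ∈ e) :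
    x ≤ e.headD 0 := by
  cases e with
  | nil => simp at hx
  | cons y ys =>
    rcases List.mem_cons.mp hx with h | h
    · simp [h]
    · exact (List.rel_of_pairwise_cons he h)

lemma galois {e : List ℕ} (he : e.Pairwise (· ≥ ·)) (i t : ℕ) (ht : 1 ≤ t) :
    t ≤ e.getD i 0 ↔ i + 1 ≤ e.countP (fun x => decide (t ≤ x)) := by
  induction e generalizing i with
  | nil => simp [List.getD]; omega
  | cons x xs ih =>
    rw [List.countP_cons]
    by_cases hx : t ≤ x
    · have hd : decide (t ≤ x) = true := by simpa using hx
      rw [hd, if_pos rfl]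
      cases i with
      | zero =>
        simp only [List.getD_cons_zero]
        constructor
        · intro _; omega
        · intro _; exact hx
      | succ m =>
        rw [List.getD_cons_succ, ih (List.pairwise_cons.mp he).2 m]
        omega
    · have h0 : xs.countP (fun y => decide (t ≤ y)) = 0 := by
        rw [List.countP_eq_zero]
        intro y hy
        have : y ≤ x := (List.pairwise_cons.mp he).1 y hy
        simp; omega
      have hd : decide (t ≤ x) = false := by simpa using hx
      rw [hd, h0]
      simp only [Bool.false_eq_true, if_false]
      constructor
      · intro h
        exfalso
        cases i with
        | zero => rw [List.getD_cons_zero] at h; omega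
        | succ m =>
          rw [List.getD_cons_succ] at h
          rcases Nat.lt_or_ge m xs.length with hm | hm
          · have hmem : xs.getD m 0 ∈ xs := by
              rw [List.getD_eq_getElem _ _ hm]; exact List.getElem_mem _
            have := (List.pairwise_cons.mp he).1 _ hmem
            omega
          · rw [List.getD_eq_default _ _ hm] at h; omega
      · omega

lemma countP_range_le (N m : ℕ) :
    (List.range N).countP (fun j => decide (j + 1 ≤ m)) = min m N := by
  induction N with
  | zero => simp
  | succ N ih =>
    rw [List.range_succ, List.countP_append, ih]
    simp only [List.countP_singleton]
    by_cases h : N + 1 ≤ m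
    · have : decide (N + 1 ≤ m) = true := by simpa using h
      rw [this]; simp; omega
    · have : decide (N + 1 ≤ m) = false := by simpa using h
      rw [this]; simp; omega

lemma head_conjL {e : List ℕ} (hpos : ∀ x ∈ e, 0 < x) :
    (conjL e).headD 0 = e.length := by
  cases e with
  | nil => rfl
  | cons y ys =>
    have hy : 0 < y := hpos y (by simp)
    obtain ⟨m, rfl⟩ : ∃ m, y = m + 1 := ⟨y - 1, by omega⟩
    show ((List.range (m + 1)).map (cnt ((m + 1) :: ys))).headD 0 = _
    rw [List.range_succ_eq_map]
    simp only [List.map_cons, List.headD_cons]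
    rw [cnt, List.countP_eq_length_filter,
      List.filter_eq_self.mpr (fun x hx => by have := hpos x hx; simp; omega)]

lemma conjL_conjL {e : List ℕ} (he : e.Pairwise (· ≥ ·)) (hpos : ∀ x ∈ e, 0 < x) :
    conjL (conjL e) = e := by
  apply List.ext_getElem
  · rw [length_conjL, head_conjL hpos]
  · intro i h1 h2
    have key : (conjL (conjL e))[i] = cnt (conjL e) i := by
      simp [conjL]
    rw [key]
    unfold cnt conjL
    rw [List.countP_map]
    rw [List.countP_congr (q := fun j => decide (j + 1 ≤ e[i])) ?_]
    · rw [countP_range_le]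
      have : e[i] ≤ e.headD 0 := head_le_of_sorted he (List.getElem_mem _)
      omega
    · intro j _
      simp only [Function.comp, decide_eq_true_eq]
      have := galois he i (j + 1) (by omega)
      rw [List.getD_eq_getElem _ _ h2] at this
      exact this.symm


def altP : List ℕ → ℤ
  | [] => 0
  | x :: e => (x : ℤ) - altP e

def preList (a b : ℕ) : List ℕ := (List.range b).map (fun i => a + i + 1)

def oddP (x : ℕ) : Bool := decide (x % 2 = 1)


lemma cnt_anti (e : List ℕ) : Antitone (cnt e) := by
  apply antitone_nat_of_succ_le
  intro j
  apply List.countP_mono_left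
  intro x _ h
  simp only [decide_eq_true_eq] at *
  omega

lemma conjL_sorted (e : List ℕ) : (conjL e).Pairwise (· ≥ ·) := by
  unfold conjL
  rw [List.pairwise_map]
  exact List.Pairwise.imp_of_mem (fun {a b} _ _ h => cnt_anti e (le_of_lt h))
    (List.pairwise_lt_range (n := _))

lemma conjL_pos (e : List ℕ) {x : ℕ} (hx : x ∈ conjL e) : 0 < x := by
  unfold conjL at hx
  rw [List.mem_map] at hx
  obtain ⟨j, hj, rfl⟩ := hx
  rw [List.mem_range] at hj
  rw [cnt, List.countP_pos_iff]
  cases e with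
  | nil => simp at hj
  | cons y ys =>
    simp only [List.headD_cons] at hj
    exact ⟨y, List.mem_cons_self, by simp; omega⟩

lemma countP_eq_card (N : ℕ) (p : ℕ → Bool) :
    (List.range N).countP p = ((Finset.range N).filter (fun j => p j)).card := by
  induction N with
  | zero => simp
  | succ N ih =>
    rw [List.range_succ, List.countP_append, Finset.range_add_one, ih]
    by_cases h : p N
    · rw [Finset.filter_insert, if_pos h, Finset.card_insert_of_notMem (by simp)]
      simp [h]
    · rw [Finset.filter_insert, if_neg h]
      simp [h]

lemma listsum_range (N : ℕ) (f : ℕ → ℕ) :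
    ((List.range N).map f).sum = ∑ j ∈ Finset.range N, f j := by
  induction N with
  | zero => simp
  | succ N ih =>
    rw [List.range_succ, List.map_append, List.sum_append, Finset.sum_range_succ, ih]; simp

lemma countP_range_le' (N m : ℕ) :
    (List.range N).countP (fun j => decide (j + 1 ≤ m)) = min m N := by
  induction N with
  | zero => simp
  | succ N ih =>
    rw [List.range_succ, List.countP_append, ih]
    simp only [List.countP_singleton]
    by_cases h : N + 1 ≤ m
    · have hd : decide (N + 1 ≤ m) = true := by simpa using h
      rw [hd]; simp; omega
    · have hd : decide (N + 1 ≤ m) = false := by simpa using h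
      rw [hd]; simp; omega

lemma cnt_eq_zero {e : List ℕ} {j : ℕ} (h : ∀ x ∈ e, x ≤ j) : cnt e j = 0 := by
  rw [cnt, List.countP_eq_zero]
  intro x hx
  have := h x hx
  simp; omega

/-- generalized conjugate-sum -/

lemma sum_cnt_range (e : List ℕ) (N : ℕ) (h : ∀ x ∈ e, x ≤ N) :
    ∑ j ∈ Finset.range N, cnt e j = e.sum := by
  induction e with
  | nil => simp [cnt]
  | cons x e ih =>
    have hx : x ≤ N := h x (by simp)
    have hcons : ∀ j, cnt (x :: e) j = cnt e j + if j + 1 ≤ x then 1 else 0 := by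
      intro j
      rw [cnt, List.countP_cons, cnt]
      by_cases hj : j + 1 ≤ x
      · have : decide (j + 1 ≤ x) = true := by simpa using hj
        rw [this, if_pos rfl, if_pos hj]
      · have : decide (j + 1 ≤ x) = false := by simpa using hj
        rw [this, if_neg hj]
        simp
    simp only [hcons]
    rw [Finset.sum_add_distrib, ih (fun y hy => h y (by simp [hy]))]
    have : ∑ j ∈ Finset.range N, (if j + 1 ≤ x then (1:ℕ) else 0)
        = ((Finset.range N).filter (fun j => j + 1 ≤ x)).card := by
      simp [Finset.sum_boole]
    rw [this]
    have : ((Finset.range N).filter (fun j => j + 1 ≤ x)).card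
        = (List.range N).countP (fun j => decide (j + 1 ≤ x)) := by
      rw [countP_eq_card]; simp
    rw [this, countP_range_le']
    simp [List.sum_cons]
    omega

lemma conjL_sum {e : List ℕ} (he : e.Pairwise (· ≥ ·)) : (conjL e).sum = e.sum := by
  rw [conjL, listsum_range, sum_cnt_range]
  intro x hx
  cases e with
  | nil => simp at hx
  | cons y ys =>
    rcases List.mem_cons.mp hx with h | h
    · simp [h]
    · exact List.rel_of_pairwise_cons he h


lemma oddCnt_conjL_le (e : List ℕ) : (conjL e).countP oddP ≤ e.headD 0 := by
  calc (conjL e).countP oddP ≤ (conjL e).length := List.countP_le_length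
  _ = e.headD 0 := by simp [conjL]

lemma oddCnt_conjL_cons {x : ℕ} {e : List ℕ} (he : e.Pairwise (· ≥ ·))
    (hx : ∀ y ∈ e, y ≤ x) :
    (conjL (x :: e)).countP oddP = x - (conjL e).countP oddP := by
  have he1 : e.headD 0 ≤ x := by
    cases e with
    | nil => simp
    | cons y ys => exact hx y (by simp)
  have hcnt : ∀ j, j < x → cnt (x :: e) j = cnt e j + 1 := by
    intro j hj
    rw [cnt, List.countP_cons, cnt]
    have : decide (j + 1 ≤ x) = true := by simp; omega
    rw [this, if_pos rfl]
  have step1 : (conjL (x :: e)).countP oddP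
      = ((Finset.range x).filter (fun j => ¬ (cnt e j % 2 = 1))).card := by
    rw [conjL, List.headD_cons, List.countP_map, countP_eq_card]
    congr 1
    apply Finset.filter_congr
    intro j hj
    rw [Finset.mem_range] at hj
    simp only [Function.comp, oddP, hcnt j hj, decide_eq_true_eq]
    constructor
    · intro h; omega
    · intro h; omega
  have step2 : ((Finset.range x).filter (fun j => ¬ (cnt e j % 2 = 1))).card
      = x - ((Finset.range x).filter (fun j => cnt e j % 2 = 1)).card := by
    have h := Finset.card_filter_add_card_filter_not
      (s := Finset.range x) (p := fun j => cnt e j % 2 = 1)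
    rw [Finset.card_range] at h
    have : (Finset.filter (fun a => ¬(fun j => cnt e j % 2 = 1) a) (Finset.range x)).card
        = ((Finset.range x).filter (fun j => ¬ (cnt e j % 2 = 1))).card := rfl
    omega
  have step3 : ((Finset.range x).filter (fun j => cnt e j % 2 = 1)).card
      = ((Finset.range (e.headD 0)).filter (fun j => cnt e j % 2 = 1)).card := by
    congr 1
    apply Finset.ext
    intro j
    simp only [Finset.mem_filter, Finset.mem_range]
    constructor
    · rintro ⟨hj, hodd⟩
      refine ⟨?_, hodd⟩
      by_contra hge
      push_neg at hge
      have : cnt e j = 0 := cnt_eq_zero (fun y hy =>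
        le_trans (head_le_of_sorted he hy) hge)
      omega
    · rintro ⟨hj, hodd⟩
      exact ⟨lt_of_lt_of_le hj he1, hodd⟩
  have step4 : ((Finset.range (e.headD 0)).filter (fun j => cnt e j % 2 = 1)).card
      = (conjL e).countP oddP := by
    rw [conjL, List.countP_map, countP_eq_card]
    congr 1
    apply Finset.filter_congr
    intro j _
    simp [Function.comp, oddP]
  rw [step1, step2, step3, step4]

lemma oddCnt_conjL {e : List ℕ} (he : e.Pairwise (· ≥ ·)) :
    ((conjL e).countP oddP : ℤ) = altP e := by
  induction e with
  | nil => simp [conjL, altP]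
  | cons x e ih =>
    obtain ⟨hx, he'⟩ := List.pairwise_cons.mp he
    rw [oddCnt_conjL_cons he' hx]
    have hle : (conjL e).countP oddP ≤ x :=
      le_trans (oddCnt_conjL_le e) (by
        cases e with
        | nil => simp
        | cons y ys => exact hx y (by simp))
    rw [altP, ← ih he']
    push_cast [Nat.cast_sub hle]
    ring

lemma altP_eq_sum (d : List ℕ) :
    altP d = ∑ j ∈ Finset.range d.length, (-1 : ℤ) ^ j * (d.getD j 0 : ℤ) := by
  induction d with
  | nil => simp [altP]
  | cons x e ih =>
    rw [altP, ih, List.length_cons, Finset.sum_range_succ']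
    simp only [List.getD_cons_succ, List.getD_cons_zero, pow_zero, one_mul]
    rw [show (∑ j ∈ Finset.range e.length, (-1:ℤ)^(j+1) * (e.getD j 0 : ℤ))
        = ∑ j ∈ Finset.range e.length, -((-1:ℤ)^j * (e.getD j 0 : ℤ)) from
      Finset.sum_congr rfl (fun j _ => by ring)]
    rw [Finset.sum_neg_distrib]
    ring

lemma altSum_eq_neg_altP (d : List ℕ) : altSum d d.length = - altP d := by
  rw [altSum, altP_eq_sum, ← Finset.Ico_add_one_right_eq_Icc, Finset.sum_Ico_eq_sum_range]
  rw [← Finset.sum_neg_distrib]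
  apply Finset.sum_congr rfl
  intro j _
  have : entry d (1 + j) = d.getD j 0 := by simp [entry]
  rw [this, pow_add]
  ring

lemma altP_append (l1 l2 : List ℕ) :
    altP (l1 ++ l2) = altP l1 + (-1 : ℤ) ^ l1.length * altP l2 := by
  induction l1 with
  | nil => simp [altP]
  | cons x e ih =>
    rw [List.cons_append]
    show (x : ℤ) - altP (e ++ l2) = ((x : ℤ) - altP e) + _
    rw [ih, List.length_cons, pow_succ]
    ring

lemma preList_succ (a b : ℕ) : preList a (b + 1) = preList a b ++ [a + b + 1] := by
  rw [preList, List.range_succ, List.map_append]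
  rfl

lemma length_preList (a b : ℕ) : (preList a b).length = b := by simp [preList]

lemma altP_preList (a k : ℕ) (hk : 1 ≤ k) : altP (preList a (2 * k - 1)) = (a : ℤ) + k := by
  induction k with
  | zero => omega
  | succ k ih =>
    rcases Nat.eq_or_lt_of_le hk with h | h
    · have : 2 * (k + 1) - 1 = 1 := by omega
      rw [this]
      show altP (preList a 1) = _
      have : k = 0 := by omega
      subst this
      simp [preList, altP]
    · have hk1 : 1 ≤ k := by omega
      have hb : 2 * (k + 1) - 1 = (2 * k - 1) + 1 + 1 := by omega
      rw [hb, preList_succ, preList_succ, List.append_assoc, altP_append, ih hk1]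
      have hlen : ((preList a (2 * k - 1))).length = 2 * k - 1 := length_preList _ _
      rw [hlen]
      have hodd : Odd (2 * k - 1) := ⟨k - 1, by omega⟩
      rw [hodd.neg_one_pow]
      have h2 : 2 * k - 1 + 1 = 2 * k := by omega
      rw [h2]
      show _ + _ * altP [a + (2*k-1) + 1, a + 2*k + 1] = _
      have : altP [a + (2*k-1) + 1, a + 2*k + 1]
          = ((a + (2*k-1) + 1 : ℕ) : ℤ) - ((a + 2*k + 1 : ℕ) : ℤ) := by
        simp [altP]
      rw [this]
      push_cast
      have : ((2 * k - 1 : ℕ) : ℤ) = 2 * k - 1 := by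
        push_cast [Nat.cast_sub (by omega : 1 ≤ 2 * k)]
        ring
      rw [this]
      push_cast
      ring

lemma sum_preList (a b : ℕ) : 2 * (preList a b).sum = b * (2 * a + b + 1) := by
  induction b with
  | zero => simp [preList]
  | succ b ih =>
    rw [preList_succ, List.sum_append, List.sum_cons, List.sum_nil, Nat.mul_add, ih]
    ring

lemma sum_preList_odd (a k : ℕ) (hk : 1 ≤ k) :
    (preList a (2 * k - 1)).sum = (2 * k - 1) * (a + k) := by
  have h := sum_preList a (2 * k - 1)
  have h2 : (2 * k - 1) * (2 * a + (2 * k - 1) + 1) = 2 * ((2 * k - 1) * (a + k)) := by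
    have : 2 * a + (2 * k - 1) + 1 = 2 * (a + k) := by omega
    rw [this]; ring
  omega

def evP (x : ℕ) : Bool := decide (x % 2 = 0)

def posP (x : ℕ) : Bool := decide (0 < x)

def geB (x y : ℕ) : Bool := decide (y ≤ x)

def splitCD (f : List ℕ) : List ℕ × List ℕ :=
  ((f.filter evP).map (fun x => x / 2),
   ((f.filter oddP).map (fun x => x / 2)).filter posP)

def mergeCD (c : ℕ) (p : List ℕ × List ℕ) : List ℕ :=
  ((p.1.map (fun x => 2 * x)) ++
   ((p.2 ++ List.replicate (c - p.2.length) 0).map (fun x => 2 * x + 1))).mergeSort geB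

lemma sorted_mergeSort_ge (l : List ℕ) : (l.mergeSort geB).Pairwise (· ≥ ·) := by
  have := List.pairwise_mergeSort (le := geB)
    (fun a b c h1 h2 => by simp [geB] at *; omega)
    (fun a b => by simp [geB]; omega) l
  exact this.imp (fun h => by simpa [geB] using h)

lemma sorted_map_mono {l : List ℕ} (h : l.Pairwise (· ≥ ·)) {g : ℕ → ℕ}
    (hg : ∀ x y, y ≤ x → g y ≤ g x) : (l.map g).Pairwise (· ≥ ·) :=
  List.Pairwise.map g (fun {a b} hab => hg a b hab) h

lemma countP_partition (p : ℕ → Bool) (l : List ℕ) :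
    l.countP p + l.countP (fun x => !p x) = l.length := by
  have := (List.filter_append_perm p l).length_eq
  rw [List.length_append, ← List.countP_eq_length_filter, ← List.countP_eq_length_filter] at this
  exact this

lemma filter_oddP_eq (l : List ℕ) : l.filter oddP = l.filter (fun x => !evP x) := by
  apply List.filter_congr
  intro x _
  rcases Nat.mod_two_eq_zero_or_one x with h | h <;> simp [oddP, evP, h]

/-- a sorted-desc list is its positive part followed by zeros -/

lemma eq_of_perm_of_sorted_ge {l1 l2 : List ℕ} (hp : l1.Perm l2)
    (h1 : l1.Pairwise (· ≥ ·)) (h2 : l2.Pairwise (· ≥ ·)) : l1 = l2 :=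
  hp.eq_of_pairwise (fun _ _ _ _ x y => le_antisymm y x) h1 h2

lemma sorted_eq_pos_append_zeros {w : List ℕ} (hw : w.Pairwise (· ≥ ·)) :
    w = w.filter posP ++ List.replicate (w.length - (w.filter posP).length) 0 := by
  have hperm : (w.filter posP ++ w.filter (fun x => !posP x)).Perm w :=
    List.filter_append_perm posP w
  have hzeros : w.filter (fun x => !posP x)
      = List.replicate (w.length - (w.filter posP).length) 0 := by
    rw [List.eq_replicate_iff]
    constructor
    · rw [← List.countP_eq_length_filter, ← List.countP_eq_length_filter]
      have := countP_partition posP w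
      omega
    · intro b hb
      rw [List.mem_filter] at hb
      simp [posP] at hb
      exact hb.2
  rw [← hzeros]
  apply eq_of_perm_of_sorted_ge hperm.symm hw
  rw [List.pairwise_append]
  refine ⟨hw.filter _, hw.filter _, ?_⟩
  intro x hx y hy
  rw [List.mem_filter] at hy
  simp [posP] at hy
  omega

lemma sum_map_double (l : List ℕ) : (l.map (fun x => 2 * x)).sum = 2 * l.sum := by
  induction l with
  | nil => simp
  | cons x l ih => simp [ih]; ring

lemma sum_map_double_succ (l : List ℕ) :
    (l.map (fun x => 2 * x + 1)).sum = 2 * l.sum + l.length := by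
  induction l with
  | nil => simp
  | cons x l ih => simp [ih]; ring

lemma sum_even_half {l : List ℕ} (h : ∀ x ∈ l, x % 2 = 0) :
    l.sum = 2 * (l.map (fun x => x / 2)).sum := by
  induction l with
  | nil => simp
  | cons x l ih =>
    have hx := h x (by simp)
    have := ih (fun y hy => h y (by simp [hy]))
    simp only [List.map_cons, List.sum_cons]
    omega

lemma sum_odd_half {l : List ℕ} (h : ∀ x ∈ l, x % 2 = 1) :
    l.sum = 2 * (l.map (fun x => x / 2)).sum + l.length := by
  induction l with
  | nil => simp
  | cons x l ih =>
    have hx := h x (by simp)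
    have := ih (fun y hy => h y (by simp [hy]))
    simp only [List.map_cons, List.sum_cons, List.length_cons]
    omega

section main

variable {c : ℕ} {u v : List ℕ}

lemma mergeCD_perm (c : ℕ) (p : List ℕ × List ℕ) :
    (mergeCD c p).Perm
      ((p.1.map (fun x => 2 * x)) ++
       ((p.2 ++ List.replicate (c - p.2.length) 0).map (fun x => 2 * x + 1))) :=
  List.mergeSort_perm _ _

lemma replicate_zero_sorted (n : ℕ) : (List.replicate n (0:ℕ)).Pairwise (· ≥ ·) :=
  List.pairwise_replicate.mpr (Or.inr (le_refl 0))

lemma merge_split (hu : u.Pairwise (· ≥ ·)) (hupos : ∀ x ∈ u, 0 < x)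
    (hv : v.Pairwise (· ≥ ·)) (hvpos : ∀ x ∈ v, 0 < x) :
    splitCD (mergeCD c (u, v)) = (u, v) := by
  have hperm := mergeCD_perm c (u, v)
  simp only at hperm
  set z := c - v.length with hz
  set evens := u.map (fun x => 2 * x) with hevens
  set odds := (v ++ List.replicate z 0).map (fun x => 2 * x + 1) with hodds
  have hms : (mergeCD c (u, v)).Pairwise (· ≥ ·) := sorted_mergeSort_ge _
  have hevens_sorted : evens.Pairwise (· ≥ ·) :=
    sorted_map_mono hu (fun x y h => by omega)
  have hodds_sorted : odds.Pairwise (· ≥ ·) := by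
    apply sorted_map_mono _ (fun x y h => by omega)
    rw [List.pairwise_append]
    exact ⟨hv, replicate_zero_sorted z, fun x hx y hy => by
      rw [List.eq_of_mem_replicate hy]; exact Nat.zero_le x⟩
  have hfe : (mergeCD c (u, v)).filter evP = evens := by
    apply eq_of_perm_of_sorted_ge ((hperm.filter evP).trans ?_)
      (hms.filter _) hevens_sorted
    rw [List.filter_append]
    rw [List.filter_eq_self.mpr (fun x hx => by
      obtain ⟨y, _, rfl⟩ := List.mem_map.mp hx
      simp only [evP, decide_eq_true_eq, Bool.not_eq_true]
      omega)]
    rw [List.filter_eq_nil_iff.mpr (fun x hx => by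
      obtain ⟨y, _, rfl⟩ := List.mem_map.mp hx
      simp only [evP, decide_eq_true_eq, Bool.not_eq_true]
      omega)]
    rw [List.append_nil]
  have hfo : (mergeCD c (u, v)).filter oddP = odds := by
    apply eq_of_perm_of_sorted_ge ((hperm.filter oddP).trans ?_)
      (hms.filter _) hodds_sorted
    rw [List.filter_append]
    rw [List.filter_eq_nil_iff.mpr (fun x hx => by
      obtain ⟨y, _, rfl⟩ := List.mem_map.mp hx
      simp only [oddP, decide_eq_true_eq, Bool.not_eq_true]
      omega)]
    rw [List.filter_eq_self.mpr (fun x hx => by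
      obtain ⟨y, _, rfl⟩ := List.mem_map.mp hx
      simp only [oddP, decide_eq_true_eq, Bool.not_eq_true]
      omega)]
    rw [List.nil_append]
  have h1 : (splitCD (mergeCD c (u, v))).1 = u := by
    show ((mergeCD c (u, v)).filter evP).map (fun x => x / 2) = u
    rw [hfe, hevens, List.map_map]
    rw [List.map_congr_left (g := id) (fun x _ => by simp)]
    exact List.map_id u
  have h2 : (splitCD (mergeCD c (u, v))).2 = v := by
    show (((mergeCD c (u, v)).filter oddP).map (fun x => x / 2)).filter posP = v
    rw [hfo, hodds, List.map_map]
    rw [List.map_congr_left (g := id) (fun x _ => by simp; omega)]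
    rw [List.map_id, List.filter_append]
    rw [List.filter_eq_self.mpr (fun x hx => by
      have := hvpos x hx
      simp only [posP, decide_eq_true_eq]
      omega)]
    rw [List.filter_eq_nil_iff.mpr (fun x hx => by
      rw [List.eq_of_mem_replicate hx]; simp [posP])]
    rw [List.append_nil]
  calc splitCD (mergeCD c (u, v))
      = ((splitCD (mergeCD c (u, v))).1, (splitCD (mergeCD c (u, v))).2) := rfl
    _ = (u, v) := by rw [h1, h2]

lemma w_sorted {f : List ℕ} (hf : f.Pairwise (· ≥ ·)) :
    ((f.filter oddP).map (fun x => x / 2)).Pairwise (· ≥ ·) :=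
  sorted_map_mono (hf.filter _) (fun x y h => Nat.div_le_div_right h)

lemma split_merge {f : List ℕ} (hf : f.Pairwise (· ≥ ·)) (hpos : ∀ x ∈ f, 0 < x)
    (hodd : f.countP oddP = c) : mergeCD c (splitCD f) = f := by
  set u := (f.filter evP).map (fun x => x / 2) with hu
  set w := (f.filter oddP).map (fun x => x / 2) with hwdef
  set v := w.filter posP with hvdef
  have hwlen : w.length = c := by
    rw [hwdef, List.length_map, ← List.countP_eq_length_filter, hodd]
  have hw := sorted_eq_pos_append_zeros (w_sorted hf)
  have hvw : v ++ List.replicate (c - v.length) 0 = w := by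
    rw [hvdef, ← hwlen]; exact hw.symm
  have hevens : u.map (fun x => 2 * x) = f.filter evP := by
    rw [hu, List.map_map]
    rw [List.map_congr_left (g := id) (fun x hx => by
      have : evP x = true := (List.mem_filter.mp hx).2
      simp only [evP, decide_eq_true_eq] at this
      simp only [Function.comp, id]
      omega)]
    exact List.map_id _
  have hodds : w.map (fun x => 2 * x + 1) = f.filter oddP := by
    rw [hwdef, List.map_map]
    rw [List.map_congr_left (g := id) (fun x hx => by
      have : oddP x = true := (List.mem_filter.mp hx).2
      simp only [oddP, decide_eq_true_eq] at this
      simp only [Function.comp, id]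
      omega)]
    exact List.map_id _
  unfold mergeCD
  have hfst : (splitCD f).1 = u := rfl
  have hsnd : (splitCD f).2 = v := rfl
  rw [hfst, hsnd, hvw, hevens, hodds]
  apply eq_of_perm_of_sorted_ge _ (sorted_mergeSort_ge _) hf
  apply (List.mergeSort_perm _ _).trans
  rw [filter_oddP_eq]
  exact List.filter_append_perm evP f

lemma mem_mergeCD {x : ℕ} (h : x ∈ mergeCD c (u, v)) :
    (∃ y ∈ u, x = 2 * y) ∨ (∃ y ∈ v ++ List.replicate (c - v.length) 0, x = 2 * y + 1) := by
  have := (mergeCD_perm c (u, v)).mem_iff.mp h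
  rw [List.mem_append] at this
  rcases this with h | h
  · obtain ⟨y, hy, rfl⟩ := List.mem_map.mp h
    exact Or.inl ⟨y, hy, rfl⟩
  · obtain ⟨y, hy, rfl⟩ := List.mem_map.mp h
    exact Or.inr ⟨y, hy, rfl⟩

lemma mergeCD_pos (hupos : ∀ x ∈ u, 0 < x) {x : ℕ} (h : x ∈ mergeCD c (u, v)) : 0 < x := by
  rcases mem_mergeCD h with ⟨y, hy, rfl⟩ | ⟨y, _, rfl⟩
  · have := hupos y hy; omega
  · omega

lemma mergeCD_length (hvlen : v.length ≤ c) : (mergeCD c (u, v)).length = u.length + c := by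
  rw [(mergeCD_perm c (u, v)).length_eq]
  simp only [List.length_append, List.length_map, List.length_replicate]
  omega

lemma mergeCD_oddcount (hvlen : v.length ≤ c) : (mergeCD c (u, v)).countP oddP = c := by
  rw [(mergeCD_perm c (u, v)).countP_eq, List.countP_append]
  rw [List.countP_eq_zero.mpr (fun x hx => by
    obtain ⟨y, _, rfl⟩ := List.mem_map.mp hx
    simp only [oddP, decide_eq_true_eq, Bool.not_eq_true]
    omega)]
  rw [List.countP_eq_length.mpr (fun x hx => by
    obtain ⟨y, _, rfl⟩ := List.mem_map.mp hx
    simp only [oddP, decide_eq_true_eq]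
    omega)]
  simp only [List.length_map, List.length_append, List.length_replicate]
  omega

lemma mergeCD_sum (hvlen : v.length ≤ c) :
    (mergeCD c (u, v)).sum = 2 * (u.sum + v.sum) + c := by
  rw [(mergeCD_perm c (u, v)).sum_eq, List.sum_append, sum_map_double, sum_map_double_succ]
  rw [List.sum_append, List.sum_replicate, List.length_append, List.length_replicate]
  simp
  omega

lemma splitCD_fst_sorted {f : List ℕ} (hf : f.Pairwise (· ≥ ·)) :
    (splitCD f).1.Pairwise (· ≥ ·) :=
  sorted_map_mono (hf.filter _) (fun x y h => Nat.div_le_div_right h)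

lemma splitCD_snd_sorted {f : List ℕ} (hf : f.Pairwise (· ≥ ·)) :
    (splitCD f).2.Pairwise (· ≥ ·) :=
  (w_sorted hf).filter _

lemma splitCD_fst_pos {f : List ℕ} (hpos : ∀ x ∈ f, 0 < x) {x : ℕ}
    (h : x ∈ (splitCD f).1) : 0 < x := by
  obtain ⟨y, hy, rfl⟩ := List.mem_map.mp h
  rw [List.mem_filter] at hy
  have h1 := hpos y hy.1
  have h2 := hy.2
  simp only [evP, decide_eq_true_eq] at h2
  omega

lemma splitCD_snd_pos {f : List ℕ} {x : ℕ} (h : x ∈ (splitCD f).2) : 0 < x := by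
  have := (List.mem_filter.mp h).2
  simp only [posP, decide_eq_true_eq] at this
  exact this

lemma splitCD_fst_length (f : List ℕ) :
    (splitCD f).1.length + f.countP oddP = f.length := by
  show ((f.filter evP).map _).length + _ = _
  rw [List.length_map, ← List.countP_eq_length_filter]
  have h := countP_partition evP f
  have : f.countP (fun x => !evP x) = f.countP oddP := by
    rw [List.countP_eq_length_filter, List.countP_eq_length_filter, ← filter_oddP_eq]
  omega

lemma splitCD_snd_length (f : List ℕ) : (splitCD f).2.length ≤ f.countP oddP := by
  show ((_ : List ℕ).filter posP).length ≤ _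
  calc (((f.filter oddP).map (fun x => x / 2)).filter posP).length
      ≤ ((f.filter oddP).map (fun x => x / 2)).length := List.length_filter_le _ _
    _ = f.countP oddP := by rw [List.length_map, ← List.countP_eq_length_filter]

lemma splitCD_sum {f : List ℕ} (hf : f.Pairwise (· ≥ ·)) :
    f.sum = 2 * ((splitCD f).1.sum + (splitCD f).2.sum) + f.countP oddP := by
  have hperm := (List.filter_append_perm evP f).symm
  rw [← filter_oddP_eq] at hperm
  have hsum : f.sum = (f.filter evP).sum + (f.filter oddP).sum := by
    rw [hperm.sum_eq, List.sum_append]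
  have heven : (f.filter evP).sum = 2 * (splitCD f).1.sum :=
    sum_even_half (fun x hx => by
      have := (List.mem_filter.mp hx).2
      simpa [evP] using this)
  have hoddsum : (f.filter oddP).sum
      = 2 * ((f.filter oddP).map (fun x => x / 2)).sum + f.countP oddP := by
    rw [sum_odd_half (fun x hx => by
      have := (List.mem_filter.mp hx).2
      simpa [oddP] using this)]
    rw [List.countP_eq_length_filter]
  have hwsum : ((f.filter oddP).map (fun x => x / 2)).sum = (splitCD f).2.sum := by
    conv_lhs => rw [sorted_eq_pos_append_zeros (w_sorted hf)]
    rw [List.sum_append, List.sum_replicate]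
    simp [splitCD]
  omega

end main

lemma entry_eq_getElem (d : List ℕ) (i : ℕ) (h : i < d.length) :
    entry d (i + 1) = d[i] := by
  unfold entry
  rw [Nat.add_sub_cancel]
  exact List.getD_eq_getElem d 0 h

lemma neg_one_pow_odd_b (k : ℕ) (hk : 1 ≤ k) : ((-1 : ℤ)) ^ (2 * k - 1) = -1 :=
  (Odd.neg_one_pow ⟨k - 1, by omega⟩)

lemma AtoB {a k n : ℕ} (hk : 1 ≤ k) {d : List ℕ}
    (hd : IsABSeq a (2 * k - 1) d) (hsum : d.sum = 2 * n) :
    IsPartitionList (d.drop (2 * k - 1)) ∧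
    (∀ x ∈ d.drop (2 * k - 1), x ≤ a + 2 * k - 1) ∧
    altP (d.drop (2 * k - 1)) = (a : ℤ) + k ∧
    (d.drop (2 * k - 1)).sum + (2 * k - 1) * (a + k) = 2 * n ∧
    d = preList a (2 * k - 1) ++ d.drop (2 * k - 1) := by
  obtain ⟨hb1, hb2, h3, h4, h5, h6⟩ := hd
  set b := 2 * k - 1 with hbdef
  set e := d.drop b with hedef
  have hlen : e.length = d.length - b := by simp [hedef]
  have hee : ∀ i (h : i < e.length), e[i] = d[b + i]'(by omega) := by
    intro i h
    simp [hedef]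
  have htake : d.take b = preList a b := by
    apply List.ext_getElem
    · simp [length_preList]; omega
    · intro i h1 h2
      rw [List.getElem_take]
      rw [length_preList] at h2
      have hi : i < d.length := by omega
      rw [← entry_eq_getElem d i hi, h4 (i + 1) (by omega) (by omega)]
      simp [preList]
      omega
  have hsplit : d = preList a b ++ e := by
    rw [← htake, hedef, List.take_append_drop]
  have hb : entry d b = a + b := h4 b (by omega) le_rfl
  have hbound : ∀ x ∈ e, x ≤ a + 2 * k - 1 := by
    intro x hx
    obtain ⟨i, hi, rfl⟩ := List.mem_iff_getElem.mp hx
    rw [hee i hi]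
    rw [← entry_eq_getElem d (b + i) (by omega)]
    have := h5 b (b + i + 1) le_rfl (by omega) (by omega)
    omega
  refine ⟨⟨?_, ?_⟩, hbound, ?_, ?_, hsplit⟩
  · rw [List.pairwise_iff_getElem]
    intro i j hi hj hij
    rw [hee i hi, hee j hj]
    rw [← entry_eq_getElem d (b + i) (by omega), ← entry_eq_getElem d (b + j) (by omega)]
    exact h5 (b + i + 1) (b + j + 1) (by omega) (by omega) (by omega)
  · intro x hx
    obtain ⟨i, hi, rfl⟩ := List.mem_iff_getElem.mp hx
    rw [hee i hi, ← entry_eq_getElem d (b + i) (by omega)]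
    exact h3 (b + i + 1) (by omega) (by omega)
  · have h0 : altP d = 0 := by
      have := altSum_eq_neg_altP d
      rw [h6] at this
      omega
    have hpa := altP_preList a k hk
    rw [← hbdef] at hpa
    have hpow := neg_one_pow_odd_b k hk
    rw [← hbdef] at hpow
    rw [hsplit, altP_append, length_preList, hpa, hpow] at h0
    linarith
  · have hps := sum_preList_odd a k hk
    rw [← hbdef] at hps
    have : d.sum = (preList a b).sum + e.sum := by rw [hsplit] at hsum ⊢; simp
    rw [this, hps] at hsum
    omega

lemma BtoA {a k n : ℕ} (hk : 1 ≤ k) {e : List ℕ}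
    (he : IsPartitionList e) (hbd : ∀ x ∈ e, x ≤ a + 2 * k - 1)
    (halt : altP e = (a : ℤ) + k) (hsum : e.sum + (2 * k - 1) * (a + k) = 2 * n) :
    IsABSeq a (2 * k - 1) (preList a (2 * k - 1) ++ e) ∧
    (preList a (2 * k - 1) ++ e).sum = 2 * n ∧
    (preList a (2 * k - 1) ++ e).drop (2 * k - 1) = e := by
  obtain ⟨hesort, hepos⟩ := he
  set b := 2 * k - 1 with hbdef
  have hlenp : (preList a b).length = b := length_preList a b
  have hlen : (preList a b ++ e).length = b + e.length := by simp [hlenp]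
  have hent_pre : ∀ i, 1 ≤ i → i ≤ b → entry (preList a b ++ e) i = a + i := by
    intro i h1 h2
    show (preList a b ++ e).getD (i - 1) 0 = a + i
    rw [List.getD_append _ _ _ _ (by omega)]
    rw [List.getD_eq_getElem _ _ (by rw [hlenp]; omega)]
    simp [preList]
    omega
  have hent_e : ∀ j, b + 1 ≤ j → entry (preList a b ++ e) j = e.getD (j - 1 - b) 0 := by
    intro j h1
    show (preList a b ++ e).getD (j - 1) 0 = e.getD (j - 1 - b) 0
    rw [List.getD_append_right _ _ _ _ (by omega), hlenp]
  have hsorted := List.pairwise_iff_getElem.mp hesort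
  have hgetDmem : ∀ i, i < e.length → e.getD i 0 ∈ e := by
    intro i hi
    rw [List.getD_eq_getElem _ _ hi]
    exact List.getElem_mem _
  refine ⟨⟨by omega, by omega, ?_, hent_pre, ?_, ?_⟩, ?_, ?_⟩
  · intro i h1 h2
    by_cases hc : i ≤ b
    · rw [hent_pre i h1 hc]; omega
    · rw [hent_e i (by omega)]
      rw [hlen] at h2
      exact hepos _ (hgetDmem _ (by omega))
  · intro i j hbi hij hjl
    rcases Nat.eq_or_lt_of_le hij with rfl | hlt
    · exact le_rfl
    · rw [hlen] at hjl
      rw [hent_e j (by omega)]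
      rcases Nat.eq_or_lt_of_le hbi with heq | hbi'
      · rw [← heq, hent_pre b (by omega) le_rfl]
        have := hbd _ (hgetDmem (j - 1 - b) (by omega))
        omega
      · rw [hent_e i (by omega)]
        rw [List.getD_eq_getElem _ _ (show j - 1 - b < e.length by omega),
          List.getD_eq_getElem _ _ (show i - 1 - b < e.length by omega)]
        exact hsorted (i - 1 - b) (j - 1 - b) (by omega) (by omega) (by omega)
  · have hpa := altP_preList a k hk
    rw [← hbdef] at hpa
    have hpow := neg_one_pow_odd_b k hk
    rw [← hbdef] at hpow
    rw [altSum_eq_neg_altP, altP_append, hlenp, hpa, hpow, halt]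
    ring
  · have hps := sum_preList_odd a k hk
    rw [← hbdef] at hps
    rw [List.sum_append, hps]
    omega
  · have := List.drop_left (l₁ := preList a b) (l₂ := e)
    rwa [hlenp] at this

lemma ncard_eq_of_bijOn {α β : Type*} {s : Set α} {t : Set β} {φ : α → β}
    (h : Set.BijOn φ s t) : s.ncard = t.ncard := by
  rw [← h.image_eq]
  exact (Set.ncard_image_of_injOn h.injOn).symm

lemma headD_le_of_bound {e : List ℕ} {N : ℕ} (h : ∀ x ∈ e, x ≤ N) : e.headD 0 ≤ N := by
  cases e with
  | nil => simp
  | cons y ys => exact h y (by simp)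

lemma conjL_le_length (f : List ℕ) {x : ℕ} (hx : x ∈ conjL f) : x ≤ f.length := by
  rw [conjL, List.mem_map] at hx
  obtain ⟨j, _, rfl⟩ := hx
  exact List.countP_le_length

/-- Odd-`b` coefficient extraction of Theorem 2.1: the number of `(a, 2k−1)`-sequences `Δ`
with `|Δ| = 2n` equals the number of pairs `(μ, ν)` of partitions with parts of `μ` at most
`k − 1`, parts of `ν` at most `a + k`, and `|μ| + |ν| + k(a + k) = n`. -/
theorem abseq_odd_count (a k n : ℕ) (hk : 1 ≤ k) :
    Set.ncard {d : List ℕ | IsABSeq a (2 * k - 1) d ∧ d.sum = 2 * n} =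
    Set.ncard {p : List ℕ × List ℕ | IsPartitionList p.1 ∧ IsPartitionList p.2 ∧
      (∀ x ∈ p.1, x ≤ k - 1) ∧ (∀ x ∈ p.2, x ≤ a + k) ∧
      p.1.sum + p.2.sum + k * (a + k) = n} := by
  classical
  have keyfact : (a + k) + (2 * k - 1) * (a + k) = 2 * (k * (a + k)) := by
    obtain ⟨k', rfl⟩ : ∃ k', k = k' + 1 := ⟨k - 1, by omega⟩
    have h2 : 2 * (k' + 1) - 1 = 2 * k' + 1 := by omega
    rw [h2]; ring
  set B : Set (List ℕ) := {e | IsPartitionList e ∧ (∀ x ∈ e, x ≤ a + 2 * k - 1) ∧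
    altP e = (a : ℤ) + k ∧ e.sum + (2 * k - 1) * (a + k) = 2 * n} with hB
  set C : Set (List ℕ) := {f | IsPartitionList f ∧ f.length ≤ a + 2 * k - 1 ∧
    f.countP oddP = a + k ∧ f.sum + (2 * k - 1) * (a + k) = 2 * n} with hC
  set D : Set (List ℕ × List ℕ) := {p | IsPartitionList p.1 ∧ IsPartitionList p.2 ∧
    p.1.length ≤ k - 1 ∧ p.2.length ≤ a + k ∧
    p.1.sum + p.2.sum + k * (a + k) = n} with hD
  have step1 : Set.ncard {d : List ℕ | IsABSeq a (2 * k - 1) d ∧ d.sum = 2 * n}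
      = Set.ncard B := by
    apply ncard_eq_of_bijOn (φ := fun d => d.drop (2 * k - 1))
    refine Set.InvOn.bijOn (f' := fun e => preList a (2 * k - 1) ++ e) ⟨?_, ?_⟩ ?_ ?_
    · intro d hd
      exact (AtoB hk hd.1 hd.2).2.2.2.2.symm
    · intro e he
      exact (BtoA hk he.1 he.2.1 he.2.2.1 he.2.2.2).2.2
    · intro d hd
      obtain ⟨p1, p2, p3, p4, _⟩ := AtoB hk hd.1 hd.2
      exact ⟨p1, p2, p3, p4⟩
    · intro e he
      obtain ⟨q1, q2, _⟩ := BtoA hk he.1 he.2.1 he.2.2.1 he.2.2.2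
      exact ⟨q1, q2⟩
  have step2 : Set.ncard B = Set.ncard C := by
    apply ncard_eq_of_bijOn (φ := conjL)
    refine Set.InvOn.bijOn (f' := conjL) ⟨?_, ?_⟩ ?_ ?_
    · intro e he
      exact conjL_conjL he.1.1 he.1.2
    · intro f hf
      exact conjL_conjL hf.1.1 hf.1.2
    · rintro e ⟨⟨hs, hp⟩, hbd, halt, hsum⟩
      refine ⟨⟨conjL_sorted e, fun x hx => conjL_pos e hx⟩, ?_, ?_, ?_⟩
      · rw [length_conjL]
        exact headD_le_of_bound hbd
      · have h := oddCnt_conjL hs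
        rw [halt] at h
        exact_mod_cast h
      · rw [conjL_sum hs]
        exact hsum
    · rintro f ⟨⟨hs, hp⟩, hlenN, hodd, hsum⟩
      refine ⟨⟨conjL_sorted f, fun x hx => conjL_pos f hx⟩, ?_, ?_, ?_⟩
      · intro x hx
        exact le_trans (conjL_le_length f hx) hlenN
      · have h := oddCnt_conjL (conjL_sorted f)
        rw [conjL_conjL hs hp, hodd] at h
        rw [← h]
        push_cast
        ring
      · rw [conjL_sum hs]
        exact hsum
  have step3 : Set.ncard C = Set.ncard D := by
    apply ncard_eq_of_bijOn (φ := splitCD)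
    refine Set.InvOn.bijOn (f' := mergeCD (a + k)) ⟨?_, ?_⟩ ?_ ?_
    · rintro f ⟨⟨hs, hp⟩, hlenN, hodd, hsum⟩
      exact split_merge hs hp hodd
    · rintro ⟨u, v⟩ ⟨⟨hu, hup⟩, ⟨hv, hvp⟩, hul, hvl, hsum⟩
      exact merge_split hu hup hv hvp
    · rintro f ⟨⟨hs, hp⟩, hlenN, hodd, hsum⟩
      refine ⟨⟨splitCD_fst_sorted hs, fun x hx => splitCD_fst_pos hp hx⟩,
        ⟨splitCD_snd_sorted hs, fun x hx => splitCD_snd_pos hx⟩, ?_, ?_, ?_⟩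
      · have := splitCD_fst_length f
        rw [hodd] at this
        omega
      · have := splitCD_snd_length f
        rw [hodd] at this
        exact this
      · have hss := splitCD_sum hs
        rw [hodd] at hss
        omega
    · rintro ⟨u, v⟩ ⟨⟨hu, hup⟩, ⟨hv, hvp⟩, hul, hvl, hsum⟩
      have hul' : u.length ≤ k - 1 := hul
      have hvl' : v.length ≤ a + k := hvl
      have hsum' : u.sum + v.sum + k * (a + k) = n := hsum
      refine ⟨⟨sorted_mergeSort_ge _, fun x hx => mergeCD_pos hup hx⟩, ?_, ?_, ?_⟩
      · rw [mergeCD_length hvl']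
        omega
      · exact mergeCD_oddcount hvl'
      · rw [mergeCD_sum hvl']
        omega
  have step4 : Set.ncard D = Set.ncard {p : List ℕ × List ℕ |
      IsPartitionList p.1 ∧ IsPartitionList p.2 ∧
      (∀ x ∈ p.1, x ≤ k - 1) ∧ (∀ x ∈ p.2, x ≤ a + k) ∧
      p.1.sum + p.2.sum + k * (a + k) = n} := by
    apply ncard_eq_of_bijOn (φ := fun p => (conjL p.1, conjL p.2))
    refine Set.InvOn.bijOn (f' := fun p => (conjL p.1, conjL p.2)) ⟨?_, ?_⟩ ?_ ?_
    · rintro ⟨u, v⟩ ⟨⟨hu, hup⟩, ⟨hv, hvp⟩, hul, hvl, hsum⟩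
      simp only
      rw [conjL_conjL hu hup, conjL_conjL hv hvp]
    · rintro ⟨u, v⟩ ⟨⟨hu, hup⟩, ⟨hv, hvp⟩, hul, hvl, hsum⟩
      simp only
      rw [conjL_conjL hu hup, conjL_conjL hv hvp]
    · rintro ⟨u, v⟩ ⟨⟨hu, hup⟩, ⟨hv, hvp⟩, hul, hvl, hsum⟩
      refine ⟨⟨conjL_sorted u, fun x hx => conjL_pos u hx⟩,
        ⟨conjL_sorted v, fun x hx => conjL_pos v hx⟩, ?_, ?_, ?_⟩
      · intro x hx
        exact le_trans (conjL_le_length u hx) hul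
      · intro x hx
        exact le_trans (conjL_le_length v hx) hvl
      · rw [conjL_sum hu, conjL_sum hv]
        exact hsum
    · rintro ⟨u, v⟩ ⟨⟨hu, hup⟩, ⟨hv, hvp⟩, hul, hvl, hsum⟩
      refine ⟨⟨conjL_sorted u, fun x hx => conjL_pos u hx⟩,
        ⟨conjL_sorted v, fun x hx => conjL_pos v hx⟩, ?_, ?_, ?_⟩
      · rw [length_conjL]
        exact headD_le_of_bound hul
      · rw [length_conjL]
        exact headD_le_of_bound hvl
      · rw [conjL_sum hu, conjL_sum hv]
        exact hsum
  rw [step1, step2, step3, step4]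
end

section
/- For all integers a ≥ 0, k ≥ 1, and n ≥ 0, the number of (a, 2k)-sequences Δ with |Δ| = 2n equals the number of ordered pairs (μ, ν) of partitions such that every part of μ is at most k, every part of ν is at most a + k, and |μ| + |ν| + k(a + k) + k = n. -/
namespace ABH
open Multiset

def colHt (E : Multiset ℕ) (c : ℕ) : ℕ := Multiset.countP (fun x => c ≤ x) E

def conjM (E : Multiset ℕ) : Multiset ℕ :=
  ((Multiset.range (E.sum + 1)).map (fun c => colHt E (c + 1))).filter (0 < ·)

lemma countP_mono_pred {p q : ℕ → Prop} [DecidablePred p] [DecidablePred q]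
    (h : ∀ x, p x → q x) (s : Multiset ℕ) : Multiset.countP p s ≤ Multiset.countP q s := by
  induction s using Multiset.induction with
  | empty => simp
  | cons a s ih =>
    rw [Multiset.countP_cons, Multiset.countP_cons]
    by_cases hp : p a
    · simp [hp, h a hp]; omega
    · simp [hp]
      split <;> omega

lemma colHt_le_card (E : Multiset ℕ) (c : ℕ) : colHt E c ≤ Multiset.card E :=
  Multiset.countP_le_card _ _

lemma colHt_anti (E : Multiset ℕ) {c₁ c₂ : ℕ} (h : c₁ ≤ c₂) : colHt E c₂ ≤ colHt E c₁ :=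
  countP_mono_pred (fun x hx => le_trans h hx) E

lemma exists_of_colHt_pos {E : Multiset ℕ} {c : ℕ} (h : 0 < colHt E c) :
    ∃ x ∈ E, c ≤ x := by
  by_contra hc
  push_neg at hc
  have : colHt E c = 0 := Multiset.countP_eq_zero.2 (by intro x hx; exact not_le.2 (hc x hx))
  omega

lemma le_sum_of_mem' {E : Multiset ℕ} {x : ℕ} (hx : x ∈ E) : x ≤ E.sum :=
  Multiset.le_sum_of_mem hx

lemma colHt_cons (x : ℕ) (E : Multiset ℕ) (c : ℕ) :
    colHt (x ::ₘ E) c = colHt E c + (if c ≤ x then 1 else 0) := by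
  simp [colHt, Multiset.countP_cons]

/-- A down-closed finset of naturals is an initial segment. -/
lemma downclosed_mem_iff {S : Finset ℕ} (h : ∀ ⦃x y : ℕ⦄, x ≤ y → y ∈ S → x ∈ S) (c : ℕ) :
    c ∈ S ↔ c < S.card := by
  constructor
  · intro hc
    have hsub : Finset.range (c + 1) ⊆ S := by
      intro x hx
      exact h (Nat.lt_succ_iff.1 (Finset.mem_range.1 hx)) hc
    have := Finset.card_le_card hsub
    simpa using this
  · intro hc
    by_contra hcn
    have hsub : S ⊆ Finset.range c := by
      intro y hy
      rw [Finset.mem_range]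
      by_contra hyc
      exact hcn (h (not_lt.1 hyc) hy)
    have := Finset.card_le_card hsub
    simp at this
    omega

/-- `colHt` of the conjugate, as a filtered-range cardinality. -/
lemma colHt_conjM (E : Multiset ℕ) {h : ℕ} (hh : 1 ≤ h) :
    colHt (conjM E) h =
      ((Finset.range (E.sum + 1)).filter (fun c => h ≤ colHt E (c + 1))).card := by
  rw [colHt, conjM]
  rw [Multiset.countP_filter]
  have : (Multiset.countP (fun a => h ≤ a ∧ 0 < a)
      ((Multiset.range (E.sum + 1)).map (fun c => colHt E (c + 1)))) =
      Multiset.countP (fun a => h ≤ a)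
      ((Multiset.range (E.sum + 1)).map (fun c => colHt E (c + 1))) := by
    apply Multiset.countP_congr rfl
    intro x _
    simp only [eq_iff_iff]
    constructor
    · exact fun hx => hx.1
    · exact fun hx => ⟨hx, lt_of_lt_of_le hh hx⟩
  rw [this, Multiset.countP_map]
  rfl


lemma galois (E : Multiset ℕ) {c h : ℕ} (hc : 1 ≤ c) (hh : 1 ≤ h) :
    c ≤ colHt (conjM E) h ↔ h ≤ colHt E c := by
  set S := (Finset.range (E.sum + 1)).filter (fun c' => h ≤ colHt E (c' + 1)) with hS
  have hdc : ∀ ⦃x y : ℕ⦄, x ≤ y → y ∈ S → x ∈ S := by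
    intro x y hxy hy
    rw [hS, Finset.mem_filter, Finset.mem_range] at hy ⊢
    exact ⟨lt_of_le_of_lt hxy hy.1,
      le_trans hy.2 (colHt_anti E (by omega))⟩
  rw [colHt_conjM E hh, ← hS]
  constructor
  · intro hcard
    have : c - 1 ∈ S := (downclosed_mem_iff hdc _).2 (by omega)
    rw [hS, Finset.mem_filter] at this
    have := this.2
    rwa [Nat.sub_add_cancel hc] at this
  · intro hcol
    have hpos : 0 < colHt E c := lt_of_lt_of_le hh hcol
    obtain ⟨x, hxE, hcx⟩ := exists_of_colHt_pos hpos
    have hcs : c ≤ E.sum := le_trans hcx (le_sum_of_mem' hxE)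
    have : c - 1 ∈ S := by
      rw [hS, Finset.mem_filter, Finset.mem_range, Nat.sub_add_cancel hc]
      exact ⟨by omega, hcol⟩
    have := (downclosed_mem_iff hdc _).1 this
    omega

lemma pos_of_mem_conjM {E : Multiset ℕ} {x : ℕ} (hx : x ∈ conjM E) : 0 < x := by
  rw [conjM, Multiset.mem_filter] at hx
  exact hx.2

lemma mem_conjM_le_card {E : Multiset ℕ} {x : ℕ} (hx : x ∈ conjM E) :
    x ≤ Multiset.card E := by
  rw [conjM, Multiset.mem_filter, Multiset.mem_map] at hx
  obtain ⟨⟨c, _, rfl⟩, _⟩ := hx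
  exact colHt_le_card E _

/-- counts at positive values recover a multiset of positive naturals. -/
lemma eq_of_colHt_eq {E F : Multiset ℕ} (hE : ∀ x ∈ E, 0 < x) (hF : ∀ x ∈ F, 0 < x)
    (h : ∀ c, 1 ≤ c → colHt E c = colHt F c) : E = F := by
  ext x
  rcases Nat.eq_zero_or_pos x with rfl | hx
  · rw [Multiset.count_eq_zero_of_notMem (fun hm => absurd (hE 0 hm) (lt_irrefl 0)),
      Multiset.count_eq_zero_of_notMem (fun hm => absurd (hF 0 hm) (lt_irrefl 0))]
  · have key : ∀ (G : Multiset ℕ), Multiset.count x G + colHt G (x + 1) = colHt G x := by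
      intro G
      rw [colHt, colHt, Multiset.count]
      induction G using Multiset.induction with
      | empty => simp
      | cons a s ih =>
        simp only [Multiset.countP_cons]
        split_ifs <;> omega
    have h1 := key E
    have h2 := key F
    have e1 := h x hx
    have e2 := h (x + 1) (by omega)
    omega

lemma conjM_conjM {E : Multiset ℕ} (hE : ∀ x ∈ E, 0 < x) : conjM (conjM E) = E := by
  apply eq_of_colHt_eq (fun x hx => pos_of_mem_conjM hx) hE
  intro c hc
  have : ∀ m, 1 ≤ m → (m ≤ colHt (conjM (conjM E)) c ↔ m ≤ colHt E c) := by
    intro m hm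
    rw [galois (conjM E) hm hc, galois E hc hm]
  rcases Nat.eq_zero_or_pos (colHt (conjM (conjM E)) c) with h0 | hp
  · rcases Nat.eq_zero_or_pos (colHt E c) with h0' | hp'
    · omega
    · have := (this 1 le_rfl).2 hp'
      omega
  · rcases Nat.eq_zero_or_pos (colHt E c) with h0' | hp'
    · have := (this 1 le_rfl).1 hp
      omega
    · have h1 := (this (colHt (conjM (conjM E)) c) hp).1 le_rfl
      have h2 := (this (colHt E c) hp').2 le_rfl
      omega


lemma sum_filter_pos (M : Multiset ℕ) : (Multiset.filter (0 < ·) M).sum = M.sum := by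
  conv_rhs => rw [← Multiset.filter_add_not (0 < ·) M]
  rw [Multiset.sum_add]
  have : (Multiset.filter (fun a => ¬0 < a) M).sum = 0 := by
    apply Multiset.sum_eq_zero
    intro x hx
    have := Multiset.of_mem_filter hx
    omega
  omega

lemma sum_colHt (E : Multiset ℕ) : ∀ B, E.sum ≤ B →
    ∑ c ∈ Finset.range B, colHt E (c + 1) = E.sum := by
  induction E using Multiset.induction with
  | empty => intro B _; simp [colHt]
  | cons a s ih =>
    intro B hB
    rw [Multiset.sum_cons] at hB
    simp only [colHt_cons]
    rw [Finset.sum_add_distrib, ih B (by omega)]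
    have : ∑ c ∈ Finset.range B, (if c + 1 ≤ a then 1 else 0) = a := by
      rw [← Finset.card_filter]
      have : Finset.filter (fun c => c + 1 ≤ a) (Finset.range B) = Finset.range a := by
        ext c
        simp only [Finset.mem_filter, Finset.mem_range]
        omega
      rw [this, Finset.card_range]
    rw [this, Multiset.sum_cons]
    omega

lemma conjM_sum (E : Multiset ℕ) : (conjM E).sum = E.sum := by
  rw [conjM, sum_filter_pos]
  have : ((Multiset.range (E.sum + 1)).map (fun c => colHt E (c + 1))).sum =
      ∑ c ∈ Finset.range (E.sum + 1), colHt E (c + 1) := rfl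
  rw [this, sum_colHt E _ (by omega)]

lemma card_conjM_le {E : Multiset ℕ} {B₀ : ℕ} (hB : ∀ x ∈ E, x ≤ B₀) :
    Multiset.card (conjM E) ≤ B₀ := by
  rw [conjM, ← Multiset.countP_eq_card_filter, Multiset.countP_map]
  have : Multiset.card
      (Multiset.filter (fun c => 0 < colHt E (c + 1)) (Multiset.range (E.sum + 1))) =
      ((Finset.range (E.sum + 1)).filter (fun c => 0 < colHt E (c + 1))).card := rfl
  rw [this]
  have hsub : (Finset.range (E.sum + 1)).filter (fun c => 0 < colHt E (c + 1)) ⊆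
      Finset.range B₀ := by
    intro c hc
    rw [Finset.mem_filter] at hc
    obtain ⟨x, hxE, hcx⟩ := exists_of_colHt_pos hc.2
    rw [Finset.mem_range]
    have := hB x hxE
    omega
  have := Finset.card_le_card hsub
  simpa using this

lemma conjM_filter_pos (E : Multiset ℕ) : conjM (Multiset.filter (0 < ·) E) = conjM E := by
  rw [conjM, conjM, sum_filter_pos]
  congr 1
  apply Multiset.map_congr rfl
  intro c _
  rw [colHt, colHt, Multiset.countP_filter]
  apply Multiset.countP_congr rfl
  intro x _
  simp only [eq_iff_iff]
  constructor
  · exact fun hx => hx.1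
  · exact fun hx => ⟨hx, by omega⟩


lemma conjM_conjM' (α : Multiset ℕ) : conjM (conjM α) = Multiset.filter (0 < ·) α := by
  rw [← conjM_filter_pos α, conjM_conjM (fun x hx => Multiset.of_mem_filter hx)]

lemma filter_not_pos_eq (α : Multiset ℕ) :
    Multiset.filter (fun x => ¬ 0 < x) α = Multiset.replicate (Multiset.count 0 α) 0 := by
  rw [← Multiset.filter_eq' α 0]
  apply Multiset.filter_congr
  intro x _
  constructor
  · omega
  · omega

lemma map_odd_eq {M : Multiset ℕ} (h : ∀ x ∈ M, ¬ Even x) :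
    M.map (fun o => 2 * (o / 2) + 1) = M := by
  conv_rhs => rw [show M = M.map id by rw [Multiset.map_id]]
  apply Multiset.map_congr rfl
  intro x hx
  have := h x hx
  rw [Nat.even_iff] at this
  simp only [id]
  omega

lemma sum_odd_eq {M : Multiset ℕ} (h : ∀ x ∈ M, ¬ Even x) :
    M.sum = 2 * (M.map (· / 2)).sum + Multiset.card M := by
  conv_lhs => rw [← map_odd_eq h]
  have : (M.map (fun o => 2 * (o / 2) + 1)).sum =
      (M.map (fun o => 2 * (o / 2))).sum + (M.map (fun _ => 1)).sum := by
    rw [← Multiset.sum_map_add]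
  rw [this, Multiset.sum_map_mul_left]
  have : (M.map (fun _ => (1:ℕ))).sum = Multiset.card M := by
    rw [Multiset.map_const', Multiset.sum_replicate]
    simp
  rw [this]

lemma map_even_eq {M : Multiset ℕ} (h : ∀ x ∈ M, Even x) :
    M.map (fun o => 2 * (o / 2)) = M := by
  conv_rhs => rw [show M = M.map id by rw [Multiset.map_id]]
  apply Multiset.map_congr rfl
  intro x hx
  have := h x hx
  rw [Nat.even_iff] at this
  simp only [id]
  omega

lemma sum_even_eq {M : Multiset ℕ} (h : ∀ x ∈ M, Even x) :
    M.sum = 2 * (M.map (· / 2)).sum := by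
  conv_lhs => rw [← map_even_eq h]
  exact Multiset.sum_map_mul_left


def F2 (E : Multiset ℕ) : Multiset ℕ × Multiset ℕ :=
  (conjM (((conjM E).filter (fun x => ¬ Even x)).map (· / 2)),
   conjM (((conjM E).filter (fun x => Even x)).map (· / 2)))

def G2 (k : ℕ) (p : Multiset ℕ × Multiset ℕ) : Multiset ℕ :=
  conjM (((conjM p.1 + Multiset.replicate (k - Multiset.card (conjM p.1)) 0).map
      (fun x => 2 * x + 1)) + (conjM p.2).map (fun x => 2 * x))

def T1 (a k n : ℕ) : Set (Multiset ℕ) :=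
  {E | (∀ x ∈ E, 0 < x ∧ x ≤ a + 2 * k)
    ∧ Multiset.card ((conjM E).filter (fun x => ¬ Even x)) = k
    ∧ E.sum + 2 * k * a + k * (2 * k + 1) = 2 * n}

def T2 (a k n : ℕ) : Set (Multiset ℕ × Multiset ℕ) :=
  {p | (∀ x ∈ p.1, 0 < x ∧ x ≤ k) ∧ (∀ x ∈ p.2, 0 < x ∧ x ≤ a + k)
    ∧ p.1.sum + p.2.sum + k * (a + k) + k = n}

section Bij
variable {a k n : ℕ}

lemma filter_split_even (C : Multiset ℕ) :
    C.filter (fun x => ¬ Even x) + C.filter (fun x => Even x) = C := by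
  rw [add_comm]
  exact Multiset.filter_add_not _ C

lemma G2_F2 {E : Multiset ℕ} (hE : E ∈ T1 a k n) : G2 k (F2 E) = E := by
  obtain ⟨hpos, hk, -⟩ := hE
  set C := conjM E with hC
  set O := C.filter (fun x => ¬ Even x) with hO
  set V := C.filter (fun x => Even x) with hV
  set α := O.map (· / 2) with hα
  set β := V.map (· / 2) with hβ
  have hβpos : ∀ x ∈ β, 0 < x := by
    intro x hx
    rw [hβ, Multiset.mem_map] at hx
    obtain ⟨v, hv, rfl⟩ := hx
    have hve : Even v := (Multiset.mem_filter.1 hv).2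
    have hvp : 0 < v := pos_of_mem_conjM (Multiset.mem_of_mem_filter hv)
    rw [Nat.even_iff] at hve
    omega
  have h1 : conjM (conjM α) = Multiset.filter (0 < ·) α := conjM_conjM' α
  have h2 : conjM (conjM β) = β := by
    rw [conjM_conjM' β, Multiset.filter_eq_self.2 hβpos]
  show conjM _ = E
  rw [show (F2 E).1 = conjM α from rfl, show (F2 E).2 = conjM β from rfl]
  rw [h1, h2]
  have hcardα : Multiset.card α = k := by rw [hα, Multiset.card_map]; exact hk
  have hzcount : k - Multiset.card (Multiset.filter (0 < ·) α) = Multiset.count 0 α := by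
    have hsplit := Multiset.filter_add_not (0 < ·) α
    have := congrArg Multiset.card hsplit
    rw [Multiset.card_add] at this
    rw [filter_not_pos_eq] at this
    rw [Multiset.card_replicate] at this
    omega
  rw [hzcount]
  have hmapα : (Multiset.filter (0 < ·) α + Multiset.replicate (Multiset.count 0 α) 0).map
      (fun x => 2 * x + 1) = O := by
    have : Multiset.filter (0 < ·) α + Multiset.replicate (Multiset.count 0 α) 0 = α := by
      conv_rhs => rw [← Multiset.filter_add_not (0 < ·) α]
      rw [filter_not_pos_eq]
    rw [this, hα, Multiset.map_map]
    have : ((fun x => 2 * x + 1) ∘ (· / 2)) = (fun o => 2 * (o / 2) + 1) := rfl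
    rw [this]
    exact map_odd_eq (fun x hx => (Multiset.mem_filter.1 hx).2)
  have hmapβ : β.map (fun x => 2 * x) = V := by
    rw [hβ, Multiset.map_map]
    have : ((fun x => 2 * x) ∘ (· / 2)) = (fun o => 2 * (o / 2)) := rfl
    rw [this]
    exact map_even_eq (fun x hx => (Multiset.mem_filter.1 hx).2)
  rw [hmapα, hmapβ, hO, hV, filter_split_even, hC]
  exact conjM_conjM (fun x hx => (hpos x hx).1)


lemma F2_G2 {p : Multiset ℕ × Multiset ℕ} (hp : p ∈ T2 a k n) : F2 (G2 k p) = p := by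
  obtain ⟨M, N⟩ := p
  obtain ⟨hM, hN, -⟩ := hp
  simp only at hM hN
  set Y := conjM M + Multiset.replicate (k - Multiset.card (conjM M)) 0 with hY
  set Ot := Y.map (fun x => 2 * x + 1) with hOt
  set Et := (conjM N).map (fun x => 2 * x) with hEt
  set W := Ot + Et with hW
  have hG : G2 k (M, N) = conjM W := rfl
  have hOtodd : ∀ x ∈ Ot, ¬ Even x := by
    intro x hx
    rw [hOt, Multiset.mem_map] at hx
    obtain ⟨y, -, rfl⟩ := hx
    rw [Nat.even_iff]
    omega
  have hEteven : ∀ x ∈ Et, Even x := by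
    intro x hx
    rw [hEt, Multiset.mem_map] at hx
    obtain ⟨y, -, rfl⟩ := hx
    rw [Nat.even_iff]
    omega
  have hWpos : ∀ x ∈ W, 0 < x := by
    intro x hx
    rw [hW, Multiset.mem_add] at hx
    rcases hx with hx | hx
    · rw [hOt, Multiset.mem_map] at hx
      obtain ⟨y, -, rfl⟩ := hx
      omega
    · rw [hEt, Multiset.mem_map] at hx
      obtain ⟨y, hy, rfl⟩ := hx
      have := pos_of_mem_conjM hy
      omega
  have hWW : conjM (conjM W) = W := by
    rw [conjM_conjM' W, Multiset.filter_eq_self.2 hWpos]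
  have hfO : W.filter (fun x => ¬ Even x) = Ot := by
    rw [hW, Multiset.filter_add, Multiset.filter_eq_self.2 hOtodd,
      Multiset.filter_eq_nil.2 (fun x hx => not_not_intro (hEteven x hx)), add_zero]
  have hfE : W.filter (fun x => Even x) = Et := by
    rw [hW, Multiset.filter_add, Multiset.filter_eq_nil.2 (fun x hx => hOtodd x hx),
      Multiset.filter_eq_self.2 hEteven, zero_add]
  have hfirst : conjM ((W.filter (fun x => ¬ Even x)).map (· / 2)) = M := by
    rw [hfO, hOt, Multiset.map_map]
    have h1 : Y.map ((· / 2) ∘ fun x => 2 * x + 1) = Y.map id := by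
      apply Multiset.map_congr rfl
      intro x _
      simp only [Function.comp, id]
      omega
    rw [h1, Multiset.map_id]
    have h2 : Multiset.filter (0 < ·) Y = conjM M := by
      rw [hY, Multiset.filter_add, Multiset.filter_eq_self.2 (fun x hx => pos_of_mem_conjM hx),
        Multiset.filter_eq_nil.2 (fun x hx => by
          rw [Multiset.eq_of_mem_replicate hx]; omega), add_zero]
    rw [← conjM_filter_pos Y, h2, conjM_conjM' M, Multiset.filter_eq_self.2
      (fun x hx => (hM x hx).1)]
  have hsecond : conjM ((W.filter (fun x => Even x)).map (· / 2)) = N := by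
    rw [hfE, hEt, Multiset.map_map]
    have h1 : (conjM N).map ((· / 2) ∘ fun x => 2 * x) = (conjM N).map id := by
      apply Multiset.map_congr rfl
      intro x _
      simp only [Function.comp, id]
      omega
    rw [h1, Multiset.map_id, conjM_conjM' N, Multiset.filter_eq_self.2
      (fun x hx => (hN x hx).1)]
  show (conjM (((conjM (G2 k (M, N))).filter (fun x => ¬ Even x)).map (· / 2)),
    conjM (((conjM (G2 k (M, N))).filter (fun x => Even x)).map (· / 2))) = (M, N)
  rw [hG, hWW]
  rw [Prod.mk.injEq]
  exact ⟨hfirst, hsecond⟩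


lemma sum_map_two_add_one (Y : Multiset ℕ) :
    (Y.map (fun x => 2 * x + 1)).sum = 2 * Y.sum + Multiset.card Y := by
  have h1 : (Y.map (fun x => 2 * x + 1)).sum =
      (Y.map (fun x => 2 * x)).sum + (Y.map (fun _ => 1)).sum := by
    rw [← Multiset.sum_map_add]
  have h2 : (Y.map (fun x => 2 * x)).sum = 2 * Y.sum := by
    have : (Y.map (fun x => 2 * x)).sum = 2 * (Y.map id).sum := Multiset.sum_map_mul_left
    rwa [Multiset.map_id] at this
  have h3 : (Y.map (fun _ => (1:ℕ))).sum = Multiset.card Y := by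
    rw [Multiset.map_const', Multiset.sum_replicate]; simp
  omega

lemma sum_map_two (Y : Multiset ℕ) : (Y.map (fun x => 2 * x)).sum = 2 * Y.sum := by
  have : (Y.map (fun x => 2 * x)).sum = 2 * (Y.map id).sum := Multiset.sum_map_mul_left
  rwa [Multiset.map_id] at this

lemma F2_maps {E : Multiset ℕ} (hE : E ∈ T1 a k n) : F2 E ∈ T2 a k n := by
  obtain ⟨hpos, hk, hsum⟩ := hE
  set C := conjM E with hC
  set O := C.filter (fun x => ¬ Even x) with hO
  set V := C.filter (fun x => Even x) with hV
  set α := O.map (· / 2) with hα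
  set β := V.map (· / 2) with hβ
  have hcardα : Multiset.card α = k := by rw [hα, Multiset.card_map]; exact hk
  have hcardC : Multiset.card C ≤ a + 2 * k :=
    card_conjM_le (fun x hx => (hpos x hx).2)
  have hcardsplit : Multiset.card O + Multiset.card V = Multiset.card C := by
    rw [← Multiset.card_add, hO, hV, filter_split_even]
  have hcardβ : Multiset.card β ≤ a + k := by
    rw [hβ, Multiset.card_map]
    omega
  have hsumO : O.sum = 2 * α.sum + k := by
    have := sum_odd_eq (M := O) (fun x hx => (Multiset.mem_filter.1 hx).2)
    rw [← hα] at this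
    omega
  have hsumV : V.sum = 2 * β.sum := by
    have := sum_even_eq (M := V) (fun x hx => (Multiset.mem_filter.1 hx).2)
    rw [← hβ] at this
    exact this
  have hsumC : O.sum + V.sum = E.sum := by
    have : O.sum + V.sum = C.sum := by
      rw [← Multiset.sum_add, hO, hV, filter_split_even]
    rw [this, hC, conjM_sum]
  refine ⟨?_, ?_, ?_⟩
  · intro x hx
    exact ⟨pos_of_mem_conjM hx, by
      have := mem_conjM_le_card hx
      rw [hcardα] at this
      exact this⟩
  · intro x hx
    exact ⟨pos_of_mem_conjM hx, le_trans (mem_conjM_le_card hx) hcardβ⟩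
  · show (conjM α).sum + (conjM β).sum + k * (a + k) + k = n
    rw [conjM_sum, conjM_sum]
    zify at hsum ⊢
    nlinarith [hsumO, hsumV, hsumC]

lemma G2_maps {p : Multiset ℕ × Multiset ℕ} (hp : p ∈ T2 a k n) : G2 k p ∈ T1 a k n := by
  obtain ⟨M, N⟩ := p
  obtain ⟨hM, hN, hsum⟩ := hp
  simp only at hM hN hsum
  set Y := conjM M + Multiset.replicate (k - Multiset.card (conjM M)) 0 with hY
  set Ot := Y.map (fun x => 2 * x + 1) with hOt
  set Et := (conjM N).map (fun x => 2 * x) with hEt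
  set W := Ot + Et with hW
  have hG : G2 k (M, N) = conjM W := rfl
  have hcM : Multiset.card (conjM M) ≤ k := card_conjM_le (fun x hx => (hM x hx).2)
  have hcY : Multiset.card Y = k := by
    rw [hY, Multiset.card_add, Multiset.card_replicate]
    omega
  have hcOt : Multiset.card Ot = k := by rw [hOt, Multiset.card_map, hcY]
  have hcEt : Multiset.card Et ≤ a + k := by
    rw [hEt, Multiset.card_map]
    exact card_conjM_le (fun x hx => (hN x hx).2)
  have hcW : Multiset.card W ≤ a + 2 * k := by
    rw [hW, Multiset.card_add]
    omega
  have hOtodd : ∀ x ∈ Ot, ¬ Even x := by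
    intro x hx
    rw [hOt, Multiset.mem_map] at hx
    obtain ⟨y, -, rfl⟩ := hx
    rw [Nat.even_iff]
    omega
  have hEteven : ∀ x ∈ Et, Even x := by
    intro x hx
    rw [hEt, Multiset.mem_map] at hx
    obtain ⟨y, -, rfl⟩ := hx
    rw [Nat.even_iff]
    omega
  have hWpos : ∀ x ∈ W, 0 < x := by
    intro x hx
    rw [hW, Multiset.mem_add] at hx
    rcases hx with hx | hx
    · rw [hOt, Multiset.mem_map] at hx
      obtain ⟨y, -, rfl⟩ := hx
      omega
    · rw [hEt, Multiset.mem_map] at hx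
      obtain ⟨y, hy, rfl⟩ := hx
      have := pos_of_mem_conjM hy
      omega
  have hWW : conjM (conjM W) = W := by
    rw [conjM_conjM' W, Multiset.filter_eq_self.2 hWpos]
  have hsumY : Y.sum = M.sum := by
    rw [hY, Multiset.sum_add, Multiset.sum_replicate, conjM_sum]
    simp
  have hsumW : W.sum = 2 * M.sum + k + 2 * N.sum := by
    rw [hW, Multiset.sum_add, hOt, sum_map_two_add_one, hEt, sum_map_two, conjM_sum,
      hsumY, hcY]
  refine ⟨?_, ?_, ?_⟩
  · intro x hx
    rw [hG] at hx
    exact ⟨pos_of_mem_conjM hx, le_trans (mem_conjM_le_card hx) hcW⟩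
  · rw [hG, hWW]
    have : W.filter (fun x => ¬ Even x) = Ot := by
      rw [hW, Multiset.filter_add, Multiset.filter_eq_self.2 hOtodd,
        Multiset.filter_eq_nil.2 (fun x hx => not_not_intro (hEteven x hx)), add_zero]
    rw [this, hcOt]
  · show (G2 k (M, N)).sum + 2 * k * a + k * (2 * k + 1) = 2 * n
    rw [hG, conjM_sum, hsumW]
    zify at hsum ⊢
    nlinarith [hsum]

end Bij

/-- number of odd columns -/
def Oc (E : Multiset ℕ) : ℕ := Multiset.card ((conjM E).filter (fun x => ¬ Even x))

lemma Oc_eq_filter (E : Multiset ℕ) {B : ℕ} (hB : E.sum ≤ B) :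
    Oc E = ((Finset.range B).filter (fun c => ¬ Even (colHt E (c + 1)))).card := by
  have h1 : Oc E = ((Finset.range (E.sum + 1)).filter
      (fun c => ¬ Even (colHt E (c + 1)))).card := by
    rw [Oc, conjM, ← Multiset.countP_eq_card_filter, Multiset.countP_filter]
    have : Multiset.countP (fun x => ¬ Even x ∧ 0 < x)
        ((Multiset.range (E.sum + 1)).map (fun c => colHt E (c + 1))) =
        Multiset.countP (fun x => ¬ Even x)
        ((Multiset.range (E.sum + 1)).map (fun c => colHt E (c + 1))) := by
      apply Multiset.countP_congr rfl
      intro x _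
      simp only [eq_iff_iff]
      constructor
      · exact fun h => h.1
      · intro h
        refine ⟨h, ?_⟩
        rcases Nat.eq_zero_or_pos x with rfl | hx
        · exact absurd (Even.zero) h
        · exact hx
    rw [this, Multiset.countP_map]
    rfl
  rw [h1]
  congr 1
  ext c
  simp only [Finset.mem_filter, Finset.mem_range]
  constructor
  · rintro ⟨hc, he⟩
    refine ⟨?_, he⟩
    have hpos : 0 < colHt E (c + 1) := by
      rcases Nat.eq_zero_or_pos (colHt E (c + 1)) with h0 | h
      · rw [h0] at he; exact absurd Even.zero he
      · exact h
    obtain ⟨y, hy, hcy⟩ := exists_of_colHt_pos hpos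
    have := le_sum_of_mem' hy
    omega
  · rintro ⟨hc, he⟩
    refine ⟨?_, he⟩
    have hpos : 0 < colHt E (c + 1) := by
      rcases Nat.eq_zero_or_pos (colHt E (c + 1)) with h0 | h
      · rw [h0] at he; exact absurd Even.zero he
      · exact h
    obtain ⟨y, hy, hcy⟩ := exists_of_colHt_pos hpos
    have := le_sum_of_mem' hy
    omega

lemma Oc_cons {E : Multiset ℕ} {x : ℕ} (hEx : ∀ y ∈ E, y ≤ x) :
    Oc E ≤ x ∧ Oc (x ::ₘ E) = x - Oc E := by
  set B := (x ::ₘ E).sum + 1 with hBdef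
  have hBE : E.sum ≤ B := by rw [hBdef, Multiset.sum_cons]; omega
  have hBxE : (x ::ₘ E).sum ≤ B := by omega
  have hxB : x ≤ B := by rw [hBdef, Multiset.sum_cons]; omega
  set SE := (Finset.range B).filter (fun c => ¬ Even (colHt E (c + 1))) with hSE
  have h1 : Oc E = SE.card := Oc_eq_filter E hBE
  have h2 : Oc (x ::ₘ E) = ((Finset.range B).filter
      (fun c => ¬ Even (colHt (x ::ₘ E) (c + 1)))).card := Oc_eq_filter _ hBxE
  have hsub : SE ⊆ Finset.range x := by
    intro c hc
    rw [hSE, Finset.mem_filter] at hc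
    have hpos : 0 < colHt E (c + 1) := by
      rcases Nat.eq_zero_or_pos (colHt E (c + 1)) with h0 | h
      · rw [h0] at hc; exact absurd Even.zero hc.2
      · exact h
    obtain ⟨y, hy, hcy⟩ := exists_of_colHt_pos hpos
    have := hEx y hy
    rw [Finset.mem_range]
    omega
  have hset : (Finset.range B).filter (fun c => ¬ Even (colHt (x ::ₘ E) (c + 1))) =
      Finset.range x \ SE := by
    ext c
    rw [Finset.mem_filter, Finset.mem_sdiff, hSE, Finset.mem_filter]
    simp only [Finset.mem_range]
    rw [colHt_cons]
    by_cases hcx : c + 1 ≤ x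
    · rw [if_pos hcx, Nat.even_add_one]
      constructor
      · rintro ⟨hcB, he⟩
        have hEh : Even (colHt E (c + 1)) := not_not.1 he
        exact ⟨by omega, fun hmem => hmem.2 hEh⟩
      · rintro ⟨hcx', hnot⟩
        refine ⟨by omega, not_not_intro ?_⟩
        by_contra hodd
        exact hnot ⟨by omega, hodd⟩
    · rw [if_neg hcx]
      have h0 : colHt E (c + 1) = 0 := by
        rw [colHt, Multiset.countP_eq_zero]
        intro y hy
        have := hEx y hy
        omega
      rw [h0]
      simp only [add_zero]
      constructor
      · rintro ⟨-, he⟩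
        exact absurd Even.zero he
      · rintro ⟨hc, -⟩
        omega
  constructor
  · rw [h1]
    have := Finset.card_le_card hsub
    simpa using this
  · rw [h2, hset, Finset.card_sdiff_of_subset hsub, Finset.card_range, h1]


lemma conjM_zero : conjM (0 : Multiset ℕ) = 0 := by
  rw [conjM]
  rw [Multiset.filter_eq_nil.2]
  intro a ha
  rw [Multiset.mem_map] at ha
  obtain ⟨c, -, rfl⟩ := ha
  simp [colHt]

lemma Oc_zero : Oc (0 : Multiset ℕ) = 0 := by
  rw [Oc, conjM_zero]
  simp

/-- signed alternating sum `e₁ - e₂ + e₃ - ⋯` of a list. -/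
def A1 (e : List ℕ) : ℤ :=
  ∑ i ∈ Finset.range e.length, (-1 : ℤ) ^ i * (e.getD i 0 : ℤ)

lemma A1_cons (x : ℕ) (e : List ℕ) : A1 (x :: e) = x - A1 e := by
  rw [A1, List.length_cons, Finset.sum_range_succ']
  simp only [List.getD_cons_succ, List.getD_cons_zero, pow_zero, one_mul]
  have : ∀ i ∈ Finset.range e.length,
      (-1 : ℤ) ^ (i + 1) * (e.getD i 0 : ℤ) = -((-1 : ℤ) ^ i * (e.getD i 0 : ℤ)) := by
    intro i _
    ring
  rw [Finset.sum_congr rfl this, Finset.sum_neg_distrib, ← A1]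
  ring

lemma A1_eq_Oc {e : List ℕ} (hs : e.Pairwise (· ≥ ·)) : A1 e = (Oc (↑e : Multiset ℕ) : ℤ) := by
  induction e with
  | nil =>
    show A1 [] = (Oc 0 : ℤ)
    rw [Oc_zero, A1]
    simp
  | cons x e ih =>
    rw [List.pairwise_cons] at hs
    have hle : ∀ y ∈ (↑e : Multiset ℕ), y ≤ x := by
      intro y hy
      rw [Multiset.mem_coe] at hy
      exact hs.1 y hy
    obtain ⟨hOx, hOc⟩ := Oc_cons hle
    rw [A1_cons, ih hs.2, ← Multiset.cons_coe, hOc]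
    push_cast [hOx]
    ring


section Struct

lemma headSum (a k : ℕ) : ∑ i ∈ Finset.Ioc 0 (2*k), (-1:ℤ)^i * ((a:ℤ) + i) = k := by
  induction k with
  | zero => simp
  | succ k ih =>
    have h2 : 2*(k+1) = (2*k+1)+1 := by ring
    rw [h2, Finset.sum_Ioc_succ_top (by omega), Finset.sum_Ioc_succ_top (by omega), ih]
    have e1 : ((-1:ℤ))^(2*k+1) = -1 := Odd.neg_one_pow ⟨k, by ring⟩
    have e2 : ((-1:ℤ))^(2*k+1+1) = 1 := Even.neg_one_pow ⟨k+1, by ring⟩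
    rw [e1, e2]
    push_cast
    ring

lemma getD_drop' (l : List ℕ) (m j : ℕ) : (l.drop m).getD j 0 = l.getD (m + j) 0 := by
  by_cases h : j < (l.drop m).length
  · rw [List.length_drop] at h
    rw [List.getD_eq_getElem _ _ (by rw [List.length_drop]; omega),
      List.getD_eq_getElem _ _ (by omega : m + j < l.length), List.getElem_drop]
  · rw [List.length_drop] at h
    rw [List.getD_eq_default _ _ (by rw [List.length_drop]; omega),
      List.getD_eq_default _ _ (by omega)]

lemma altSum_split (a k : ℕ) (d : List ℕ) (hlen : 2*k ≤ d.length)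
    (hpre : ∀ i, 1 ≤ i → i ≤ 2*k → entry d i = a + i) :
    altSum d d.length = (k : ℤ) - A1 (d.drop (2*k)) := by
  rw [altSum]
  have hIcc : Finset.Icc 1 d.length = Finset.Ioc 0 d.length := Finset.Icc_add_one_left_eq_Ioc 0 _
  rw [hIcc, ← Finset.sum_Ioc_consecutive _ (Nat.zero_le (2*k)) hlen]
  have h1 : ∑ i ∈ Finset.Ioc 0 (2*k), (-1:ℤ)^i * (entry d i : ℤ) = (k : ℤ) := by
    rw [Finset.sum_congr rfl (fun i hi => ?_), headSum a k]
    rw [Finset.mem_Ioc] at hi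
    rw [hpre i (by omega) hi.2]
    push_cast
    ring
  have h2 : ∑ i ∈ Finset.Ioc (2*k) d.length, (-1:ℤ)^i * (entry d i : ℤ) =
      - A1 (d.drop (2*k)) := by
    rw [← Finset.Ico_add_one_add_one_eq_Ioc, Finset.sum_Ico_eq_sum_range]
    have hm : d.length + 1 - (2*k+1) = (d.drop (2*k)).length := by
      rw [List.length_drop]
      omega
    rw [hm, A1, ← Finset.sum_neg_distrib]
    apply Finset.sum_congr rfl
    intro j _
    have he : entry d (2*k+1+j) = (d.drop (2*k)).getD j 0 := by
      rw [entry, getD_drop']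
      congr 1
      omega
    have hsgn : ((-1:ℤ))^(2*k+1+j) = -((-1:ℤ))^j := by
      rw [pow_add, pow_add, Even.neg_one_pow ⟨k, by ring⟩]
      ring
    rw [he, hsgn]
    ring
  rw [h1, h2]
  ring

lemma sumHead (a k : ℕ) : ∑ i ∈ Finset.range (2*k), (a+i+1) = 2*k*a + k*(2*k+1) := by
  induction k with
  | zero => simp
  | succ k ih =>
    have h2 : 2*(k+1) = (2*k+1)+1 := by ring
    rw [h2, Finset.sum_range_succ, Finset.sum_range_succ, ih]
    ring

lemma take_eq (a k : ℕ) (d : List ℕ) (hlen : 2*k ≤ d.length)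
    (hpre : ∀ i, 1 ≤ i → i ≤ 2*k → entry d i = a + i) :
    d.take (2*k) = (List.range (2*k)).map (fun i => a+i+1) := by
  apply List.ext_getElem
  · rw [List.length_take, List.length_map, List.length_range]
    omega
  · intro i h1 h2
    rw [List.getElem_take]
    rw [List.getElem_map, List.getElem_range]
    have hi : i < 2*k := by
      rw [List.length_take] at h1
      omega
    have h3 := hpre (i+1) (by omega) (by omega)
    rw [entry] at h3
    simp only [Nat.add_sub_cancel] at h3
    rw [List.getD_eq_getElem _ _ (by omega : i < d.length)] at h3
    rw [h3]
    omega

end Struct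


section Main
variable (a k n : ℕ)

def S1 (a k n : ℕ) : Set (List ℕ) := {d | IsABSeq a (2 * k) d ∧ d.sum = 2 * n}

def S2 (a k n : ℕ) : Set (List ℕ × List ℕ) := {p | IsPartitionList p.1 ∧ IsPartitionList p.2 ∧
  (∀ x ∈ p.1, x ≤ k) ∧ (∀ x ∈ p.2, x ≤ a + k) ∧
  p.1.sum + p.2.sum + k * (a + k) + k = n}

lemma drop_sorted_of_mono {d : List ℕ} {b : ℕ}
    (hmono : ∀ i j, b ≤ i → i ≤ j → j ≤ d.length → entry d j ≤ entry d i) :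
    (d.drop b).Pairwise (· ≥ ·) := by
  rw [List.pairwise_iff_getElem]
  intro i j hi hj hij
  have hi' : b + i < d.length := by rw [List.length_drop] at hi; omega
  have hj' : b + j < d.length := by rw [List.length_drop] at hj; omega
  rw [List.getElem_drop, List.getElem_drop]
  have h := hmono (b+i+1) (b+j+1) (by omega) (by omega) (by omega)
  rw [entry, entry, List.getD_eq_getElem _ _ (by omega : b+i+1-1 < d.length),
    List.getD_eq_getElem _ _ (by omega : b+j+1-1 < d.length)] at h
  simp only [Nat.add_sub_cancel] at h
  exact h

lemma mem_drop_entry {d : List ℕ} {b : ℕ} {x : ℕ} (hx : x ∈ d.drop b) :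
    ∃ i, b < i ∧ i ≤ d.length ∧ entry d i = x := by
  obtain ⟨j, hj, hval⟩ := List.mem_iff_getElem.1 hx
  have hj' : b + j < d.length := by rw [List.length_drop] at hj; omega
  refine ⟨b + j + 1, by omega, by omega, ?_⟩
  rw [entry, List.getD_eq_getElem _ _ (by omega : b+j+1-1 < d.length)]
  simp only [Nat.add_sub_cancel]
  rw [← List.getElem_drop (h := hj)]
  exact hval

lemma mem_T1_of_S1 (hk : 1 ≤ k) {d : List ℕ} (hd : d ∈ S1 a k n) :
    (↑(d.drop (2*k)) : Multiset ℕ) ∈ T1 a k n := by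
  obtain ⟨⟨hb1, hb2, hpos, hpre, hmono, halt⟩, hsum⟩ := hd
  have h2k : entry d (2*k) = a + 2*k := hpre (2*k) (by omega) le_rfl
  refine ⟨?_, ?_, ?_⟩
  · intro x hx
    rw [Multiset.mem_coe] at hx
    obtain ⟨i, hbi, hil, he⟩ := mem_drop_entry hx
    constructor
    · rw [← he]; exact hpos i (by omega) hil
    · rw [← he, ← h2k]
      exact hmono (2*k) i le_rfl (by omega) hil
  · have hsorted := drop_sorted_of_mono (b := 2*k) hmono
    have hA := A1_eq_Oc hsorted
    have hsplit := altSum_split a k d hb2 hpre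
    rw [halt, hA] at hsplit
    have : (Oc (↑(d.drop (2*k)) : Multiset ℕ) : ℤ) = (k : ℤ) := by linarith
    exact_mod_cast this
  · have hd_eq := (List.take_append_drop (2*k) d).symm
    have hsum2 : d.sum = (d.take (2*k)).sum + (d.drop (2*k)).sum := by
      conv_lhs => rw [hd_eq]
      rw [List.sum_append]
    rw [take_eq a k d hb2 hpre] at hsum2
    have hhead : ((List.range (2*k)).map (fun i => a+i+1)).sum = 2*k*a + k*(2*k+1) := by
      rw [show ((List.range (2*k)).map (fun i => a+i+1)).sum
          = ∑ i ∈ Finset.range (2*k), (a+i+1) from rfl, sumHead]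
    rw [hhead] at hsum2
    rw [Multiset.sum_coe]
    set P := 2*k*a with hP
    set Q := k*(2*k+1) with hQ
    omega

/-- reconstruct the `(a,2k)`-sequence from its tail multiset -/
noncomputable def recon (a k : ℕ) (E : Multiset ℕ) : List ℕ :=
  (List.range (2*k)).map (fun i => a+i+1) ++ Multiset.sort E (· ≥ ·)

lemma recon_length (E : Multiset ℕ) :
    (recon a k E).length = 2*k + (Multiset.sort E (· ≥ ·)).length := by
  rw [recon, List.length_append, List.length_map, List.length_range]

lemma recon_drop (E : Multiset ℕ) : (recon a k E).drop (2*k) = Multiset.sort E (· ≥ ·) := by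
  rw [recon]
  exact List.drop_left' (by rw [List.length_map, List.length_range])

lemma recon_entry_head (E : Multiset ℕ) {i : ℕ} (h1 : 1 ≤ i) (h2 : i ≤ 2*k) :
    entry (recon a k E) i = a + i := by
  rw [recon, entry, List.getD_append _ _ _ _ (by rw [List.length_map, List.length_range]; omega)]
  rw [List.getD_eq_getElem _ _ (by rw [List.length_map, List.length_range]; omega)]
  rw [List.getElem_map, List.getElem_range]
  omega

lemma recon_entry_tail (E : Multiset ℕ) {i : ℕ} (h1 : 2*k < i) :
    entry (recon a k E) i = (Multiset.sort E (· ≥ ·)).getD (i - 1 - 2*k) 0 := by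
  rw [recon, entry, List.getD_append_right _ _ _ _ (by rw [List.length_map, List.length_range]; omega)]
  congr 1
  rw [List.length_map, List.length_range]

lemma mem_S1_of_T1 (hk : 1 ≤ k) {E : Multiset ℕ} (hE : E ∈ T1 a k n) :
    recon a k E ∈ S1 a k n := by
  obtain ⟨hparts, hOc, hsum⟩ := hE
  set s := Multiset.sort E (· ≥ ·) with hs
  have hcoe : (↑s : Multiset ℕ) = E := Multiset.sort_eq E _
  have hsort : s.Pairwise (· ≥ ·) := Multiset.pairwise_sort E _
  have hlen : (recon a k E).length = 2*k + s.length := recon_length a k E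
  have hmemE : ∀ {j : ℕ}, j < s.length → s[j]! ∈ E := by
    intro j hj
    rw [← hcoe, Multiset.mem_coe]
    rw [getElem!_pos s j hj]
    exact List.getElem_mem hj
  have htail_val : ∀ {i : ℕ}, 2*k < i → i ≤ (recon a k E).length →
      entry (recon a k E) i = s[i - 1 - 2*k]! := by
    intro i hi hil
    rw [recon_entry_tail a k E hi, ← hs]
    have hidx : i - 1 - 2*k < s.length := by omega
    rw [getElem!_pos s _ hidx, List.getD_eq_getElem _ _ hidx]
  refine ⟨⟨by omega, by omega, ?_, ?_, ?_, ?_⟩, ?_⟩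
  · -- positivity
    intro i hi1 hil
    by_cases h : i ≤ 2*k
    · rw [recon_entry_head a k E hi1 h]; omega
    · rw [htail_val (by omega) hil]
      have hidx : i - 1 - 2*k < s.length := by omega
      exact (hparts _ (hmemE hidx)).1
  · intro i hi1 hi2
    exact recon_entry_head a k E hi1 hi2
  · -- monotone
    intro i j hbi hij hjl
    rcases eq_or_lt_of_le hij with rfl | hlt
    · exact le_rfl
    · have hj2k : 2*k < j := by omega
      have hjval := htail_val hj2k hjl
      have hjidx : j - 1 - 2*k < s.length := by omega
      have hjE := hparts _ (hmemE hjidx)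
      rcases eq_or_lt_of_le hbi with rfl | hi2k
      · rw [recon_entry_head a k E (by omega) le_rfl, hjval]
        exact hjE.2
      · have hival := htail_val hi2k (by omega)
        rw [hival, hjval]
        have hiidx : i - 1 - 2*k < s.length := by omega
        rw [getElem!_pos s _ hjidx, getElem!_pos s _ hiidx]
        have := List.pairwise_iff_getElem.1 hsort (i-1-2*k) (j-1-2*k) hiidx hjidx (by omega)
        exact this
  · -- altSum
    rw [show (recon a k E).length = (recon a k E).length from rfl]
    rw [altSum_split a k _ (by omega) (fun i h1 h2 => recon_entry_head a k E h1 h2)]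
    rw [recon_drop, ← hs, A1_eq_Oc hsort, hcoe]
    have : Oc E = k := hOc
    rw [this]
    ring
  · -- sum
    show (recon a k E).sum = 2 * n
    rw [recon, List.sum_append]
    rw [show ((List.range (2*k)).map (fun i => a+i+1)).sum
        = ∑ i ∈ Finset.range (2*k), (a+i+1) from rfl, sumHead]
    have hssum : s.sum = E.sum := by rw [← Multiset.sum_coe, hcoe]
    rw [← hs, hssum]
    set P := 2*k*a with hP
    set Q := k*(2*k+1) with hQ
    omega

noncomputable def e1 (hk : 1 ≤ k) : ↥(S1 a k n) ≃ ↥(T1 a k n) where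
  toFun d := ⟨(↑(d.1.drop (2*k)) : Multiset ℕ), mem_T1_of_S1 a k n hk d.2⟩
  invFun E := ⟨recon a k E.1, mem_S1_of_T1 a k n hk E.2⟩
  left_inv := by
    rintro ⟨d, hd⟩
    apply Subtype.ext
    show recon a k ↑(d.drop (2*k)) = d
    obtain ⟨⟨hb1, hb2, hpos, hpre, hmono, halt⟩, hsum⟩ := hd
    have h1 : Multiset.sort (↑(d.drop (2*k)) : Multiset ℕ) (· ≥ ·) = d.drop (2*k) := by
      apply List.Perm.eq_of_pairwise' (Multiset.pairwise_sort _ _) ?_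
        (Multiset.coe_eq_coe.1 (Multiset.sort_eq _ _))
      exact drop_sorted_of_mono (b := 2*k) hmono
    rw [recon, h1, ← take_eq a k d hb2 hpre, List.take_append_drop]
  right_inv := by
    rintro ⟨E, hE⟩
    apply Subtype.ext
    show (↑((recon a k E).drop (2*k)) : Multiset ℕ) = E
    rw [recon_drop, Multiset.sort_eq]

noncomputable def e2 : ↥(T1 a k n) ≃ ↥(T2 a k n) where
  toFun E := ⟨F2 E.1, F2_maps E.2⟩
  invFun p := ⟨G2 k p.1, G2_maps p.2⟩
  left_inv E := Subtype.ext (G2_F2 E.2)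
  right_inv p := Subtype.ext (F2_G2 p.2)

lemma mem_S2_of_T2 {q : Multiset ℕ × Multiset ℕ} (hq : q ∈ T2 a k n) :
    (Multiset.sort q.1 (· ≥ ·), Multiset.sort q.2 (· ≥ ·)) ∈ S2 a k n := by
  obtain ⟨M, N⟩ := q
  obtain ⟨hM, hN, hsum⟩ := hq
  simp only at hM hN hsum
  refine ⟨⟨Multiset.pairwise_sort _ _, ?_⟩, ⟨Multiset.pairwise_sort _ _, ?_⟩, ?_, ?_, ?_⟩
  · intro x hx
    exact (hM x ((Multiset.mem_sort _).1 hx)).1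
  · intro x hx
    exact (hN x ((Multiset.mem_sort _).1 hx)).1
  · intro x hx
    exact (hM x ((Multiset.mem_sort _).1 hx)).2
  · intro x hx
    exact (hN x ((Multiset.mem_sort _).1 hx)).2
  · show (Multiset.sort M (· ≥ ·)).sum + (Multiset.sort N (· ≥ ·)).sum + k * (a + k) + k = n
    rw [← Multiset.sum_coe, ← Multiset.sum_coe, Multiset.sort_eq, Multiset.sort_eq]
    exact hsum

lemma mem_T2_of_S2 {p : List ℕ × List ℕ} (hp : p ∈ S2 a k n) :
    ((↑p.1 : Multiset ℕ), (↑p.2 : Multiset ℕ)) ∈ T2 a k n := by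
  obtain ⟨L1, L2⟩ := p
  obtain ⟨⟨hs1, hp1⟩, ⟨hs2, hp2⟩, hb1, hb2, hsum⟩ := hp
  simp only at hp1 hp2 hb1 hb2 hsum ⊢
  refine ⟨?_, ?_, ?_⟩
  · intro x hx
    rw [Multiset.mem_coe] at hx
    exact ⟨hp1 x hx, hb1 x hx⟩
  · intro x hx
    rw [Multiset.mem_coe] at hx
    exact ⟨hp2 x hx, hb2 x hx⟩
  · show (↑L1 : Multiset ℕ).sum + (↑L2 : Multiset ℕ).sum + k * (a + k) + k = n
    rw [Multiset.sum_coe, Multiset.sum_coe]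
    exact hsum

noncomputable def e3 : ↥(T2 a k n) ≃ ↥(S2 a k n) where
  toFun q := ⟨(Multiset.sort q.1.1 (· ≥ ·), Multiset.sort q.1.2 (· ≥ ·)),
    mem_S2_of_T2 a k n q.2⟩
  invFun p := ⟨((↑p.1.1 : Multiset ℕ), (↑p.1.2 : Multiset ℕ)), mem_T2_of_S2 a k n p.2⟩
  left_inv := by
    rintro ⟨⟨M, N⟩, hq⟩
    apply Subtype.ext
    show ((↑(Multiset.sort M (· ≥ ·)) : Multiset ℕ), (↑(Multiset.sort N (· ≥ ·)) : Multiset ℕ))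
      = (M, N)
    rw [Multiset.sort_eq, Multiset.sort_eq]
  right_inv := by
    rintro ⟨⟨L1, L2⟩, hp⟩
    apply Subtype.ext
    obtain ⟨⟨hs1, hp1⟩, ⟨hs2, hp2⟩, -, -, -⟩ := hp
    show (Multiset.sort (↑L1 : Multiset ℕ) (· ≥ ·), Multiset.sort (↑L2 : Multiset ℕ) (· ≥ ·))
      = (L1, L2)
    rw [Prod.mk.injEq]
    constructor
    · exact List.Perm.eq_of_pairwise' (Multiset.pairwise_sort _ _) hs1
        (Multiset.coe_eq_coe.1 (Multiset.sort_eq _ _))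
    · exact List.Perm.eq_of_pairwise' (Multiset.pairwise_sort _ _) hs2
        (Multiset.coe_eq_coe.1 (Multiset.sort_eq _ _))

end Main
end ABH

/-- Even-`b` coefficient extraction of Theorem 2.1: the number of `(a, 2k)`-sequences `Δ`
with `|Δ| = 2n` equals the number of pairs `(μ, ν)` of partitions with parts of `μ` at most
`k`, parts of `ν` at most `a + k`, and `|μ| + |ν| + k(a + k) + k = n`. -/
theorem abseq_even_count (a k n : ℕ) (hk : 1 ≤ k) :
    Set.ncard {d : List ℕ | IsABSeq a (2 * k) d ∧ d.sum = 2 * n} =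
    Set.ncard {p : List ℕ × List ℕ | IsPartitionList p.1 ∧ IsPartitionList p.2 ∧
      (∀ x ∈ p.1, x ≤ k) ∧ (∀ x ∈ p.2, x ≤ a + k) ∧
      p.1.sum + p.2.sum + k * (a + k) + k = n} := by
  have h1 : Set.ncard (ABH.S1 a k n) = Set.ncard (ABH.S2 a k n) := by
    rw [← Nat.card_coe_set_eq, ← Nat.card_coe_set_eq]
    exact Nat.card_congr ((ABH.e1 a k n hk).trans ((ABH.e2 a k n).trans (ABH.e3 a k n)))
  exact h1
end
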